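/- arXiv:1304.7378 — 4 statements merged into one kernel-verified Lean document; each statement's English description precedes it below -/
import Mathlib

section
/- For every n ≥ 2, the braid group Br_n (defined by the Artin presentation) is isomorphic to the group defined by the presentation with two generators σ₁ and σ and relations: σ₁σⁱσ₁σ⁻ⁱ = σⁱσ₁σ⁻ⁱσ₁ for all integers i with 2 ≤ i ≤ n/2, and σⁿ = (σσ₁)ⁿ⁻¹; an isomorphism is given by sending σ₁ to the Artin generator σ₁ and σ to the product σ₁σ₂⋯σₙ₋₁. -/
/-!
STATEMENT 0: For every n ≥ 2, the braid group `Br_n` (Artin presentation) is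
isomorphic to the group presented by two generators σ₁, σ with relations
σ₁σⁱσ₁σ⁻ⁱ = σⁱσ₁σ⁻ⁱσ₁ (2 ≤ i ≤ n/2) and σⁿ = (σσ₁)ⁿ⁻¹, via σ₁ ↦ σ₁,
σ ↦ σ₁σ₂⋯σₙ₋₁.
-/

open FreeGroup

/-- The Artin relations for the braid group `Br_n`, on generators
`σ₁, …, σ_{n-1}` (encoded as `Fin (n-1)`, `i` standing for `σ_{i+1}`). -/
def braidRels (n : ℕ) : Set (FreeGroup (Fin (n - 1))) :=
  {r | (∃ i j : Fin (n - 1), (i.val + 1 < j.val ∨ j.val + 1 < i.val) ∧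
          r = of i * of j * (of j * of i)⁻¹) ∨
       (∃ i j : Fin (n - 1), j.val = i.val + 1 ∧
          r = of i * of j * of i * (of j * of i * of j)⁻¹)}

/-- The braid group `Br_n`, via the Artin presentation. -/
def BraidGroup (n : ℕ) : Type := PresentedGroup (braidRels n)

noncomputable instance (n : ℕ) : Group (BraidGroup n) :=
  inferInstanceAs (Group (PresentedGroup (braidRels n)))

/-- The Artin generator `σ_{i+1}` of `Br_n`. -/
def braidGen (n : ℕ) (i : Fin (n - 1)) : BraidGroup n := PresentedGroup.of i

/-- The two generators of the small presentation: `s1` stands for σ₁ and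
`s` for σ. -/
inductive TwoGen : Type
  | s1 : TwoGen
  | s : TwoGen

open TwoGen in
/-- The relations of the two-generator presentation:
`σ₁σⁱσ₁σ⁻ⁱ = σⁱσ₁σ⁻ⁱσ₁` for `2 ≤ i ≤ n/2`, and `σⁿ = (σσ₁)ⁿ⁻¹`. -/
def twoGenRels (n : ℕ) : Set (FreeGroup TwoGen) :=
  {r | (∃ i : ℕ, 2 ≤ i ∧ 2 * i ≤ n ∧
          r = (of s1 * (of s) ^ i * of s1 * ((of s) ^ i)⁻¹) *
              ((of s) ^ i * of s1 * ((of s) ^ i)⁻¹ * of s1)⁻¹) ∨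
       r = (of s) ^ n * (((of s) * of s1) ^ (n - 1))⁻¹}

/-! ### Abstract group-theoretic lemmas -/

section Abstract
variable {H : Type*} [Group H]

lemma conj_list_prod (c : H) (l : List H) :
    (l.map fun x => c * x * c⁻¹).prod = c * l.prod * c⁻¹ := by
  induction l with
  | nil => simp
  | cons a l ih =>
    simp only [List.map_cons, List.prod_cons, ih]
    group

lemma mul_pow_eq_prod (c a : H) (m : ℕ) :
    (c * a) ^ m =
      ((List.range m).map fun j => c ^ (j+1) * a * (c ^ (j+1))⁻¹).prod * c ^ m := by
  induction m with
  | zero => simp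
  | succ m ih =>
    rw [pow_succ, ih, List.range_succ, List.map_append, List.prod_append]
    simp only [List.map_cons, List.map_nil, List.prod_cons, List.prod_nil]
    group

lemma power_rel_iff (c a : H) (m : ℕ) :
    c ^ (m+1) = (c * a) ^ m ↔
      ((List.range m).map fun j => c ^ j * a * (c ^ j)⁻¹).prod = c := by
  rw [mul_pow_eq_prod]
  set P := ((List.range m).map fun j => c ^ j * a * (c ^ j)⁻¹).prod with hP
  have h1 : ((List.range m).map fun j => c ^ (j+1) * a * (c ^ (j+1))⁻¹).prod
      = c * P * c⁻¹ := by
    rw [hP, ← conj_list_prod c, List.map_map]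
    congr 1
    apply List.map_congr_left
    intro j _
    simp only [Function.comp]
    group
  rw [h1]
  constructor
  · intro h
    calc P = c⁻¹ * (c * P * c⁻¹ * c ^ m) * (c ^ m)⁻¹ * c := by group
      _ = c⁻¹ * c ^ (m+1) * (c ^ m)⁻¹ * c := by rw [← h]
      _ = c := by group
  · intro h
    rw [h]
    group

lemma core_iff (a : ℕ → H) (m i : ℕ) (him : i + 1 < m)
    (comm : ∀ p q, q < m → p + 2 ≤ q → a p * a q = a q * a p) :
    ((List.range m).map a).prod * a i = a (i+1) * ((List.range m).map a).prod ↔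
      a i * a (i+1) * a i = a (i+1) * a i * a (i+1) := by
  have hsplit : List.range m = List.Ico 0 i ++ [i, i+1] ++ List.Ico (i+2) m := by
    have h2 : ([i, i+1] : List ℕ) = List.Ico i (i+2) := by
      rw [show i + 2 = i + 1 + 1 by omega,
        ← List.Ico.append_consecutive (by omega) (by omega) (m := i+1),
        List.Ico.succ_singleton, List.Ico.succ_singleton]
      rfl
    rw [h2, List.Ico.append_consecutive (by omega) (by omega),
      List.Ico.append_consecutive (by omega) (by omega), List.Ico.zero_bot]
  set A1 := ((List.Ico 0 i).map a).prod with hA1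
  set T := ((List.Ico (i+2) m).map a).prod with hT
  have hprod : ((List.range m).map a).prod = A1 * (a i * a (i+1)) * T := by
    rw [hsplit]
    simp [List.prod_append, mul_assoc]
    rfl
  have hTi : Commute (a i) T := by
    apply Commute.list_prod_right
    intro x hx
    simp only [List.mem_map, List.Ico.mem] at hx
    obtain ⟨q, hq, rfl⟩ := hx
    exact (comm i q (by omega) (by omega))
  have hA1i : Commute (a (i+1)) A1 := by
    apply Commute.list_prod_right
    intro x hx
    simp only [List.mem_map, List.Ico.mem] at hx
    obtain ⟨p, hp, rfl⟩ := hx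
    exact (comm p (i+1) (by omega) (by omega)).symm
  rw [hprod]
  constructor
  · intro h
    have h2 : A1 * (a i * a (i+1) * a i) * T = A1 * (a (i+1) * a i * a (i+1)) * T := by
      calc A1 * (a i * a (i+1) * a i) * T = A1 * (a i * a (i+1)) * (a i * T) := by
              simp [mul_assoc]
        _ = A1 * (a i * a (i+1)) * (T * a i) := by rw [hTi.eq]
        _ = A1 * (a i * a (i+1)) * T * a i := by simp [mul_assoc]
        _ = a (i+1) * (A1 * (a i * a (i+1)) * T) := by rw [h]
        _ = (a (i+1) * A1) * ((a i * a (i+1)) * T) := by simp [mul_assoc]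
        _ = (A1 * a (i+1)) * ((a i * a (i+1)) * T) := by rw [hA1i.eq]
        _ = A1 * (a (i+1) * a i * a (i+1)) * T := by simp [mul_assoc]
    exact mul_left_cancel (mul_right_cancel h2)
  · intro h
    calc A1 * (a i * a (i+1)) * T * a i = A1 * (a i * a (i+1)) * (a i * T) := by
            rw [mul_assoc, hTi.eq]
      _ = A1 * (a i * a (i+1) * a i) * T := by simp [mul_assoc]
      _ = A1 * (a (i+1) * a i * a (i+1)) * T := by rw [h]
      _ = (A1 * a (i+1)) * ((a i * a (i+1)) * T) := by simp [mul_assoc]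
      _ = (a (i+1) * A1) * ((a i * a (i+1)) * T) := by rw [hA1i.eq]
      _ = a (i+1) * (A1 * (a i * a (i+1)) * T) := by simp [mul_assoc]

lemma shift_pow (a : ℕ → H) (c : H) (m : ℕ)
    (hc : ∀ i, i + 1 < m → c * a i * c⁻¹ = a (i+1)) :
    ∀ k, k < m → c ^ k * a 0 * (c ^ k)⁻¹ = a k := by
  intro k
  induction k with
  | zero => simp
  | succ k ih =>
    intro hk
    rw [← hc k (by omega), ← ih (by omega)]
    group

end Abstract

lemma presented_rel {α : Type*} {rels : Set (FreeGroup α)} {r : FreeGroup α} (h : r ∈ rels) :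
    PresentedGroup.mk rels r = 1 :=
  (QuotientGroup.eq_one_iff r).mpr (Subgroup.subset_normalClosure h)

/-! ### The braid group side -/

section Braid
variable (n : ℕ)

/-- The Artin generators as a `ℕ`-indexed family (junk value `1` out of range). -/
noncomputable def gg : ℕ → BraidGroup n := fun i =>
  if h : i < n - 1 then braidGen n ⟨i, h⟩ else 1

lemma gg_eq {i : ℕ} (h : i < n - 1) :
    gg n i = PresentedGroup.of (rels := braidRels n) ⟨i, h⟩ := by
  rw [gg, dif_pos h]; rfl

lemma gg_comm : ∀ p q, q < n - 1 → p + 2 ≤ q → gg n p * gg n q = gg n q * gg n p := by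
  intro p q hq hpq
  have hp : p < n - 1 := by omega
  have hrel : (of (⟨p, hp⟩ : Fin (n-1)) * of (⟨q, hq⟩ : Fin (n-1)) *
      (of (⟨q, hq⟩ : Fin (n-1)) * of (⟨p, hp⟩ : Fin (n-1)))⁻¹) ∈ braidRels n :=
    Or.inl ⟨⟨p, hp⟩, ⟨q, hq⟩, Or.inl (by simp; omega), rfl⟩
  have h1 := presented_rel hrel
  simp only [_root_.map_mul, _root_.map_inv, mul_inv_eq_one] at h1
  rw [gg_eq n hp, gg_eq n hq]
  exact h1

lemma gg_braid : ∀ i, i + 1 < n - 1 →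
    gg n i * gg n (i+1) * gg n i = gg n (i+1) * gg n i * gg n (i+1) := by
  intro i hi
  have hi' : i < n - 1 := by omega
  have hrel : (of (⟨i, hi'⟩ : Fin (n-1)) * of (⟨i+1, hi⟩ : Fin (n-1)) * of (⟨i, hi'⟩ : Fin (n-1)) *
      (of (⟨i+1, hi⟩ : Fin (n-1)) * of (⟨i, hi'⟩ : Fin (n-1)) * of (⟨i+1, hi⟩ : Fin (n-1)))⁻¹)
      ∈ braidRels n :=
    Or.inr ⟨⟨i, hi'⟩, ⟨i+1, hi⟩, rfl, rfl⟩
  have h1 := presented_rel hrel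
  simp only [_root_.map_mul, _root_.map_inv, mul_inv_eq_one] at h1
  rw [gg_eq n hi', gg_eq n hi]
  exact h1

/-- `δ = σ₁σ₂⋯σ_{n-1}`. -/
noncomputable def dd : BraidGroup n := ((List.range (n-1)).map (gg n)).prod

lemma dd_eq_ofFn : (List.ofFn fun i : Fin (n - 1) => braidGen n i).prod = dd n := by
  rw [dd, ← (show (List.finRange (n-1)).map (fun i : Fin (n-1) => (i : ℕ)) = List.range (n-1) from
    List.ext_getElem (by simp) (by simp)), List.map_map, List.ofFn_eq_map]
  congr 1
  apply List.map_congr_left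
  intro i _
  simp only [Function.comp_apply]
  rw [gg, dif_pos i.isLt]

lemma dd_conj : ∀ i, i + 1 < n - 1 → dd n * gg n i * (dd n)⁻¹ = gg n (i+1) := by
  intro i hi
  have h := (core_iff (gg n) (n-1) i hi (gg_comm n)).mpr (gg_braid n i hi)
  rw [show ((List.range (n-1)).map (gg n)).prod = dd n from rfl] at h
  rw [h]
  group

lemma dd_shift : ∀ k, k < n - 1 → (dd n) ^ k * gg n 0 * ((dd n) ^ k)⁻¹ = gg n k :=
  shift_pow (gg n) (dd n) (n-1) (dd_conj n)

lemma dd_pow (hn : 2 ≤ n) : (dd n) ^ n = (dd n * gg n 0) ^ (n - 1) := by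
  have h : ((List.range (n-1)).map fun j => (dd n) ^ j * gg n 0 * ((dd n) ^ j)⁻¹).prod = dd n := by
    rw [show ((List.range (n-1)).map fun j => (dd n) ^ j * gg n 0 * ((dd n) ^ j)⁻¹)
        = (List.range (n-1)).map (gg n) from
      List.map_congr_left fun j hj => dd_shift n j (List.mem_range.mp hj)]
    rfl
  have := (power_rel_iff (dd n) (gg n 0) (n-1)).mpr h
  rwa [show n - 1 + 1 = n by omega] at this

end Braid

/-! ### The two-generator group side -/

section TwoSide
variable (n : ℕ)

noncomputable def SS : PresentedGroup (twoGenRels n) := PresentedGroup.of TwoGen.s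
noncomputable def AA : PresentedGroup (twoGenRels n) := PresentedGroup.of TwoGen.s1
noncomputable def tt : ℕ → PresentedGroup (twoGenRels n) :=
  fun k => SS n ^ k * AA n * (SS n ^ k)⁻¹

lemma rel2 : SS n ^ n = (SS n * AA n) ^ (n - 1) := by
  have h1 := presented_rel (rels := twoGenRels n) (Or.inr rfl)
  simp only [_root_.map_mul, _root_.map_inv, _root_.map_pow, mul_inv_eq_one] at h1
  exact h1

lemma rel1 (i : ℕ) (h2 : 2 ≤ i) (hin : 2 * i ≤ n) :
    AA n * tt n i = tt n i * AA n := by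
  have h1 := presented_rel (rels := twoGenRels n) (Or.inl ⟨i, h2, hin, rfl⟩)
  simp only [_root_.map_mul, _root_.map_inv, _root_.map_pow, mul_inv_eq_one] at h1
  calc AA n * tt n i = AA n * SS n ^ i * AA n * (SS n ^ i)⁻¹ := by simp only [tt]; group
    _ = SS n ^ i * AA n * (SS n ^ i)⁻¹ * AA n := h1
    _ = tt n i * AA n := by simp only [tt]

lemma prodT (hn : 2 ≤ n) : ((List.range (n-1)).map (tt n)).prod = SS n := by
  have h := (power_rel_iff (SS n) (AA n) (n-1)).mp
    (by rw [show n - 1 + 1 = n by omega]; exact rel2 n)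
  exact h

lemma periodS : SS n ^ n * AA n = AA n * SS n ^ n := by
  have h := rel2 n
  have hc : SS n ^ n * (SS n * AA n) = (SS n * AA n) * SS n ^ n := by
    rw [h]; exact ((Commute.refl (SS n * AA n)).pow_left (n-1)).eq
  have h2 : SS n * (SS n ^ n * AA n) = SS n * (AA n * SS n ^ n) := by
    rw [← mul_assoc, ← pow_succ', pow_succ, mul_assoc, hc, mul_assoc]
  exact mul_left_cancel h2

lemma tt_period (k : ℕ) : tt n (k + n) = tt n k := by
  simp only [tt, pow_add]
  rw [mul_assoc (SS n ^ k) (SS n ^ n) (AA n), periodS n]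
  group

lemma tt_conj (k i : ℕ) : SS n ^ k * tt n i * (SS n ^ k)⁻¹ = tt n (k + i) := by
  simp only [tt]
  group

lemma tt_comm_shift (k i : ℕ) (h2 : 2 ≤ i) (hin : 2 * i ≤ n) :
    tt n k * tt n (k + i) = tt n (k + i) * tt n k := by
  have h := rel1 n i h2 hin
  rw [← tt_conj n k i, show tt n k = SS n ^ k * AA n * (SS n ^ k)⁻¹ from rfl]
  calc SS n ^ k * AA n * (SS n ^ k)⁻¹ * (SS n ^ k * tt n i * (SS n ^ k)⁻¹)
      = SS n ^ k * (AA n * tt n i) * (SS n ^ k)⁻¹ := by group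
    _ = SS n ^ k * (tt n i * AA n) * (SS n ^ k)⁻¹ := by rw [h]
    _ = SS n ^ k * tt n i * (SS n ^ k)⁻¹ * (SS n ^ k * AA n * (SS n ^ k)⁻¹) := by group

lemma tt_comm : ∀ p q, q < n - 1 → p + 2 ≤ q → tt n p * tt n q = tt n q * tt n p := by
  intro p q hq hpq
  by_cases hd : 2 * (q - p) ≤ n
  · have h := tt_comm_shift n p (q - p) (by omega) hd
    rwa [show p + (q - p) = q by omega] at h
  · have h := tt_comm_shift n q (n - (q - p)) (by omega) (by omega)
    rw [show q + (n - (q - p)) = p + n by omega, tt_period] at h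
    exact h.symm

lemma tt_braid (hn : 2 ≤ n) : ∀ i, i + 1 < n - 1 →
    tt n i * tt n (i+1) * tt n i = tt n (i+1) * tt n i * tt n (i+1) := by
  intro i hi
  apply (core_iff (tt n) (n-1) i hi (tt_comm n)).mp
  rw [prodT n hn]
  have h := tt_conj n 1 i
  rw [pow_one, show 1 + i = i + 1 by omega] at h
  rw [← h]
  group

end TwoSide

/-! ### The homomorphisms -/

section Homs
variable (n : ℕ)

noncomputable def fphi : TwoGen → BraidGroup n
  | .s1 => gg n 0
  | .s => dd n

lemma fphi_s1 : fphi n TwoGen.s1 = gg n 0 := rfl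
lemma fphi_s : fphi n TwoGen.s = dd n := rfl

lemma phi_rels (hn : 2 ≤ n) : ∀ r ∈ twoGenRels n, FreeGroup.lift (fphi n) r = 1 := by
  intro r hr
  rcases hr with ⟨i, h2, hin, rfl⟩ | rfl
  · simp only [_root_.map_mul, _root_.map_inv, _root_.map_pow, FreeGroup.lift_apply_of,
      mul_inv_eq_one, fphi_s1, fphi_s]
    have hi1 : i < n - 1 := by omega
    have hs := dd_shift n i hi1
    have hc := gg_comm n 0 i hi1 (by omega)
    calc gg n 0 * dd n ^ i * gg n 0 * (dd n ^ i)⁻¹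
        = gg n 0 * (dd n ^ i * gg n 0 * (dd n ^ i)⁻¹) := by group
      _ = gg n 0 * gg n i := by rw [hs]
      _ = gg n i * gg n 0 := hc
      _ = (dd n ^ i * gg n 0 * (dd n ^ i)⁻¹) * gg n 0 := by rw [hs]
      _ = dd n ^ i * gg n 0 * (dd n ^ i)⁻¹ * gg n 0 := by group
  · simp only [_root_.map_mul, _root_.map_inv, _root_.map_pow, FreeGroup.lift_apply_of,
      mul_inv_eq_one, fphi_s1, fphi_s]
    exact dd_pow n hn

noncomputable def phi (hn : 2 ≤ n) : PresentedGroup (twoGenRels n) →* BraidGroup n :=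
  PresentedGroup.toGroup (phi_rels n hn)

noncomputable def fpsi : Fin (n - 1) → PresentedGroup (twoGenRels n) := fun i => tt n i.val

lemma psi_rels (hn : 2 ≤ n) : ∀ r ∈ braidRels n, FreeGroup.lift (fpsi n) r = 1 := by
  intro r hr
  rcases hr with ⟨i, j, hij | hij, rfl⟩ | ⟨i, j, hij, rfl⟩
  · simp only [_root_.map_mul, _root_.map_inv, FreeGroup.lift_apply_of, mul_inv_eq_one, fpsi]
    exact tt_comm n i.val j.val j.isLt (by omega)
  · simp only [_root_.map_mul, _root_.map_inv, FreeGroup.lift_apply_of, mul_inv_eq_one, fpsi]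
    exact (tt_comm n j.val i.val i.isLt (by omega)).symm
  · simp only [_root_.map_mul, _root_.map_inv, FreeGroup.lift_apply_of, mul_inv_eq_one, fpsi]
    rw [hij]
    exact tt_braid n hn i.val (by have := j.isLt; omega)

noncomputable def psi (hn : 2 ≤ n) : BraidGroup n →* PresentedGroup (twoGenRels n) :=
  PresentedGroup.toGroup (psi_rels n hn)

lemma phi_s1' (hn : 2 ≤ n) : phi n hn (PresentedGroup.of TwoGen.s1) = gg n 0 :=
  PresentedGroup.toGroup.of (phi_rels n hn)

lemma phi_s' (hn : 2 ≤ n) : phi n hn (PresentedGroup.of TwoGen.s) = dd n :=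
  PresentedGroup.toGroup.of (phi_rels n hn)

lemma phi_SS (hn : 2 ≤ n) : phi n hn (SS n) = dd n :=
  PresentedGroup.toGroup.of (phi_rels n hn)

lemma phi_AA (hn : 2 ≤ n) : phi n hn (AA n) = gg n 0 :=
  PresentedGroup.toGroup.of (phi_rels n hn)

lemma psi_of (hn : 2 ≤ n) (x : Fin (n - 1)) :
    psi n hn (PresentedGroup.of (rels := braidRels n) x) = tt n x.val :=
  PresentedGroup.toGroup.of (psi_rels n hn)

lemma comp1 (hn : 2 ≤ n) : (psi n hn).comp (phi n hn) = MonoidHom.id _ := by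
  apply PresentedGroup.ext
  intro x
  cases x with
  | s1 =>
    show psi n hn (phi n hn (PresentedGroup.of TwoGen.s1)) = PresentedGroup.of TwoGen.s1
    rw [phi_s1' n hn, gg_eq n (show 0 < n - 1 by omega), psi_of n hn]
    show tt n 0 = AA n
    simp [tt]
  | s =>
    show psi n hn (phi n hn (PresentedGroup.of TwoGen.s)) = PresentedGroup.of TwoGen.s
    rw [phi_s' n hn, dd, map_list_prod, List.map_map]
    rw [show (List.range (n-1)).map (psi n hn ∘ gg n) = (List.range (n-1)).map (tt n) from ?_]
    · exact prodT n hn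
    · apply List.map_congr_left
      intro k hk
      have hk' : k < n - 1 := List.mem_range.mp hk
      simp only [Function.comp_apply]
      rw [gg_eq n hk', psi_of n hn]

lemma comp2 (hn : 2 ≤ n) : (phi n hn).comp (psi n hn) = MonoidHom.id _ := by
  apply PresentedGroup.ext (rels := braidRels n)
  intro x
  show phi n hn (psi n hn (PresentedGroup.of x)) = PresentedGroup.of x
  rw [psi_of n hn]
  have h : phi n hn (tt n x.val) = dd n ^ x.val * gg n 0 * (dd n ^ x.val)⁻¹ := by
    simp only [tt, _root_.map_mul, _root_.map_inv, _root_.map_pow]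
    rw [phi_SS n hn, phi_AA n hn]
  rw [h, dd_shift n x.val x.isLt, gg_eq n x.isLt]

end Homs


theorem braid_group_two_generator_presentation (n : ℕ) (hn : 2 ≤ n) :
    ∃ e : PresentedGroup (twoGenRels n) ≃* BraidGroup n,
      e (PresentedGroup.of TwoGen.s1) = braidGen n ⟨0, by omega⟩ ∧
      e (PresentedGroup.of TwoGen.s) =
        (List.ofFn (fun i : Fin (n - 1) => braidGen n i)).prod := by
  refine ⟨MonoidHom.toMulEquiv (phi n hn) (psi n hn) (comp1 n hn) (comp2 n hn), ?_, ?_⟩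
  · show phi n hn (PresentedGroup.of TwoGen.s1) = braidGen n ⟨0, by omega⟩
    rw [phi_s1' n hn, gg_eq n (show 0 < n - 1 by omega)]
    rfl
  · show phi n hn (PresentedGroup.of TwoGen.s) = _
    rw [phi_s' n hn, dd_eq_ofFn]
end

section
/- The Artin group of type E₈ is isomorphic to the group defined by the presentation with three generators σ₁, σ, ω and relations: σ₁σⁱσ₁σ⁻ⁱ = σⁱσ₁σ⁻ⁱσ₁ for i = 2, 3, 4; σ⁸ = (σσ₁)⁷; ωσⁱσ₁σ⁻ⁱ = σⁱσ₁σ⁻ⁱω for i = 0, 1, 3, 4, 5, 6; and ωσ²σ₁σ⁻²ω = σ²σ₁σ⁻²ωσ²σ₁σ⁻²; an isomorphism is given by σ₁ ↦ σ₁, ω ↦ ω, and σ ↦ σ₁σ₂⋯σ₇. -/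
/-!
STATEMENT 5: The Artin group of type E₈ is isomorphic to the group presented
by three generators σ₁, σ, ω with relations σ₁σⁱσ₁σ⁻ⁱ = σⁱσ₁σ⁻ⁱσ₁
(i = 2, 3, 4), σ⁸ = (σσ₁)⁷, ωσⁱσ₁σ⁻ⁱ = σⁱσ₁σ⁻ⁱω (i = 0, 1, 3, 4, 5, 6) and
ωσ²σ₁σ⁻²ω = σ²σ₁σ⁻²ωσ²σ₁σ⁻², via σ₁ ↦ σ₁, ω ↦ ω, σ ↦ σ₁σ₂⋯σ₇.
-/

open FreeGroup

/-- Generators of the Artin group of type `E₈`: `σ₁, …, σ₇` (as `sig i`,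
`i : Fin 7`, `i` standing for `σ_{i+1}`) and `ω` (attached to the third node
of the A₇ chain). -/
inductive E8Gen : Type
  | sig (i : Fin 7) : E8Gen
  | om : E8Gen

open E8Gen in
/-- The canonical relations of the Artin group of type `E₈`. -/
def typeE8Rels : Set (FreeGroup E8Gen) :=
  {r | (∃ i j : Fin 7, (i.val + 1 < j.val ∨ j.val + 1 < i.val) ∧
          r = of (sig i) * of (sig j) * (of (sig j) * of (sig i))⁻¹) ∨
       (∃ i j : Fin 7, j.val = i.val + 1 ∧
          r = of (sig i) * of (sig j) * of (sig i) *
              (of (sig j) * of (sig i) * of (sig j))⁻¹) ∨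
       (∃ i : Fin 7, i.val ≠ 2 ∧
          r = of om * of (sig i) * (of (sig i) * of om)⁻¹) ∨
       r = of om * of (sig 2) * of om *
           (of (sig 2) * of om * of (sig 2))⁻¹}

/-- The Artin group of type `E₈`. -/
def ArtinE8 : Type := PresentedGroup typeE8Rels

noncomputable instance : Group ArtinE8 :=
  inferInstanceAs (Group (PresentedGroup typeE8Rels))

/-- The three generators σ₁, σ and ω. -/
inductive ThreeGenE8 : Type
  | s1 : ThreeGenE8
  | s : ThreeGenE8
  | w : ThreeGenE8

open ThreeGenE8 in
/-- The relations of the three-generator presentation of the type `E₈` Artin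
group. -/
def threeGenE8Rels : Set (FreeGroup ThreeGenE8) :=
  {x | (∃ i : ℕ, (i = 2 ∨ i = 3 ∨ i = 4) ∧
          x = (of s1 * (of s) ^ i * of s1 * ((of s) ^ i)⁻¹) *
              ((of s) ^ i * of s1 * ((of s) ^ i)⁻¹ * of s1)⁻¹) ∨
       x = (of s) ^ 8 * (((of s) * of s1) ^ 7)⁻¹ ∨
       (∃ i : ℕ, (i = 0 ∨ i = 1 ∨ i = 3 ∨ i = 4 ∨ i = 5 ∨ i = 6) ∧
          x = (of w * (of s) ^ i * of s1 * ((of s) ^ i)⁻¹) *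
              ((of s) ^ i * of s1 * ((of s) ^ i)⁻¹ * of w)⁻¹) ∨
       x = (of w * ((of s) ^ 2 * of s1 * ((of s) ^ 2)⁻¹) * of w) *
           (((of s) ^ 2 * of s1 * ((of s) ^ 2)⁻¹) * of w *
            ((of s) ^ 2 * of s1 * ((of s) ^ 2)⁻¹))⁻¹}

set_option maxHeartbeats 1000000 in
section
namespace E8X

theorem relmk {α : Type*} {rels : Set (FreeGroup α)} {r : FreeGroup α} (h : r ∈ rels) :
    PresentedGroup.mk rels r = 1 := by
  change (QuotientGroup.mk r : FreeGroup α ⧸ _) = 1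
  exact (QuotientGroup.eq_one_iff r).mpr (Subgroup.subset_normalClosure h)

abbrev G3 : Type := PresentedGroup threeGenE8Rels

def tG : G3 := .of .s
def sG : G3 := .of .s1
def wG : G3 := .of .w

lemma mk_s : PresentedGroup.mk threeGenE8Rels (of .s) = tG := rfl
lemma mk_s1 : PresentedGroup.mk threeGenE8Rels (of .s1) = sG := rfl
lemma mk_w : PresentedGroup.mk threeGenE8Rels (of .w) = wG := rfl

lemma rel_comm (i : ℕ) (h : i = 2 ∨ i = 3 ∨ i = 4) :
    sG * (tG ^ i * sG * (tG ^ i)⁻¹) = (tG ^ i * sG * (tG ^ i)⁻¹) * sG := by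
  have := relmk (show _ ∈ threeGenE8Rels from Or.inl ⟨i, h, rfl⟩)
  simp only [_root_.map_mul, _root_.map_inv, _root_.map_pow, mk_s, mk_s1, mul_inv_eq_one] at this
  simpa [mul_assoc] using this

lemma rel_pow : tG ^ (8:ℕ) = (tG * sG) ^ (7:ℕ) := by
  have := relmk (show _ ∈ threeGenE8Rels from Or.inr (Or.inl rfl))
  simp only [_root_.map_mul, _root_.map_inv, _root_.map_pow, mk_s, mk_s1, mul_inv_eq_one] at this
  exact this

lemma rel_w (i : ℕ) (h : i = 0 ∨ i = 1 ∨ i = 3 ∨ i = 4 ∨ i = 5 ∨ i = 6) :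
    wG * (tG ^ i * sG * (tG ^ i)⁻¹) = (tG ^ i * sG * (tG ^ i)⁻¹) * wG := by
  have := relmk (show _ ∈ threeGenE8Rels from Or.inr (Or.inr (Or.inl ⟨i, h, rfl⟩)))
  simp only [_root_.map_mul, _root_.map_inv, _root_.map_pow, mk_s, mk_s1, mk_w, mul_inv_eq_one] at this
  simpa [mul_assoc] using this

lemma rel_wb :
    wG * (tG ^ 2 * sG * (tG ^ 2)⁻¹) * wG
      = (tG ^ 2 * sG * (tG ^ 2)⁻¹) * wG * (tG ^ 2 * sG * (tG ^ 2)⁻¹) := by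
  have := relmk (show _ ∈ threeGenE8Rels from Or.inr (Or.inr (Or.inr rfl)))
  simp only [_root_.map_mul, _root_.map_inv, _root_.map_pow, mk_s, mk_s1, mk_w, mul_inv_eq_one] at this
  simpa [mul_assoc] using this

end E8X

namespace E8X

/-- the conjugates `t^k s t^{-k}`. -/
def AG (k : ℤ) : G3 := tG ^ k * sG * (tG ^ k)⁻¹

lemma A_zero : AG 0 = sG := by simp [AG]

lemma A_nat (i : ℕ) : AG i = tG ^ i * sG * (tG ^ i)⁻¹ := by
  simp [AG, zpow_natCast]

lemma tpow_A (m k : ℤ) : tG ^ m * AG k = AG (k + m) * tG ^ m := by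
  unfold AG; group

lemma shuffle {G : Type*} [Group G] (a b : G) (n : ℕ) : a * (b * a) ^ n = (a * b) ^ n * a :=
  (SemiconjBy.pow_right (show a * (b * a) = (a * b) * a by group) n).eq

lemma central : Commute sG (tG ^ (8:ℕ)) := by
  have h1 : (sG * tG) ^ (7:ℕ) = tG ^ (8:ℕ) := by
    have h2 : tG * (sG * tG) ^ (7:ℕ) = (tG * sG) ^ (7:ℕ) * tG := shuffle tG sG 7
    rw [← rel_pow] at h2
    calc (sG * tG) ^ (7:ℕ) = tG⁻¹ * (tG * (sG * tG) ^ (7:ℕ)) := by group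
    _ = tG⁻¹ * (tG ^ (8:ℕ) * tG) := by rw [h2]
    _ = tG ^ (8:ℕ) := by group
  show sG * tG ^ (8:ℕ) = tG ^ (8:ℕ) * sG
  calc sG * tG ^ (8:ℕ) = sG * (tG * sG) ^ (7:ℕ) := by rw [rel_pow]
  _ = (sG * tG) ^ (7:ℕ) * sG := shuffle sG tG 7
  _ = tG ^ (8:ℕ) * sG := by rw [h1]

lemma central_z : Commute sG (tG ^ (8:ℤ)) := by
  rw [show (8:ℤ) = ((8:ℕ):ℤ) from rfl, zpow_natCast]
  exact central

lemma A_period (k : ℤ) : AG (k + 8) = AG k := by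
  have h : tG ^ (8:ℤ) * sG * (tG ^ (8:ℤ))⁻¹ = sG := by
    rw [← central_z.eq]; group
  calc AG (k + 8) = tG ^ k * (tG ^ (8:ℤ) * sG * (tG ^ (8:ℤ))⁻¹) * (tG ^ k)⁻¹ := by
        unfold AG; group
  _ = tG ^ k * sG * (tG ^ k)⁻¹ := by rw [h]
  _ = AG k := rfl

lemma cj_A (m k : ℤ) : MulAut.conj (tG ^ m) (AG k) = AG (k + m) := by
  simp only [MulAut.conj_apply]
  unfold AG; group

lemma comm_shift {i j : ℤ} (m : ℤ) (h : Commute (AG i) (AG j)) :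
    Commute (AG (i + m)) (AG (j + m)) := by
  have := h.map (MulAut.conj (tG ^ m)).toMonoidHom
  simpa only [MulEquiv.coe_toMonoidHom, cj_A] using this

lemma comm_base (i : ℕ) (h : i = 2 ∨ i = 3 ∨ i = 4) : Commute (AG 0) (AG i) := by
  show AG 0 * AG i = AG i * AG 0
  rw [A_zero, A_nat]
  exact rel_comm i h

lemma commA {i j : ℤ} (h2 : 2 ≤ j - i) (h6 : j - i ≤ 6) : Commute (AG i) (AG j) := by
  have hd : j = i + 2 ∨ j = i + 3 ∨ j = i + 4 ∨ j = i + 5 ∨ j = i + 6 := by omega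
  rcases hd with h | h | h | h | h
  · have := comm_shift i (comm_base 2 (by norm_num))
    rw [zero_add] at this; rw [h]; convert this using 2; norm_num [add_comm]
  · have := comm_shift i (comm_base 3 (by norm_num))
    rw [zero_add] at this; rw [h]; convert this using 2; norm_num [add_comm]
  · have := comm_shift i (comm_base 4 (by norm_num))
    rw [zero_add] at this; rw [h]; convert this using 2; norm_num [add_comm]
  · -- distance 5 : use periodicity, i = j - 5, i + 8 = j + 3
    have hb := comm_shift j (comm_base 3 (by norm_num))
    rw [zero_add] at hb
    have : ((3:ℕ):ℤ) + j = i + 8 := by omega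
    rw [this, A_period] at hb
    exact hb.symm
  · have hb := comm_shift j (comm_base 2 (by norm_num))
    rw [zero_add] at hb
    have : ((2:ℕ):ℤ) + j = i + 8 := by omega
    rw [this, A_period] at hb
    exact hb.symm

lemma tpow_A' (m : ℕ) (k : ℤ) : tG ^ m * AG k = AG (k + m) * tG ^ m := by
  have := tpow_A m k
  rwa [zpow_natCast] at this

lemma prod_step (k : ℕ) (P : G3) (h : (AG 1 * tG) ^ k = P * tG ^ k) :
    (AG 1 * tG) ^ (k + 1) = (P * AG (1 + k)) * tG ^ (k + 1) := by
  rw [pow_succ, h]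
  calc P * tG ^ k * (AG 1 * tG) = P * (tG ^ k * AG 1) * tG := by group
  _ = P * (AG (1 + k) * tG ^ k) * tG := by rw [tpow_A']
  _ = P * AG (1 + k) * tG ^ (k + 1) := by group

lemma prodA : AG 1 * AG 2 * AG 3 * AG 4 * AG 5 * AG 6 * AG 7 = tG := by
  have h1 : (AG 1 * tG) ^ (1:ℕ) = AG 1 * tG ^ (1:ℕ) := by norm_num
  have h2 := prod_step 1 _ h1
  have h3 := prod_step 2 _ h2
  have h4 := prod_step 3 _ h3
  have h5 := prod_step 4 _ h4
  have h6 := prod_step 5 _ h5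
  have h7 := prod_step 6 _ h6
  norm_num at h7
  have hts : tG * sG = AG 1 * tG := by
    have := tpow_A 1 0
    rw [A_zero, zero_add, zpow_one] at this
    exact this
  have h8 : tG ^ (8:ℕ) = (AG 1 * AG 2 * AG 3 * AG 4 * AG 5 * AG 6 * AG 7) * tG ^ (7:ℕ) := by
    rw [rel_pow, hts, h7]
  have h9 : tG * tG ^ (7:ℕ) = (AG 1 * AG 2 * AG 3 * AG 4 * AG 5 * AG 6 * AG 7) * tG ^ (7:ℕ) := by
    rw [← h8]; group
  exact (mul_right_cancel h9).symm

lemma swL {G : Type*} [Group G] {a b : G} (h : Commute a b) (c : G) :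
    a * (b * c) = b * (a * c) := by
  rw [← mul_assoc, h.eq, mul_assoc]

lemma braid12 : AG 1 * AG 2 * AG 1 = AG 2 * AG 1 * AG 2 := by
  have hP : AG 1 * (AG 2 * (AG 3 * (AG 4 * (AG 5 * (AG 6 * AG 7))))) = tG := by
    rw [← prodA]; group
  have h1 : AG 2 * tG = tG * AG 1 := by
    have := tpow_A 1 1; rw [zpow_one] at this; norm_num at this; rw [this]
  have key : AG 2 * (AG 1 * (AG 2 * (AG 3 * (AG 4 * (AG 5 * (AG 6 * AG 7))))))
      = (AG 1 * (AG 2 * (AG 3 * (AG 4 * (AG 5 * (AG 6 * AG 7)))))) * AG 1 := by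
    rw [hP, h1, ← hP]
  have c13 : Commute (AG 1) (AG 3) := commA (by norm_num) (by norm_num)
  have c14 : Commute (AG 1) (AG 4) := commA (by norm_num) (by norm_num)
  have c15 : Commute (AG 1) (AG 5) := commA (by norm_num) (by norm_num)
  have c16 : Commute (AG 1) (AG 6) := commA (by norm_num) (by norm_num)
  have c17 : Commute (AG 1) (AG 7) := commA (by norm_num) (by norm_num)
  rw [show (AG 1 * (AG 2 * (AG 3 * (AG 4 * (AG 5 * (AG 6 * AG 7)))))) * AG 1
      = AG 1 * (AG 2 * (AG 3 * (AG 4 * (AG 5 * (AG 6 * (AG 7 * AG 1)))))) by group,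
    c17.symm.eq, swL c16.symm, swL c15.symm, swL c14.symm, swL c13.symm] at key
  -- key : AG 2 * (AG 1 * (AG 2 * X)) = AG 1 * (AG 2 * (AG 1 * X))
  have key2 : (AG 2 * AG 1 * AG 2) * (AG 3 * (AG 4 * (AG 5 * (AG 6 * AG 7))))
      = (AG 1 * AG 2 * AG 1) * (AG 3 * (AG 4 * (AG 5 * (AG 6 * AG 7)))) := by
    rw [mul_assoc, mul_assoc, mul_assoc (AG 1), mul_assoc (AG 1)]
    exact key
  exact (mul_right_cancel key2).symm

lemma braidA (k : ℤ) : AG k * AG (k + 1) * AG k = AG (k + 1) * AG k * AG (k + 1) := by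
  have := congrArg (MulAut.conj (tG ^ (k - 1))) braid12
  simp only [_root_.map_mul, cj_A] at this
  rwa [show (1:ℤ) + (k - 1) = k by ring, show (2:ℤ) + (k - 1) = k + 1 by ring] at this

end E8X

namespace E8X

open E8Gen

def fE : E8Gen → G3 := fun g => match g with
  | .sig i => AG i.val
  | .om => wG

lemma comm_w (i : ℕ) (h : i = 0 ∨ i = 1 ∨ i = 3 ∨ i = 4 ∨ i = 5 ∨ i = 6) :
    Commute wG (AG i) := by
  show wG * AG i = AG i * wG
  rw [A_nat]
  exact rel_w i h

lemma hE : ∀ r ∈ typeE8Rels, FreeGroup.lift fE r = 1 := by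
  intro r hr
  rcases hr with ⟨i, j, hij, rfl⟩ | ⟨i, j, hij, rfl⟩ | ⟨i, hi, rfl⟩ | rfl
  · simp only [_root_.map_mul, _root_.map_inv, FreeGroup.lift_apply_of, mul_inv_eq_one, fE]
    rcases hij with h | h
    · exact (commA (i := (i.val:ℤ)) (j := (j.val:ℤ)) (by omega)
        (by have := j.isLt; omega)).eq
    · exact (commA (i := (j.val:ℤ)) (j := (i.val:ℤ)) (by omega)
        (by have := i.isLt; omega)).symm.eq
  · simp only [_root_.map_mul, _root_.map_inv, FreeGroup.lift_apply_of, mul_inv_eq_one, fE]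
    have hj : ((j.val : ℤ)) = (i.val : ℤ) + 1 := by omega
    rw [hj]
    exact braidA i.val
  · simp only [_root_.map_mul, _root_.map_inv, FreeGroup.lift_apply_of, mul_inv_eq_one, fE]
    exact (comm_w i.val (by omega)).eq
  · simp only [_root_.map_mul, _root_.map_inv, FreeGroup.lift_apply_of, mul_inv_eq_one, fE]
    show wG * AG ((2:Fin 7).val) * wG = AG ((2:Fin 7).val) * wG * AG ((2:Fin 7).val)
    have h2 : ((2:Fin 7).val : ℤ) = ((2:ℕ):ℤ) := by norm_num
    rw [show AG ((2:Fin 7).val) = AG ((2:ℕ)) by rw [h2], A_nat]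
    exact rel_wb

/-- `ArtinE8 →* G3`. -/
noncomputable def gE : ArtinE8 →* G3 :=
  PresentedGroup.toGroup hE

end E8X

namespace E8X

open E8Gen

noncomputable def bA (i : Fin 7) : ArtinE8 := @PresentedGroup.of E8Gen typeE8Rels (sig i)
noncomputable def wA : ArtinE8 := @PresentedGroup.of E8Gen typeE8Rels om
noncomputable def dA : ArtinE8 := bA 0 * bA 1 * bA 2 * bA 3 * bA 4 * bA 5 * bA 6

lemma mk_bA (i : Fin 7) : PresentedGroup.mk typeE8Rels (of (sig i)) = bA i := rfl
lemma mk_wA : PresentedGroup.mk typeE8Rels (of om) = wA := rfl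

lemma a_comm (i j : Fin 7) (h : i.val + 1 < j.val ∨ j.val + 1 < i.val) :
    bA i * bA j = bA j * bA i := by
  have := relmk (show _ ∈ typeE8Rels from Or.inl ⟨i, j, h, rfl⟩)
  simp only [_root_.map_mul, _root_.map_inv, mk_bA, mul_inv_eq_one] at this
  exact this

lemma cmm (i j : Fin 7) (h : i.val + 1 < j.val ∨ j.val + 1 < i.val) :
    Commute (bA i) (bA j) := a_comm i j h

lemma a_braid (i j : Fin 7) (h : j.val = i.val + 1) :
    bA i * bA j * bA i = bA j * bA i * bA j := by
  have := relmk (show _ ∈ typeE8Rels from Or.inr (Or.inl ⟨i, j, h, rfl⟩))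
  simp only [_root_.map_mul, _root_.map_inv, mk_bA, mul_inv_eq_one] at this
  exact this

lemma a_w (i : Fin 7) (h : i.val ≠ 2) : wA * bA i = bA i * wA := by
  have := relmk (show _ ∈ typeE8Rels from Or.inr (Or.inr (Or.inl ⟨i, h, rfl⟩)))
  simp only [_root_.map_mul, _root_.map_inv, mk_bA, mk_wA, mul_inv_eq_one] at this
  exact this

lemma a_wb : wA * bA 2 * wA = bA 2 * wA * bA 2 := by
  have := relmk (show _ ∈ typeE8Rels from Or.inr (Or.inr (Or.inr rfl)))
  simp only [_root_.map_mul, _root_.map_inv, mk_bA, mk_wA, mul_inv_eq_one] at this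
  exact this

lemma brL {G : Type*} [Group G] {a b : G} (h : a * b * a = b * a * b) (c : G) :
    a * (b * (a * c)) = b * (a * (b * c)) := by
  rw [← mul_assoc, ← mul_assoc, h, mul_assoc, mul_assoc]

lemma brT {G : Type*} [Group G] {a b : G} (h : a * b * a = b * a * b) :
    a * (b * a) = b * (a * b) := by
  rw [← mul_assoc, h, mul_assoc]

lemma sh0 : dA * bA 0 = bA 1 * dA := by
  simp only [dA, mul_assoc]
  rw [a_comm 6 0 (by decide), swL (cmm 5 0 (by decide)), swL (cmm 4 0 (by decide)),
    swL (cmm 3 0 (by decide)), swL (cmm 2 0 (by decide)), brL (a_braid 0 1 (by decide))]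

lemma sh1 : dA * bA 1 = bA 2 * dA := by
  simp only [dA, mul_assoc]
  rw [a_comm 6 1 (by decide), swL (cmm 5 1 (by decide)), swL (cmm 4 1 (by decide)),
    swL (cmm 3 1 (by decide)), brL (a_braid 1 2 (by decide)), swL (cmm 0 2 (by decide))]

lemma sh2 : dA * bA 2 = bA 3 * dA := by
  simp only [dA, mul_assoc]
  rw [a_comm 6 2 (by decide), swL (cmm 5 2 (by decide)), swL (cmm 4 2 (by decide)),
    brL (a_braid 2 3 (by decide)), swL (cmm 1 3 (by decide)), swL (cmm 0 3 (by decide))]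

lemma sh3 : dA * bA 3 = bA 4 * dA := by
  simp only [dA, mul_assoc]
  rw [a_comm 6 3 (by decide), swL (cmm 5 3 (by decide)), brL (a_braid 3 4 (by decide)),
    swL (cmm 2 4 (by decide)), swL (cmm 1 4 (by decide)), swL (cmm 0 4 (by decide))]

lemma sh4 : dA * bA 4 = bA 5 * dA := by
  simp only [dA, mul_assoc]
  rw [a_comm 6 4 (by decide), brL (a_braid 4 5 (by decide)), swL (cmm 3 5 (by decide)),
    swL (cmm 2 5 (by decide)), swL (cmm 1 5 (by decide)), swL (cmm 0 5 (by decide))]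

lemma sh5 : dA * bA 5 = bA 6 * dA := by
  simp only [dA, mul_assoc]
  rw [brT (a_braid 5 6 (by decide)), swL (cmm 4 6 (by decide)), swL (cmm 3 6 (by decide)),
    swL (cmm 2 6 (by decide)), swL (cmm 1 6 (by decide)), swL (cmm 0 6 (by decide))]

end E8X

namespace E8X

open E8Gen

lemma pshL {G : Type*} [Group G] {d a b : G} (h : d * a = b * d) (X : G) :
    d * (a * X) = b * (d * X) := by rw [← mul_assoc, h, mul_assoc]

lemma pw1 : dA ^ (1:ℕ) * bA 0 = bA 1 * dA ^ (1:ℕ) := by simpa using sh0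
lemma pw2 : dA ^ (2:ℕ) * bA 0 = bA 2 * dA ^ (2:ℕ) := by
  calc dA ^ (2:ℕ) * bA 0 = dA * (dA ^ (1:ℕ) * bA 0) := by rw [pow_succ']; group
  _ = dA * bA 1 * dA ^ (1:ℕ) := by rw [pw1]; group
  _ = bA 2 * dA ^ (2:ℕ) := by rw [sh1, pow_succ']; group
lemma pw3 : dA ^ (3:ℕ) * bA 0 = bA 3 * dA ^ (3:ℕ) := by
  calc dA ^ (3:ℕ) * bA 0 = dA * (dA ^ (2:ℕ) * bA 0) := by rw [pow_succ']; group
  _ = dA * bA 2 * dA ^ (2:ℕ) := by rw [pw2]; group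
  _ = bA 3 * dA ^ (3:ℕ) := by rw [sh2, pow_succ']; group
lemma pw4 : dA ^ (4:ℕ) * bA 0 = bA 4 * dA ^ (4:ℕ) := by
  calc dA ^ (4:ℕ) * bA 0 = dA * (dA ^ (3:ℕ) * bA 0) := by rw [pow_succ']; group
  _ = dA * bA 3 * dA ^ (3:ℕ) := by rw [pw3]; group
  _ = bA 4 * dA ^ (4:ℕ) := by rw [sh3, pow_succ']; group
lemma pw5 : dA ^ (5:ℕ) * bA 0 = bA 5 * dA ^ (5:ℕ) := by
  calc dA ^ (5:ℕ) * bA 0 = dA * (dA ^ (4:ℕ) * bA 0) := by rw [pow_succ']; group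
  _ = dA * bA 4 * dA ^ (4:ℕ) := by rw [pw4]; group
  _ = bA 5 * dA ^ (5:ℕ) := by rw [sh4, pow_succ']; group
lemma pw6 : dA ^ (6:ℕ) * bA 0 = bA 6 * dA ^ (6:ℕ) := by
  calc dA ^ (6:ℕ) * bA 0 = dA * (dA ^ (5:ℕ) * bA 0) := by rw [pow_succ']; group
  _ = dA * bA 5 * dA ^ (5:ℕ) := by rw [pw5]; group
  _ = bA 6 * dA ^ (6:ℕ) := by rw [sh5, pow_succ']; group

lemma qw1 : dA ^ (1:ℕ) * bA 1 = bA 2 * dA ^ (1:ℕ) := by simpa using sh1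
lemma qw2 : dA ^ (2:ℕ) * bA 1 = bA 3 * dA ^ (2:ℕ) := by
  calc dA ^ (2:ℕ) * bA 1 = dA * (dA ^ (1:ℕ) * bA 1) := by rw [pow_succ']; group
  _ = dA * bA 2 * dA ^ (1:ℕ) := by rw [qw1]; group
  _ = bA 3 * dA ^ (2:ℕ) := by rw [sh2, pow_succ']; group
lemma qw3 : dA ^ (3:ℕ) * bA 1 = bA 4 * dA ^ (3:ℕ) := by
  calc dA ^ (3:ℕ) * bA 1 = dA * (dA ^ (2:ℕ) * bA 1) := by rw [pow_succ']; group
  _ = dA * bA 3 * dA ^ (2:ℕ) := by rw [qw2]; group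
  _ = bA 4 * dA ^ (3:ℕ) := by rw [sh3, pow_succ']; group
lemma qw4 : dA ^ (4:ℕ) * bA 1 = bA 5 * dA ^ (4:ℕ) := by
  calc dA ^ (4:ℕ) * bA 1 = dA * (dA ^ (3:ℕ) * bA 1) := by rw [pow_succ']; group
  _ = dA * bA 4 * dA ^ (3:ℕ) := by rw [qw3]; group
  _ = bA 5 * dA ^ (4:ℕ) := by rw [sh4, pow_succ']; group
lemma qw5 : dA ^ (5:ℕ) * bA 1 = bA 6 * dA ^ (5:ℕ) := by
  calc dA ^ (5:ℕ) * bA 1 = dA * (dA ^ (4:ℕ) * bA 1) := by rw [pow_succ']; group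
  _ = dA * bA 5 * dA ^ (4:ℕ) := by rw [qw4]; group
  _ = bA 6 * dA ^ (5:ℕ) := by rw [sh5, pow_succ']; group

lemma dd : dA * dA = bA 1 * (bA 2 * (bA 3 * (bA 4 * (bA 5 * (bA 6 * (dA * bA 6)))))) := by
  conv_lhs => rw [show dA * dA
    = dA * (bA 0 * (bA 1 * (bA 2 * (bA 3 * (bA 4 * (bA 5 * bA 6)))))) from by
      rw [dA]; group]
  rw [pshL sh0, pshL sh1, pshL sh2, pshL sh3, pshL sh4, pshL sh5]

lemma powrel : dA ^ (8:ℕ) = (dA * bA 0) ^ (7:ℕ) := by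
  have u1 : (bA 1 * dA) ^ (1:ℕ) = bA 1 * dA ^ (1:ℕ) := by simp
  have u2 : (bA 1 * dA) ^ (2:ℕ) = bA 1 * bA 2 * dA ^ (2:ℕ) := by
    calc (bA 1 * dA) ^ (2:ℕ) = bA 1 * (dA ^ (1:ℕ) * bA 1) * dA := by
          rw [pow_succ, u1]; group
    _ = bA 1 * (bA 2 * dA ^ (1:ℕ)) * dA := by rw [qw1]
    _ = bA 1 * bA 2 * dA ^ (2:ℕ) := by rw [pow_succ]; group
  have u3 : (bA 1 * dA) ^ (3:ℕ) = bA 1 * bA 2 * bA 3 * dA ^ (3:ℕ) := by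
    calc (bA 1 * dA) ^ (3:ℕ) = bA 1 * bA 2 * (dA ^ (2:ℕ) * bA 1) * dA := by
          rw [pow_succ, u2]; group
    _ = bA 1 * bA 2 * (bA 3 * dA ^ (2:ℕ)) * dA := by rw [qw2]
    _ = bA 1 * bA 2 * bA 3 * dA ^ (3:ℕ) := by rw [pow_succ]; group
  have u4 : (bA 1 * dA) ^ (4:ℕ) = bA 1 * bA 2 * bA 3 * bA 4 * dA ^ (4:ℕ) := by
    calc (bA 1 * dA) ^ (4:ℕ) = bA 1 * bA 2 * bA 3 * (dA ^ (3:ℕ) * bA 1) * dA := by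
          rw [pow_succ, u3]; group
    _ = bA 1 * bA 2 * bA 3 * (bA 4 * dA ^ (3:ℕ)) * dA := by rw [qw3]
    _ = bA 1 * bA 2 * bA 3 * bA 4 * dA ^ (4:ℕ) := by rw [pow_succ]; group
  have u5 : (bA 1 * dA) ^ (5:ℕ) = bA 1 * bA 2 * bA 3 * bA 4 * bA 5 * dA ^ (5:ℕ) := by
    calc (bA 1 * dA) ^ (5:ℕ)
        = bA 1 * bA 2 * bA 3 * bA 4 * (dA ^ (4:ℕ) * bA 1) * dA := by
          rw [pow_succ, u4]; group
    _ = bA 1 * bA 2 * bA 3 * bA 4 * (bA 5 * dA ^ (4:ℕ)) * dA := by rw [qw4]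
    _ = bA 1 * bA 2 * bA 3 * bA 4 * bA 5 * dA ^ (5:ℕ) := by rw [pow_succ]; group
  have u6 : (bA 1 * dA) ^ (6:ℕ)
      = bA 1 * bA 2 * bA 3 * bA 4 * bA 5 * bA 6 * dA ^ (6:ℕ) := by
    calc (bA 1 * dA) ^ (6:ℕ)
        = bA 1 * bA 2 * bA 3 * bA 4 * bA 5 * (dA ^ (5:ℕ) * bA 1) * dA := by
          rw [pow_succ, u5]; group
    _ = bA 1 * bA 2 * bA 3 * bA 4 * bA 5 * (bA 6 * dA ^ (5:ℕ)) * dA := by rw [qw5]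
    _ = bA 1 * bA 2 * bA 3 * bA 4 * bA 5 * bA 6 * dA ^ (6:ℕ) := by rw [pow_succ]; group
  have u7 : (bA 1 * dA) ^ (7:ℕ)
      = bA 1 * (bA 2 * (bA 3 * (bA 4 * (bA 5 * (bA 6 * (dA * bA 6)))))) * dA ^ (6:ℕ) := by
    calc (bA 1 * dA) ^ (7:ℕ)
        = bA 1 * bA 2 * bA 3 * bA 4 * bA 5 * bA 6 * (dA * (dA ^ (5:ℕ) * bA 1)) * dA := by
          rw [pow_succ, u6]; group
    _ = bA 1 * bA 2 * bA 3 * bA 4 * bA 5 * bA 6 * (dA * (bA 6 * dA ^ (5:ℕ))) * dA := by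
          rw [qw5]
    _ = bA 1 * (bA 2 * (bA 3 * (bA 4 * (bA 5 * (bA 6 * (dA * bA 6)))))) * dA ^ (6:ℕ) := by
          group
  have : (dA * bA 0) ^ (7:ℕ) = (bA 1 * dA) ^ (7:ℕ) := by rw [sh0]
  rw [this, u7, ← dd]
  group

end E8X

namespace E8X

open E8Gen

-- conjugation identities in ArtinE8
lemma cw0 : dA ^ (0:ℕ) * bA 0 * (dA ^ (0:ℕ))⁻¹ = bA 0 := by simp
lemma cw1 : dA ^ (1:ℕ) * bA 0 * (dA ^ (1:ℕ))⁻¹ = bA 1 := by rw [pw1]; group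
lemma cw2 : dA ^ (2:ℕ) * bA 0 * (dA ^ (2:ℕ))⁻¹ = bA 2 := by rw [pw2]; group
lemma cw3 : dA ^ (3:ℕ) * bA 0 * (dA ^ (3:ℕ))⁻¹ = bA 3 := by rw [pw3]; group
lemma cw4 : dA ^ (4:ℕ) * bA 0 * (dA ^ (4:ℕ))⁻¹ = bA 4 := by rw [pw4]; group
lemma cw5 : dA ^ (5:ℕ) * bA 0 * (dA ^ (5:ℕ))⁻¹ = bA 5 := by rw [pw5]; group
lemma cw6 : dA ^ (6:ℕ) * bA 0 * (dA ^ (6:ℕ))⁻¹ = bA 6 := by rw [pw6]; group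

noncomputable def fT : ThreeGenE8 → ArtinE8 := fun g => match g with
  | .s1 => bA 0
  | .s => dA
  | .w => wA

lemma hT : ∀ r ∈ threeGenE8Rels, FreeGroup.lift fT r = 1 := by
  intro r hr
  rcases hr with ⟨i, hi, rfl⟩ | rfl | ⟨i, hi, rfl⟩ | rfl
  · simp only [_root_.map_mul, _root_.map_inv, _root_.map_pow, FreeGroup.lift_apply_of,
      mul_inv_eq_one, fT]
    rcases hi with rfl | rfl | rfl
    · have h2 : bA 0 * (dA ^ (2:ℕ) * bA 0 * (dA ^ (2:ℕ))⁻¹)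
          = (dA ^ (2:ℕ) * bA 0 * (dA ^ (2:ℕ))⁻¹) * bA 0 := by
        rw [cw2]; exact a_comm 0 2 (by decide)
      simpa only [mul_assoc] using h2
    · have h2 : bA 0 * (dA ^ (3:ℕ) * bA 0 * (dA ^ (3:ℕ))⁻¹)
          = (dA ^ (3:ℕ) * bA 0 * (dA ^ (3:ℕ))⁻¹) * bA 0 := by
        rw [cw3]; exact a_comm 0 3 (by decide)
      simpa only [mul_assoc] using h2
    · have h2 : bA 0 * (dA ^ (4:ℕ) * bA 0 * (dA ^ (4:ℕ))⁻¹)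
          = (dA ^ (4:ℕ) * bA 0 * (dA ^ (4:ℕ))⁻¹) * bA 0 := by
        rw [cw4]; exact a_comm 0 4 (by decide)
      simpa only [mul_assoc] using h2
  · simp only [_root_.map_mul, _root_.map_inv, _root_.map_pow, FreeGroup.lift_apply_of,
      mul_inv_eq_one, fT]
    exact powrel
  · simp only [_root_.map_mul, _root_.map_inv, _root_.map_pow, FreeGroup.lift_apply_of,
      mul_inv_eq_one, fT]
    have key : ∀ k : Fin 7, k.val ≠ 2 →
        ∀ n : ℕ, dA ^ n * bA 0 * (dA ^ n)⁻¹ = bA k →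
        wA * (dA ^ n * bA 0 * (dA ^ n)⁻¹) = (dA ^ n * bA 0 * (dA ^ n)⁻¹) * wA := by
      intro k hk n hn
      rw [hn]; exact a_w k hk
    rcases hi with rfl | rfl | rfl | rfl | rfl | rfl
    · simpa only [mul_assoc] using key 0 (by decide) 0 cw0
    · simpa only [mul_assoc] using key 1 (by decide) 1 cw1
    · simpa only [mul_assoc] using key 3 (by decide) 3 cw3
    · simpa only [mul_assoc] using key 4 (by decide) 4 cw4
    · simpa only [mul_assoc] using key 5 (by decide) 5 cw5
    · simpa only [mul_assoc] using key 6 (by decide) 6 cw6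
  · simp only [_root_.map_mul, _root_.map_inv, _root_.map_pow, FreeGroup.lift_apply_of,
      mul_inv_eq_one, fT]
    have h2 : wA * (dA ^ (2:ℕ) * bA 0 * (dA ^ (2:ℕ))⁻¹) * wA
        = (dA ^ (2:ℕ) * bA 0 * (dA ^ (2:ℕ))⁻¹) * wA * (dA ^ (2:ℕ) * bA 0 * (dA ^ (2:ℕ))⁻¹) := by
      rw [cw2]; exact a_wb
    simpa only [mul_assoc] using h2

noncomputable def gT : G3 →* ArtinE8 := PresentedGroup.toGroup hT

lemma gT_s : gT (PresentedGroup.of ThreeGenE8.s) = dA := PresentedGroup.toGroup.of hT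
lemma gT_s1 : gT (PresentedGroup.of ThreeGenE8.s1) = bA 0 := PresentedGroup.toGroup.of hT
lemma gT_w : gT (PresentedGroup.of ThreeGenE8.w) = wA := PresentedGroup.toGroup.of hT

lemma gE_sig (i : Fin 7) : gE (bA i) = AG i.val := PresentedGroup.toGroup.of hE
lemma gE_w : gE wA = wG := PresentedGroup.toGroup.of hE

-- product identity for indices 0..6 in G3
lemma t_A (k : ℤ) : tG * AG k = AG (k + 1) * tG := by
  have := tpow_A 1 k; rwa [zpow_one] at this

lemma prodA0 : AG 0 * (AG 1 * (AG 2 * (AG 3 * (AG 4 * (AG 5 * AG 6))))) = tG := by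
  have h : tG * (AG 0 * (AG 1 * (AG 2 * (AG 3 * (AG 4 * (AG 5 * AG 6)))))) = tG * tG := by
    rw [pshL (t_A 0), pshL (t_A 1), pshL (t_A 2), pshL (t_A 3), pshL (t_A 4), pshL (t_A 5),
      t_A 6]
    norm_num
    rw [← prodA]; group
  exact mul_left_cancel h

lemma gT_AG (k : ℤ) : gT (AG k) = dA ^ k * bA 0 * (dA ^ k)⁻¹ := by
  simp only [AG, _root_.map_mul, _root_.map_inv, map_zpow, gT_s, gT_s1, tG, sG]

lemma comp1 : gE.comp gT = MonoidHom.id G3 := by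
  ext x
  cases x with
  | s1 =>
    simp only [MonoidHom.comp_apply, MonoidHom.id_apply, gT_s1, gE_sig]
    show AG ((0 : Fin 7).val) = PresentedGroup.of ThreeGenE8.s1
    rw [show (((0 : Fin 7).val : ℤ)) = 0 by norm_num, A_zero]
    rfl
  | w => simp only [MonoidHom.comp_apply, MonoidHom.id_apply, gT_w, gE_w]; rfl
  | s =>
    simp only [MonoidHom.comp_apply, MonoidHom.id_apply, gT_s]
    show gE dA = PresentedGroup.of ThreeGenE8.s
    rw [show dA = bA 0 * (bA 1 * (bA 2 * (bA 3 * (bA 4 * (bA 5 * bA 6))))) by rw [dA]; group]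
    simp only [_root_.map_mul, gE_sig]
    rw [show (((0 : Fin 7).val : ℤ)) = 0 by norm_num,
      show (((1 : Fin 7).val : ℤ)) = 1 by norm_num,
      show (((2 : Fin 7).val : ℤ)) = 2 by decide,
      show (((3 : Fin 7).val : ℤ)) = 3 by decide,
      show (((4 : Fin 7).val : ℤ)) = 4 by decide,
      show (((5 : Fin 7).val : ℤ)) = 5 by decide,
      show (((6 : Fin 7).val : ℤ)) = 6 by decide]
    exact prodA0

lemma comp2 : gT.comp gE = MonoidHom.id ArtinE8 := by
  refine PresentedGroup.ext (rels := typeE8Rels) fun x => ?_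
  cases x with
  | om => show gT (gE wA) = wA
          rw [gE_w]
          exact gT_w
  | sig i =>
    show gT (gE (bA i)) = bA i
    rw [gE_sig, gT_AG]
    fin_cases i
    · show dA ^ (((0:ℕ)):ℤ) * bA 0 * (dA ^ (((0:ℕ)):ℤ))⁻¹ = bA 0
      rw [zpow_natCast]; exact cw0
    · show dA ^ (((1:ℕ)):ℤ) * bA 0 * (dA ^ (((1:ℕ)):ℤ))⁻¹ = bA 1
      rw [zpow_natCast]; exact cw1
    · show dA ^ (((2:ℕ)):ℤ) * bA 0 * (dA ^ (((2:ℕ)):ℤ))⁻¹ = bA 2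
      rw [zpow_natCast]; exact cw2
    · show dA ^ (((3:ℕ)):ℤ) * bA 0 * (dA ^ (((3:ℕ)):ℤ))⁻¹ = bA 3
      rw [zpow_natCast]; exact cw3
    · show dA ^ (((4:ℕ)):ℤ) * bA 0 * (dA ^ (((4:ℕ)):ℤ))⁻¹ = bA 4
      rw [zpow_natCast]; exact cw4
    · show dA ^ (((5:ℕ)):ℤ) * bA 0 * (dA ^ (((5:ℕ)):ℤ))⁻¹ = bA 5
      rw [zpow_natCast]; exact cw5
    · show dA ^ (((6:ℕ)):ℤ) * bA 0 * (dA ^ (((6:ℕ)):ℤ))⁻¹ = bA 6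
      rw [zpow_natCast]; exact cw6

noncomputable def e8equiv : G3 ≃* ArtinE8 := MonoidHom.toMulEquiv gT gE comp1 comp2

end E8X

end

theorem artinE8_three_generator_presentation :
    ∃ e : PresentedGroup threeGenE8Rels ≃* ArtinE8,
      e (PresentedGroup.of ThreeGenE8.s1) = PresentedGroup.of (E8Gen.sig 0) ∧
      e (PresentedGroup.of ThreeGenE8.w) = PresentedGroup.of E8Gen.om ∧
      e (PresentedGroup.of ThreeGenE8.s) =
        (List.ofFn (fun i : Fin 7 =>
          PresentedGroup.of (rels := typeE8Rels) (E8Gen.sig i))).prod := by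
  have happ : ∀ y, E8X.e8equiv y = E8X.gT y := fun _ => rfl
  refine ⟨E8X.e8equiv, ?_, ?_, ?_⟩
  · rw [happ]
    exact E8X.gT_s1
  · rw [happ]
    exact E8X.gT_w
  · rw [happ, E8X.gT_s]
    show E8X.dA = _
    rw [show (List.ofFn (fun i : Fin 7 =>
          PresentedGroup.of (rels := typeE8Rels) (E8Gen.sig i)))
        = [PresentedGroup.of (E8Gen.sig 0), PresentedGroup.of (E8Gen.sig 1),
           PresentedGroup.of (E8Gen.sig 2), PresentedGroup.of (E8Gen.sig 3),
           PresentedGroup.of (E8Gen.sig 4), PresentedGroup.of (E8Gen.sig 5),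
           PresentedGroup.of (E8Gen.sig 6)] from rfl]
    rw [E8X.dA]
    simp only [List.prod_cons, List.prod_nil, E8X.bA, mul_one, mul_assoc]
    exact (by intros; group : ∀ a b c d e f g : PresentedGroup typeE8Rels,
      a * b * c * d * e * f * g = a * (b * (c * (d * (e * (f * g)))))) _ _ _ _ _ _ _
end

section
/- For every n ≥ 3, the braid-permutation group BPₙ is isomorphic to the group defined by the presentation with three generators σ₁, σ, ξ₁ and relations: σ₁σⁱσ₁σ⁻ⁱ = σⁱσ₁σ⁻ⁱσ₁ for 2 ≤ i ≤ n/2; σⁿ = (σσ₁)ⁿ⁻¹; ξ₁σⁱσ₁σ⁻ⁱ = σⁱσ₁σ⁻ⁱξ₁ for i = 2, …, n−2; ξ₁σⁱξ₁σ⁻ⁱ = σⁱξ₁σ⁻ⁱξ₁ for i = 2, …, n−2; ξ₁σξ₁σ⁻¹σ₁ = σσ₁σ⁻¹ξ₁σξ₁σ⁻¹; ξ₁σξ₁σ⁻¹ξ₁ = σξ₁σ⁻¹ξ₁σξ₁σ⁻¹; and ξ₁² = 1; an isomorphism is given by σ₁ ↦ σ₁, ξ₁ ↦ ξ₁, and σ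 ↦ σ₁σ₂⋯σₙ₋₁. -/
/-!
STATEMENT 7: For every n ≥ 3, the braid-permutation group BPₙ is isomorphic
to the group presented by three generators σ₁, σ, ξ₁ with relations
σ₁σⁱσ₁σ⁻ⁱ = σⁱσ₁σ⁻ⁱσ₁ (2 ≤ i ≤ n/2), σⁿ = (σσ₁)ⁿ⁻¹,
ξ₁σⁱσ₁σ⁻ⁱ = σⁱσ₁σ⁻ⁱξ₁ (i = 2, …, n−2), ξ₁σⁱξ₁σ⁻ⁱ = σⁱξ₁σ⁻ⁱξ₁
(i = 2, …, n−2), ξ₁σξ₁σ⁻¹σ₁ = σσ₁σ⁻¹ξ₁σξ₁σ⁻¹,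
ξ₁σξ₁σ⁻¹ξ₁ = σξ₁σ⁻¹ξ₁σξ₁σ⁻¹ and ξ₁² = 1, via σ₁ ↦ σ₁, ξ₁ ↦ ξ₁,
σ ↦ σ₁σ₂⋯σₙ₋₁.
-/

open FreeGroup

/-- Generators of the braid-permutation group `BPₙ`: `σ₁, …, σ_{n-1}` and
`ξ₁, …, ξ_{n-1}` (index `i : Fin (n-1)` stands for subscript `i+1`). -/
inductive BPGen (n : ℕ) : Type
  | sig (i : Fin (n - 1)) : BPGen n
  | xi (i : Fin (n - 1)) : BPGen n

open BPGen in
/-- The Fenn–Rimányi–Rourke relations of the braid-permutation group `BPₙ`. -/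
def bpRels (n : ℕ) : Set (FreeGroup (BPGen n)) :=
  {r | (∃ i j : Fin (n - 1), (i.val + 1 < j.val ∨ j.val + 1 < i.val) ∧
          r = of (sig i) * of (sig j) * (of (sig j) * of (sig i))⁻¹) ∨
       (∃ i j : Fin (n - 1), j.val = i.val + 1 ∧
          r = of (sig i) * of (sig j) * of (sig i) *
              (of (sig j) * of (sig i) * of (sig j))⁻¹) ∨
       (∃ i : Fin (n - 1), r = (of (xi i)) ^ 2) ∨
       (∃ i j : Fin (n - 1), (i.val + 1 < j.val ∨ j.val + 1 < i.val) ∧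
          r = of (xi i) * of (xi j) * (of (xi j) * of (xi i))⁻¹) ∨
       (∃ i j : Fin (n - 1), j.val = i.val + 1 ∧
          r = of (xi i) * of (xi j) * of (xi i) *
              (of (xi j) * of (xi i) * of (xi j))⁻¹) ∨
       (∃ i j : Fin (n - 1), (i.val + 1 < j.val ∨ j.val + 1 < i.val) ∧
          r = of (sig i) * of (xi j) * (of (xi j) * of (sig i))⁻¹) ∨
       (∃ i j : Fin (n - 1), j.val = i.val + 1 ∧
          r = of (xi i) * of (xi j) * of (sig i) *
              (of (sig j) * of (xi i) * of (xi j))⁻¹) ∨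
       (∃ i j : Fin (n - 1), j.val = i.val + 1 ∧
          r = of (sig i) * of (sig j) * of (xi i) *
              (of (xi j) * of (sig i) * of (sig j))⁻¹)}

/-- The braid-permutation group `BPₙ`. -/
def BraidPermGroup (n : ℕ) : Type := PresentedGroup (bpRels n)

noncomputable instance (n : ℕ) : Group (BraidPermGroup n) :=
  inferInstanceAs (Group (PresentedGroup (bpRels n)))

/-- The three generators σ₁, σ and ξ₁. -/
inductive ThreeGenBP : Type
  | s1 : ThreeGenBP
  | s : ThreeGenBP
  | x1 : ThreeGenBP

open ThreeGenBP in
/-- The relations of the three-generator presentation of `BPₙ`. -/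
def threeGenBPRels (n : ℕ) : Set (FreeGroup ThreeGenBP) :=
  {r | (∃ i : ℕ, 2 ≤ i ∧ 2 * i ≤ n ∧
          r = (of s1 * (of s) ^ i * of s1 * ((of s) ^ i)⁻¹) *
              ((of s) ^ i * of s1 * ((of s) ^ i)⁻¹ * of s1)⁻¹) ∨
       r = (of s) ^ n * (((of s) * of s1) ^ (n - 1))⁻¹ ∨
       (∃ i : ℕ, 2 ≤ i ∧ i ≤ n - 2 ∧
          r = (of x1 * (of s) ^ i * of s1 * ((of s) ^ i)⁻¹) *
              ((of s) ^ i * of s1 * ((of s) ^ i)⁻¹ * of x1)⁻¹) ∨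
       (∃ i : ℕ, 2 ≤ i ∧ i ≤ n - 2 ∧
          r = (of x1 * (of s) ^ i * of x1 * ((of s) ^ i)⁻¹) *
              ((of s) ^ i * of x1 * ((of s) ^ i)⁻¹ * of x1)⁻¹) ∨
       r = (of x1 * of s * of x1 * (of s)⁻¹ * of s1) *
           (of s * of s1 * (of s)⁻¹ * of x1 * of s * of x1 * (of s)⁻¹)⁻¹ ∨
       r = (of x1 * of s * of x1 * (of s)⁻¹ * of x1) *
           (of s * of x1 * (of s)⁻¹ * of x1 * of s * of x1 * (of s)⁻¹)⁻¹ ∨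
       r = (of x1) ^ 2}

namespace BP7
open ThreeGenBP BPGen PresentedGroup

variable (n : ℕ)

abbrev H (n : ℕ) := PresentedGroup (threeGenBPRels n)

def aa : H n := .of s1
def xx : H n := .of x1
def tt : H n := .of s

def S (k : ℤ) : H n := tt n ^ k * aa n * tt n ^ (-k)
def X (k : ℤ) : H n := tt n ^ k * xx n * tt n ^ (-k)

lemma relH {r : FreeGroup ThreeGenBP} (hr : r ∈ threeGenBPRels n) :
    PresentedGroup.mk (threeGenBPRels n) r = 1 :=
  (QuotientGroup.eq_one_iff r).mpr (Subgroup.subset_normalClosure hr)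

@[simp] lemma mk_s1 : PresentedGroup.mk (threeGenBPRels n) (FreeGroup.of s1) = aa n := rfl
@[simp] lemma mk_x1 : PresentedGroup.mk (threeGenBPRels n) (FreeGroup.of x1) = xx n := rfl
@[simp] lemma mk_s : PresentedGroup.mk (threeGenBPRels n) (FreeGroup.of s) = tt n := rfl

@[simp] lemma S_zero : S n 0 = aa n := by simp [S]
@[simp] lemma X_zero : X n 0 = xx n := by simp [X]

lemma R1 (i : ℕ) (h2 : 2 ≤ i) (hi : 2 * i ≤ n) : Commute (aa n) (S n i) := by
  have E := relH n (Or.inl ⟨i, h2, hi, rfl⟩)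
  simp only [_root_.map_mul, _root_.map_pow, _root_.map_inv, mk_s1, mk_s, mul_inv_eq_one] at E
  have : S n i = tt n ^ (i:ℕ) * aa n * (tt n ^ (i:ℕ))⁻¹ := by
    simp [S, zpow_natCast]
  rw [Commute, SemiconjBy, this]
  simp only [mul_assoc] at E ⊢
  exact E

lemma R2 : tt n ^ n = (tt n * aa n) ^ (n - 1) := by
  have E := relH n (Or.inr (Or.inl rfl))
  simp only [_root_.map_mul, _root_.map_pow, _root_.map_inv, mk_s1, mk_s, mul_inv_eq_one] at E
  exact E

lemma R3 (i : ℕ) (h2 : 2 ≤ i) (hi : i ≤ n - 2) : Commute (xx n) (S n i) := by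
  have E := relH n (Or.inr (Or.inr (Or.inl ⟨i, h2, hi, rfl⟩)))
  simp only [_root_.map_mul, _root_.map_pow, _root_.map_inv, mk_s1, mk_s, mk_x1, mul_inv_eq_one] at E
  have : S n i = tt n ^ (i:ℕ) * aa n * (tt n ^ (i:ℕ))⁻¹ := by
    simp [S, zpow_natCast]
  rw [Commute, SemiconjBy, this]
  simp only [mul_assoc] at E ⊢
  exact E

lemma R4 (i : ℕ) (h2 : 2 ≤ i) (hi : i ≤ n - 2) : Commute (xx n) (X n i) := by
  have E := relH n (Or.inr (Or.inr (Or.inr (Or.inl ⟨i, h2, hi, rfl⟩))))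
  simp only [_root_.map_mul, _root_.map_pow, _root_.map_inv, mk_s, mk_x1, mul_inv_eq_one] at E
  have : X n i = tt n ^ (i:ℕ) * xx n * (tt n ^ (i:ℕ))⁻¹ := by
    simp [X, zpow_natCast]
  rw [Commute, SemiconjBy, this]
  simp only [mul_assoc] at E ⊢
  exact E

lemma R5 : X n 0 * X n 1 * S n 0 = S n 1 * X n 0 * X n 1 := by
  have E := relH n (Or.inr (Or.inr (Or.inr (Or.inr (Or.inl rfl)))))
  simp only [_root_.map_mul, _root_.map_inv, mk_s1, mk_s, mk_x1, mul_inv_eq_one] at E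
  simp only [S, X, zpow_one, zpow_neg, zpow_zero, one_mul, mul_one]
  simp only [mul_assoc] at E ⊢
  exact E

lemma R6 : X n 0 * X n 1 * X n 0 = X n 1 * X n 0 * X n 1 := by
  have E := relH n (Or.inr (Or.inr (Or.inr (Or.inr (Or.inr (Or.inl rfl))))))
  simp only [_root_.map_mul, _root_.map_inv, mk_s, mk_x1, mul_inv_eq_one] at E
  simp only [X, zpow_one, zpow_neg, zpow_zero, one_mul, mul_one]
  simp only [mul_assoc] at E ⊢
  exact E

lemma R7 : xx n ^ 2 = 1 := by
  have E := relH n (Or.inr (Or.inr (Or.inr (Or.inr (Or.inr (Or.inr rfl))))))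
  simpa using E

end BP7
namespace BP7
open ThreeGenBP BPGen PresentedGroup

variable (n : ℕ)

/-- Conjugation by `tt^v` as a monoid hom. -/
def κ (v : ℤ) : H n →* H n := (MulAut.conj (tt n ^ v)).toMonoidHom

lemma κ_apply (v : ℤ) (g : H n) : κ n v g = tt n ^ v * g * (tt n ^ v)⁻¹ := rfl

@[simp] lemma κS (v k : ℤ) : κ n v (S n k) = S n (k + v) := by
  simp only [κ_apply, S]
  group

@[simp] lemma κX (v k : ℤ) : κ n v (X n k) = X n (k + v) := by
  simp only [κ_apply, X]
  group

@[simp] lemma κtt (v : ℤ) : κ n v (tt n) = tt n := by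
  simp only [κ_apply]
  group

/-- `tt^n` commutes with `aa`. -/
lemma tn_comm (hn : 3 ≤ n) : Commute (aa n) (tt n ^ n) := by
  have hmul : ∀ m : ℕ, aa n * (tt n * aa n) ^ m = (aa n * tt n) ^ m * aa n := by
    intro m
    induction m with
    | zero => simp
    | succ m ih =>
        rw [pow_succ, ← mul_assoc, ih, pow_succ]
        group
  have hmul2 : tt n * (aa n * tt n) ^ (n-1) = (tt n * aa n) ^ (n-1) * tt n := by
    clear hmul
    induction (n-1) with
    | zero => simp
    | succ m ih =>
        rw [pow_succ, ← mul_assoc, ih, pow_succ]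
        group
  have h3 : (aa n * tt n) ^ (n-1) = tt n ^ n := by
    have h4 : tt n * (aa n * tt n) ^ (n-1) = tt n * tt n ^ n := by
      rw [hmul2, ← R2 n]
      group
    exact mul_left_cancel h4
  rw [Commute, SemiconjBy, R2 n, hmul, h3, R2 n]

lemma S_add (hn : 3 ≤ n) (k : ℤ) : S n (k + n) = S n k := by
  have h := tn_comm n hn
  simp only [S, zpow_add, zpow_natCast, neg_add, zpow_neg]
  have : tt n ^ n * aa n = aa n * tt n ^ n := (h.symm).eq
  calc tt n ^ k * (tt n ^ n) * aa n * ((tt n ^ k)⁻¹ * (tt n ^ n)⁻¹)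
        = tt n ^ k * (tt n ^ n * aa n) * (tt n ^ k)⁻¹ * (tt n ^ n)⁻¹ := by group
    _ = tt n ^ k * (aa n * tt n ^ n) * (tt n ^ k)⁻¹ * (tt n ^ n)⁻¹ := by rw [this]
    _ = tt n ^ k * aa n * (tt n ^ n * (tt n ^ k)⁻¹ * (tt n ^ n)⁻¹) := by group
    _ = tt n ^ k * aa n * (tt n ^ k)⁻¹ := by group

lemma S_sub (hn : 3 ≤ n) (k : ℤ) : S n (k - n) = S n k := by
  have := S_add n hn (k - n); simpa using this.symm

end BP7
namespace BP7
open ThreeGenBP BPGen PresentedGroup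

variable (n : ℕ)

def Sprod (lo : ℤ) (len : ℕ) : H n :=
  ((List.range len).map (fun j : ℕ => S n (lo + (j:ℤ)))).prod

@[simp] lemma Sprod_zero (lo : ℤ) : Sprod n lo 0 = 1 := rfl

lemma Sprod_succ (lo : ℤ) (m : ℕ) :
    Sprod n lo (m + 1) = Sprod n lo m * S n (lo + m) := by
  rw [Sprod, List.range_succ]
  simp [Sprod]

lemma Sprod_succ' (lo : ℤ) (m : ℕ) :
    Sprod n lo (m + 1) = S n lo * Sprod n (lo + 1) m := by
  rw [Sprod, List.range_succ_eq_map]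
  simp only [List.map_cons, List.map_map, List.prod_cons, Nat.cast_zero, add_zero]
  congr 2
  apply List.map_congr_left
  intro j _
  simp only [Function.comp_apply, Nat.succ_eq_add_one]
  congr 1
  push_cast
  ring

lemma κ_Sprod (v lo : ℤ) (len : ℕ) :
    κ n v (Sprod n lo len) = Sprod n (lo + v) len := by
  rw [Sprod, map_list_prod, List.map_map, Sprod]
  congr 1
  apply List.map_congr_left
  intro j _
  simp only [Function.comp_apply, κS]
  congr 1
  ring

lemma Sprod_sub (hn : 3 ≤ n) (lo : ℤ) (len : ℕ) :
    Sprod n (lo - n) len = Sprod n lo len := by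
  rw [Sprod, Sprod]
  congr 1
  apply List.map_congr_left
  intro j _
  have : lo - ↑n + ↑j = (lo + j) - n := by ring
  rw [this, S_sub n hn]

lemma commute_Sprod (z : H n) (lo : ℤ) (len : ℕ)
    (h : ∀ j : ℕ, j < len → Commute z (S n (lo + j))) :
    Commute z (Sprod n lo len) := by
  apply Commute.list_prod_right
  intro y hy
  rcases List.mem_map.mp hy with ⟨j, hj, rfl⟩
  exact h j (List.mem_range.mp hj)


lemma S_nat_n (hn : 3 ≤ n) : S n (n:ℤ) = S n 0 := by
  have h := S_sub n hn (n:ℤ)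
  rw [sub_self] at h
  exact h.symm

lemma S_neg_one (hn : 3 ≤ n) : S n (-1) = S n ((n:ℤ) - 1) := by
  have h := S_sub n hn ((n:ℤ) - 1)
  have hc : (n:ℤ) - 1 - n = -1 := by ring
  rw [hc] at h
  exact h

@[simp] lemma κaa (v : ℤ) : κ n v (aa n) = S n v := by
  have h := κS n v 0
  rw [zero_add] at h
  rw [← h, S_zero]

@[simp] lemma κxx (v : ℤ) : κ n v (xx n) = X n v := by
  have h := κX n v 0
  rw [zero_add] at h
  rw [← h, X_zero]

lemma prodP : ∀ m : ℕ, (tt n * aa n) ^ m = tt n ^ m * Sprod n (1 - m) m := by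
  intro m
  induction m with
  | zero => simp
  | succ m ih =>
      rw [pow_succ, ih]
      have hP : Sprod n (1 - m) m * tt n = tt n * Sprod n (-m) m := by
        have := κ_Sprod n (-1) (1 - m) m
        rw [κ_apply] at this
        have h2 : (1 - (m:ℤ)) + (-1) = -m := by ring
        rw [h2] at this
        calc Sprod n (1-m) m * tt n
            = tt n * (tt n ^ (-1:ℤ) * Sprod n (1-m) m * (tt n ^ (-1:ℤ))⁻¹) := by group
          _ = tt n * Sprod n (-m) m := by rw [this]
      have hc : (1 - ((m:ℤ) + 1)) = -m := by ring
      push_cast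
      rw [hc]
      calc tt n ^ m * Sprod n (1 - m) m * (tt n * aa n)
          = tt n ^ m * (Sprod n (1 - m) m * tt n) * aa n := by group
        _ = tt n ^ m * (tt n * Sprod n (-m) m) * aa n := by rw [hP]
        _ = tt n ^ (m+1) * (Sprod n (-m) m * S n ((-m) + m)) := by
              have : ((-m:ℤ) + m) = 0 := by ring
              rw [this, S_zero, pow_succ]
              group
        _ = tt n ^ (m+1) * Sprod n (-m) (m+1) := by rw [← Sprod_succ]

lemma fullT (hn : 3 ≤ n) : tt n = Sprod n 2 (n - 1) := by
  have h := R2 n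
  rw [prodP n (n-1)] at h
  have hpow : tt n ^ n = tt n ^ (n-1) * tt n := by
    rw [← pow_succ]
    congr 1
    omega
  rw [hpow] at h
  have h2 := mul_left_cancel h
  rw [h2]
  have hc : (1 - ((n-1:ℕ):ℤ)) = 2 - n := by omega
  rw [hc, Sprod_sub n hn]

lemma tA (hn : 3 ≤ n) : tt n = Sprod n 2 (n - 2) * S n 0 := by
  have h := fullT n hn
  have h2 : n - 1 = (n - 2) + 1 := by omega
  rw [h2, Sprod_succ] at h
  have hc : (2 + ((n-2:ℕ):ℤ)) = 0 + n := by omega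
  rw [hc, zero_add] at h
  rwa [S_nat_n n hn] at h

lemma tB (hn : 3 ≤ n) : tt n = S n 1 * Sprod n 2 (n - 2) := by
  have h := congrArg (κ n (-1)) (tA n hn)
  rw [κtt, _root_.map_mul, κ_Sprod, κS] at h
  have h1 : (2:ℤ) + (-1) = 1 := by ring
  have h2 : (0:ℤ) + (-1) = -1 := by ring
  rw [h1, h2] at h
  -- h : tt = Sprod 1 (n-2) * S (-1)
  have h3 : n - 2 = (n - 3) + 1 := by omega
  have h4 : Sprod n 1 (n-2) = S n 1 * Sprod n 2 (n-3) := by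
    rw [h3, Sprod_succ']; norm_num
  have h5 := S_neg_one n hn
  have h6 : Sprod n 2 (n-2) = Sprod n 2 (n-3) * S n ((n:ℤ) - 1) := by
    rw [h3, Sprod_succ]
    congr 1
    congr 1
    omega
  rw [h4, h5] at h
  rw [h6, ← mul_assoc]
  exact h.trans (by group)

lemma tC (hn : 3 ≤ n) : tt n = Sprod n 3 (n - 2) * S n 1 := by
  have h := congrArg (κ n 1) (tA n hn)
  rw [κtt, _root_.map_mul, κ_Sprod, κS] at h
  norm_num at h
  exact h

lemma Sprod3_eq (hn : 3 ≤ n) : Sprod n 3 (n - 2) = Sprod n 3 (n - 3) * S n 0 := by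
  have h3 : n - 2 = (n - 3) + 1 := by omega
  rw [h3, Sprod_succ]
  have hc : (3 + ((n-3:ℕ):ℤ)) = 0 + n := by omega
  rw [hc, zero_add]
  congr 1
  have := S_sub n hn (n:ℤ); simpa using this.symm

lemma commA (hn : 3 ≤ n) (m : ℤ) (h2 : 2 ≤ m) (hm : m ≤ (n:ℤ) - 2) :
    Commute (aa n) (S n m) := by
  by_cases hc : 2 * m ≤ (n:ℤ)
  · have h := R1 n m.toNat (by omega) (by omega)
    have hcast : ((m.toNat : ℕ) : ℤ) = m := by omega
    rwa [hcast] at h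
  · have h := R1 n (n - m).toNat (by omega) (by omega)
    have hcast : (((n - m).toNat : ℕ) : ℤ) = (n:ℤ) - m := by omega
    rw [hcast] at h
    have h2 := h.map (κ n m)
    simp only [κS, κaa] at h2
    have e1 : ((n:ℤ) - m) + m = (n:ℤ) := by ring
    rw [e1, S_nat_n n hn, S_zero] at h2
    exact h2.symm

lemma commSS (hn : 3 ≤ n) (j k : ℤ) (h2 : 2 ≤ k - j) (hk : k - j ≤ (n:ℤ) - 2) :
    Commute (S n j) (S n k) := by
  have h := (commA n hn (k - j) h2 hk).map (κ n j)
  simp only [κS, κaa] at h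
  have e1 : (k - j) + j = k := by ring
  rw [e1] at h
  exact h

lemma commXS (hn : 3 ≤ n) (m : ℤ) (h2 : 2 ≤ m) (hm : m ≤ (n:ℤ) - 2) :
    Commute (xx n) (S n m) := by
  have h := R3 n m.toNat (by omega) (by omega)
  have hcast : ((m.toNat : ℕ) : ℤ) = m := by omega
  rwa [hcast] at h

lemma commXX (hn : 3 ≤ n) (m : ℤ) (h2 : 2 ≤ m) (hm : m ≤ (n:ℤ) - 2) :
    Commute (xx n) (X n m) := by
  have h := R4 n m.toNat (by omega) (by omega)
  have hcast : ((m.toNat : ℕ) : ℤ) = m := by omega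
  rwa [hcast] at h

lemma commXgSg (hn : 3 ≤ n) (j k : ℤ) (h2 : 2 ≤ k - j) (hk : k - j ≤ (n:ℤ) - 2) :
    Commute (X n j) (S n k) := by
  have h := (commXS n hn (k - j) h2 hk).map (κ n j)
  simp only [κS, κxx] at h
  have e1 : (k - j) + j = k := by ring
  rw [e1] at h
  exact h

lemma commXgXg (hn : 3 ≤ n) (j k : ℤ) (h2 : 2 ≤ k - j) (hk : k - j ≤ (n:ℤ) - 2) :
    Commute (X n j) (X n k) := by
  have h := (commXX n hn (k - j) h2 hk).map (κ n j)
  simp only [κX, κxx] at h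
  have e1 : (k - j) + j = k := by ring
  rw [e1] at h
  exact h

lemma commAX (hn : 3 ≤ n) (m : ℤ) (h2 : 2 ≤ m) (hm : m ≤ (n:ℤ) - 2) :
    Commute (aa n) (X n m) := by
  have h := (commXS n hn ((n:ℤ) - m) (by omega) (by omega)).map (κ n m)
  simp only [κS, κxx] at h
  have e1 : ((n:ℤ) - m) + m = (n:ℤ) := by ring
  rw [e1, S_nat_n n hn, S_zero] at h
  exact h.symm

lemma commSgXg (hn : 3 ≤ n) (j k : ℤ) (h2 : 2 ≤ k - j) (hk : k - j ≤ (n:ℤ) - 2) :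
    Commute (S n j) (X n k) := by
  have h := (commAX n hn (k - j) h2 hk).map (κ n j)
  simp only [κX, κaa] at h
  have e1 : (k - j) + j = k := by ring
  rw [e1] at h
  exact h

lemma braid0 (hn : 3 ≤ n) : S n 1 * S n 0 * S n 1 = S n 0 * S n 1 * S n 0 := by
  set q := Sprod n 3 (n - 3) with hq
  set u := Sprod n 2 (n - 2) with hu
  have hA : u * S n 0 = q * S n 0 * S n 1 := by
    rw [← tA n hn, tC n hn, Sprod3_eq n hn]
  have hB : S n 1 * u = u * S n 0 := by
    rw [← tB n hn, ← tA n hn]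
  have hC : Commute (S n 1) q := by
    apply commute_Sprod
    intro j hj
    apply commSS n hn
    · omega
    · omega
  have hBA : S n 1 * u = q * S n 0 * S n 1 := hB.trans hA
  have e1 : u = (S n 1)⁻¹ * (q * S n 0 * S n 1) := by rw [← hBA]; group
  have e2 : u = q * S n 0 * S n 1 * (S n 0)⁻¹ := by rw [← hA]; group
  have e3 : (S n 1)⁻¹ * (q * S n 0 * S n 1) = q * S n 0 * S n 1 * (S n 0)⁻¹ :=
    e1.symm.trans e2
  have e4 : q * ((S n 1)⁻¹ * S n 0 * S n 1) = q * (S n 0 * S n 1 * (S n 0)⁻¹) := by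
    calc q * ((S n 1)⁻¹ * S n 0 * S n 1)
        = (q * (S n 1)⁻¹) * (S n 0 * S n 1) := by group
      _ = ((S n 1)⁻¹ * q) * (S n 0 * S n 1) := by rw [hC.inv_left.eq]
      _ = (S n 1)⁻¹ * (q * S n 0 * S n 1) := by group
      _ = q * S n 0 * S n 1 * (S n 0)⁻¹ := e3
      _ = q * (S n 0 * S n 1 * (S n 0)⁻¹) := by group
  have e5 := mul_left_cancel e4
  calc S n 1 * S n 0 * S n 1
      = S n 1 * (S n 0 * S n 1 * (S n 0)⁻¹) * S n 0 := by group
    _ = S n 1 * ((S n 1)⁻¹ * S n 0 * S n 1) * S n 0 := by rw [e5]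
    _ = S n 0 * S n 1 * S n 0 := by group

lemma braidS (hn : 3 ≤ n) (k : ℤ) :
    S n k * S n (k + 1) * S n k = S n (k + 1) * S n k * S n (k + 1) := by
  have h := congrArg (κ n k) (braid0 n hn).symm
  simp only [_root_.map_mul, κS, κaa] at h
  have e1 : (0:ℤ) + k = k := by ring
  have e2 : (1:ℤ) + k = k + 1 := by ring
  rw [e1, e2] at h
  exact h

lemma braidX (hn : 3 ≤ n) (k : ℤ) :
    X n k * X n (k + 1) * X n k = X n (k + 1) * X n k * X n (k + 1) := by
  have h := congrArg (κ n k) (R6 n)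
  simp only [_root_.map_mul, κX, κxx] at h
  have e1 : (0:ℤ) + k = k := by ring
  have e2 : (1:ℤ) + k = k + 1 := by ring
  rw [e1, e2] at h
  exact h

lemma relM (hn : 3 ≤ n) (k : ℤ) :
    X n k * X n (k + 1) * S n k = S n (k + 1) * X n k * X n (k + 1) := by
  have h := congrArg (κ n k) (R5 n)
  simp only [_root_.map_mul, κX, κS, κaa, κxx] at h
  have e1 : (0:ℤ) + k = k := by ring
  have e2 : (1:ℤ) + k = k + 1 := by ring
  rw [e1, e2] at h
  exact h

lemma Xsq (k : ℤ) : X n k * X n k = 1 := by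
  have h := congrArg (κ n k) (R7 n)
  rw [_root_.map_pow, _root_.map_one] at h
  have h2 : κ n k (xx n) = X n k := by
    have := κX n k 0; simpa using this
  rw [h2, pow_two] at h
  exact h

lemma tD (hn : 3 ≤ n) : tt n = Sprod n 2 (n - 3) * S n ((n:ℤ) - 1) * S n 0 := by
  rw [tA n hn]
  congr 1
  have h3 : n - 2 = (n - 3) + 1 := by omega
  rw [h3, Sprod_succ]
  congr 2
  omega

lemma Tneg (hn : 3 ≤ n) :
    S n (-1) * S n 0 * X n (-1) = X n 0 * S n (-1) * S n 0 := by
  set r := Sprod n 2 (n - 3) with hr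
  have hcomm : Commute (xx n) r := by
    apply commute_Sprod
    intro j hj
    apply commXS n hn
    · omega
    · omega
  have hSm1 := S_neg_one n hn
  have hX : X n (-1) = (tt n)⁻¹ * xx n * tt n := by
    simp [X]
  have key : S n ((n:ℤ)-1) * S n 0 * ((tt n)⁻¹ * xx n * tt n)
      = r⁻¹ * (xx n * r) * (S n ((n:ℤ)-1) * S n 0) := by
    conv_lhs => rw [tD n hn]
    group
    rw [hr]
  have hcr : r⁻¹ * (xx n * r) = xx n := by
    rw [hcomm.eq]; group
  rw [hSm1, hX, key, hcr, X_zero]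
  group

lemma TgenS (hn : 3 ≤ n) (k : ℤ) :
    S n k * S n (k + 1) * X n k = X n (k + 1) * S n k * S n (k + 1) := by
  have h := congrArg (κ n (k + 1)) (Tneg n hn)
  simp only [_root_.map_mul, κS, κX, κaa, κxx] at h
  have e1 : (-1:ℤ) + (k + 1) = k := by ring
  have e2 : (0:ℤ) + (k + 1) = k + 1 := by ring
  rw [e1, e2] at h
  exact h

lemma tE (hn : 3 ≤ n) : tt n = Sprod n 0 (n - 1) := by
  have h := congrArg (κ n ((n:ℤ) - 2)) (fullT n hn)
  rw [κtt, κ_Sprod] at h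
  have e1 : (2:ℤ) + ((n:ℤ) - 2) = 0 + n := by ring
  rw [e1, zero_add] at h
  have h2 := Sprod_sub n hn (n:ℤ) (n - 1)
  rw [sub_self] at h2
  rw [h, ← h2]

end BP7
namespace BP7
open ThreeGenBP BPGen PresentedGroup

variable (n : ℕ)

abbrev G (n : ℕ) := BraidPermGroup n

lemma relG {r : FreeGroup (BPGen n)} (hr : r ∈ bpRels n) :
    PresentedGroup.mk (bpRels n) r = (1 : PresentedGroup (bpRels n)) :=
  (QuotientGroup.eq_one_iff r).mpr (Subgroup.subset_normalClosure hr)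

def σ' (i : Fin (n-1)) : PresentedGroup (bpRels n) := PresentedGroup.of (sig i)
def ξ' (i : Fin (n-1)) : PresentedGroup (bpRels n) := PresentedGroup.of (xi i)

@[simp] lemma mk_sig (i : Fin (n-1)) :
    PresentedGroup.mk (bpRels n) (FreeGroup.of (sig i)) = σ' n i := rfl
@[simp] lemma mk_xi (i : Fin (n-1)) :
    PresentedGroup.mk (bpRels n) (FreeGroup.of (xi i)) = ξ' n i := rfl

lemma bSScomm (i j : Fin (n-1)) (h : i.val + 1 < j.val ∨ j.val + 1 < i.val) :
    Commute (σ' n i) (σ' n j) := by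
  have E := relG n (Or.inl ⟨i, j, h, rfl⟩)
  simp only [_root_.map_mul, _root_.map_inv, mk_sig, mul_inv_eq_one] at E
  exact E

lemma bSSbraid (i j : Fin (n-1)) (h : j.val = i.val + 1) :
    σ' n i * σ' n j * σ' n i = σ' n j * σ' n i * σ' n j := by
  have E := relG n (Or.inr (Or.inl ⟨i, j, h, rfl⟩))
  simp only [_root_.map_mul, _root_.map_inv, mk_sig, mul_inv_eq_one] at E
  exact E

lemma bXsq (i : Fin (n-1)) : ξ' n i * ξ' n i = 1 := by
  have E := relG n (Or.inr (Or.inr (Or.inl ⟨i, rfl⟩)))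
  simp only [_root_.map_pow, mk_xi] at E
  rwa [pow_two] at E

lemma bXXcomm (i j : Fin (n-1)) (h : i.val + 1 < j.val ∨ j.val + 1 < i.val) :
    Commute (ξ' n i) (ξ' n j) := by
  have E := relG n (Or.inr (Or.inr (Or.inr (Or.inl ⟨i, j, h, rfl⟩))))
  simp only [_root_.map_mul, _root_.map_inv, mk_xi, mul_inv_eq_one] at E
  exact E

lemma bXXbraid (i j : Fin (n-1)) (h : j.val = i.val + 1) :
    ξ' n i * ξ' n j * ξ' n i = ξ' n j * ξ' n i * ξ' n j := by
  have E := relG n (Or.inr (Or.inr (Or.inr (Or.inr (Or.inl ⟨i, j, h, rfl⟩)))))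
  simp only [_root_.map_mul, _root_.map_inv, mk_xi, mul_inv_eq_one] at E
  exact E

lemma bSXcomm (i j : Fin (n-1)) (h : i.val + 1 < j.val ∨ j.val + 1 < i.val) :
    Commute (σ' n i) (ξ' n j) := by
  have E := relG n (Or.inr (Or.inr (Or.inr (Or.inr (Or.inr (Or.inl ⟨i, j, h, rfl⟩))))))
  simp only [_root_.map_mul, _root_.map_inv, mk_xi, mk_sig, mul_inv_eq_one] at E
  exact E

lemma bMix1 (i j : Fin (n-1)) (h : j.val = i.val + 1) :
    ξ' n i * ξ' n j * σ' n i = σ' n j * ξ' n i * ξ' n j := by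
  have E := relG n (Or.inr (Or.inr (Or.inr (Or.inr (Or.inr (Or.inr (Or.inl ⟨i, j, h, rfl⟩)))))))
  simp only [_root_.map_mul, _root_.map_inv, mk_xi, mk_sig, mul_inv_eq_one] at E
  exact E

lemma bMix2 (i j : Fin (n-1)) (h : j.val = i.val + 1) :
    σ' n i * σ' n j * ξ' n i = ξ' n j * σ' n i * σ' n j := by
  have E := relG n (Or.inr (Or.inr (Or.inr (Or.inr (Or.inr (Or.inr (Or.inr ⟨i, j, h, rfl⟩)))))))
  simp only [_root_.map_mul, _root_.map_inv, mk_xi, mk_sig, mul_inv_eq_one] at E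
  exact E

/-- totalized generators -/
def σN (k : ℕ) : PresentedGroup (bpRels n) :=
  if h : k < n - 1 then σ' n ⟨k, h⟩ else 1
def ξN (k : ℕ) : PresentedGroup (bpRels n) :=
  if h : k < n - 1 then ξ' n ⟨k, h⟩ else 1

lemma σN_lt (k : ℕ) (h : k < n - 1) : σN n k = σ' n ⟨k, h⟩ := dif_pos h
lemma ξN_lt (k : ℕ) (h : k < n - 1) : ξN n k = ξ' n ⟨k, h⟩ := dif_pos h

lemma NSScomm (i j : ℕ) (h : i + 2 ≤ j) : Commute (σN n i) (σN n j) := by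
  by_cases hj : j < n - 1
  · have hi : i < n - 1 := by omega
    rw [σN_lt n i hi, σN_lt n j hj]
    exact bSScomm n _ _ (Or.inl (show i + 1 < j by omega))
  · have h1 : σN n j = 1 := dif_neg hj
    rw [h1]; exact Commute.one_right _

lemma NXXcomm (i j : ℕ) (h : i + 2 ≤ j) : Commute (ξN n i) (ξN n j) := by
  by_cases hj : j < n - 1
  · have hi : i < n - 1 := by omega
    rw [ξN_lt n i hi, ξN_lt n j hj]
    exact bXXcomm n _ _ (Or.inl (show i + 1 < j by omega))
  · have h1 : ξN n j = 1 := dif_neg hj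
    rw [h1]; exact Commute.one_right _

lemma NSXcomm (i j : ℕ) (h : i + 2 ≤ j ∨ j + 2 ≤ i) : Commute (σN n i) (ξN n j) := by
  by_cases hj : j < n - 1
  · by_cases hi : i < n - 1
    · rw [σN_lt n i hi, ξN_lt n j hj]
      refine bSXcomm n _ _ ?_
      rcases h with h | h
      · exact Or.inl (show i + 1 < j by omega)
      · exact Or.inr (show j + 1 < i by omega)
    · have h1 : σN n i = 1 := dif_neg hi
      rw [h1]; exact Commute.one_left _
  · have h1 : ξN n j = 1 := dif_neg hj
    rw [h1]; exact Commute.one_right _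

lemma NSSbraid (i : ℕ) (h : i + 1 < n - 1) :
    σN n i * σN n (i+1) * σN n i = σN n (i+1) * σN n i * σN n (i+1) := by
  rw [σN_lt n i (by omega), σN_lt n (i+1) h]
  exact bSSbraid n _ _ rfl

lemma NXXbraid (i : ℕ) (h : i + 1 < n - 1) :
    ξN n i * ξN n (i+1) * ξN n i = ξN n (i+1) * ξN n i * ξN n (i+1) := by
  rw [ξN_lt n i (by omega), ξN_lt n (i+1) h]
  exact bXXbraid n _ _ rfl

lemma NMix1 (i : ℕ) (h : i + 1 < n - 1) :
    ξN n i * ξN n (i+1) * σN n i = σN n (i+1) * ξN n i * ξN n (i+1) := by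
  rw [ξN_lt n i (by omega), ξN_lt n (i+1) h, σN_lt n i (by omega), σN_lt n (i+1) h]
  exact bMix1 n _ _ rfl

lemma NMix2 (i : ℕ) (h : i + 1 < n - 1) :
    σN n i * σN n (i+1) * ξN n i = ξN n (i+1) * σN n i * σN n (i+1) := by
  rw [ξN_lt n i (by omega), ξN_lt n (i+1) h, σN_lt n i (by omega), σN_lt n (i+1) h]
  exact bMix2 n _ _ rfl

lemma NXsq (i : ℕ) : ξN n i * ξN n i = 1 := by
  unfold ξN
  split
  · exact bXsq n _
  · simp

/-- the image of σ -/
def cc : PresentedGroup (bpRels n) := ((List.range (n-1)).map (σN n)).prod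

lemma shiftσ (i : ℕ) (h : i + 2 ≤ n - 1) : cc n * σN n i = σN n (i+1) * cc n := by
  have hsplit : n - 1 = (i + 2) + (n - 1 - (i + 2)) := by omega
  set m := n - 1 - (i + 2) with hm
  have hr : List.range (n-1) = (List.range i ++ [i, i+1]) ++
      (List.range m).map (fun x => (i+2) + x) := by
    rw [hsplit, List.range_add]
    congr 1
    have h2 : i + 2 = (i + 1) + 1 := by omega
    rw [h2, List.range_succ, List.range_succ]
    simp
  set P := ((List.range i).map (σN n)).prod with hP
  set M := ((List.range m).map (fun x => σN n (i+2+x))).prod with hM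
  have hcc : cc n = P * (σN n i * σN n (i+1)) * M := by
    rw [cc, hr, hP, hM]
    simp [List.prod_append, List.map_map, mul_assoc, Function.comp_def]
  have hB : Commute (σN n i) M := by
    rw [hM]
    apply Commute.list_prod_right
    intro y hy
    rcases List.mem_map.mp hy with ⟨j, hj, rfl⟩
    exact NSScomm n i (i+2+j) (by omega)
  have hA : Commute (σN n (i+1)) P := by
    rw [hP]
    apply Commute.list_prod_right
    intro y hy
    rcases List.mem_map.mp hy with ⟨j, hj, rfl⟩
    exact (NSScomm n j (i+1) (by have := List.mem_range.mp hj; omega)).symm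
  rw [hcc]
  calc P * (σN n i * σN n (i+1)) * M * σN n i
      = P * (σN n i * σN n (i+1)) * (M * σN n i) := by group
    _ = P * (σN n i * σN n (i+1)) * (σN n i * M) := by rw [← hB.eq]
    _ = P * (σN n i * σN n (i+1) * σN n i) * M := by group
    _ = P * (σN n (i+1) * σN n i * σN n (i+1)) * M := by rw [NSSbraid n i (by omega)]
    _ = (P * σN n (i+1)) * ((σN n i * σN n (i+1)) * M) := by group
    _ = (σN n (i+1) * P) * ((σN n i * σN n (i+1)) * M) := by rw [hA.eq]
    _ = σN n (i+1) * (P * (σN n i * σN n (i+1)) * M) := by group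

lemma shiftξ (i : ℕ) (h : i + 2 ≤ n - 1) : cc n * ξN n i = ξN n (i+1) * cc n := by
  have hsplit : n - 1 = (i + 2) + (n - 1 - (i + 2)) := by omega
  set m := n - 1 - (i + 2) with hm
  have hr : List.range (n-1) = (List.range i ++ [i, i+1]) ++
      (List.range m).map (fun x => (i+2) + x) := by
    rw [hsplit, List.range_add]
    congr 1
    have h2 : i + 2 = (i + 1) + 1 := by omega
    rw [h2, List.range_succ, List.range_succ]
    simp
  set P := ((List.range i).map (σN n)).prod with hP
  set M := ((List.range m).map (fun x => σN n (i+2+x))).prod with hM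
  have hcc : cc n = P * (σN n i * σN n (i+1)) * M := by
    rw [cc, hr, hP, hM]
    simp [List.prod_append, List.map_map, mul_assoc, Function.comp_def]
  have hB : Commute (ξN n i) M := by
    rw [hM]
    apply Commute.list_prod_right
    intro y hy
    rcases List.mem_map.mp hy with ⟨j, hj, rfl⟩
    exact (NSXcomm n (i+2+j) i (Or.inr (by omega))).symm
  have hA : Commute (ξN n (i+1)) P := by
    rw [hP]
    apply Commute.list_prod_right
    intro y hy
    rcases List.mem_map.mp hy with ⟨j, hj, rfl⟩
    exact (NSXcomm n j (i+1) (Or.inl (by have := List.mem_range.mp hj; omega))).symm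
  rw [hcc]
  calc P * (σN n i * σN n (i+1)) * M * ξN n i
      = P * (σN n i * σN n (i+1)) * (M * ξN n i) := by group
    _ = P * (σN n i * σN n (i+1)) * (ξN n i * M) := by rw [← hB.eq]
    _ = P * (σN n i * σN n (i+1) * ξN n i) * M := by group
    _ = P * (ξN n (i+1) * σN n i * σN n (i+1)) * M := by rw [NMix2 n i (by omega)]
    _ = (P * ξN n (i+1)) * ((σN n i * σN n (i+1)) * M) := by group
    _ = (ξN n (i+1) * P) * ((σN n i * σN n (i+1)) * M) := by rw [hA.eq]
    _ = ξN n (i+1) * (P * (σN n i * σN n (i+1)) * M) := by group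

end BP7
namespace BP7
open ThreeGenBP BPGen PresentedGroup

variable (n : ℕ)

lemma shiftPowσ : ∀ k : ℕ, k ≤ n - 2 → cc n ^ k * σN n 0 = σN n k * cc n ^ k := by
  intro k
  induction k with
  | zero => simp
  | succ k ih =>
      intro hk
      have h1 := ih (by omega)
      calc cc n ^ (k+1) * σN n 0 = cc n * (cc n ^ k * σN n 0) := by
            rw [pow_succ']; group
        _ = cc n * (σN n k * cc n ^ k) := by rw [h1]
        _ = (cc n * σN n k) * cc n ^ k := by group
        _ = (σN n (k+1) * cc n) * cc n ^ k := by rw [shiftσ n k (by omega)]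
        _ = σN n (k+1) * cc n ^ (k+1) := by rw [pow_succ']; group

lemma shiftPowξ : ∀ k : ℕ, k ≤ n - 2 → cc n ^ k * ξN n 0 = ξN n k * cc n ^ k := by
  intro k
  induction k with
  | zero => simp
  | succ k ih =>
      intro hk
      have h1 := ih (by omega)
      calc cc n ^ (k+1) * ξN n 0 = cc n * (cc n ^ k * ξN n 0) := by
            rw [pow_succ']; group
        _ = cc n * (ξN n k * cc n ^ k) := by rw [h1]
        _ = (cc n * ξN n k) * cc n ^ k := by group
        _ = (ξN n (k+1) * cc n) * cc n ^ k := by rw [shiftξ n k (by omega)]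
        _ = ξN n (k+1) * cc n ^ (k+1) := by rw [pow_succ']; group

lemma conjPowσ (k : ℕ) (hk : k ≤ n - 2) :
    cc n ^ k * σN n 0 * (cc n ^ k)⁻¹ = σN n k := by
  rw [shiftPowσ n k hk]; group

lemma conjPowξ (k : ℕ) (hk : k ≤ n - 2) :
    cc n ^ k * ξN n 0 * (cc n ^ k)⁻¹ = ξN n k := by
  rw [shiftPowξ n k hk]; group

lemma shiftProd : ∀ m : ℕ, m ≤ n - 2 →
    cc n * ((List.range m).map (σN n)).prod =
    ((List.range m).map (fun j => σN n (j+1))).prod * cc n := by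
  intro m
  induction m with
  | zero => simp
  | succ m ih =>
      intro hm
      rw [List.range_succ]
      simp only [List.map_append, List.prod_append, List.map_cons, List.map_nil,
        List.prod_cons, List.prod_nil, mul_one]
      calc cc n * (((List.range m).map (σN n)).prod * σN n m)
          = (cc n * ((List.range m).map (σN n)).prod) * σN n m := by group
        _ = (((List.range m).map (fun j => σN n (j+1))).prod * cc n) * σN n m := by
              rw [ih (by omega)]
        _ = ((List.range m).map (fun j => σN n (j+1))).prod * (cc n * σN n m) := by group
        _ = ((List.range m).map (fun j => σN n (j+1))).prod * (σN n (m+1) * cc n) := by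
              rw [shiftσ n m (by omega)]
        _ = ((List.range m).map (fun j => σN n (j+1))).prod * σN n (m+1) * cc n := by group

lemma powLemma : ∀ k : ℕ, k ≤ n - 2 →
    (cc n * σN n 0) ^ k = ((List.range k).map (fun j => σN n (j+1))).prod * cc n ^ k := by
  intro k
  induction k with
  | zero => simp
  | succ k ih =>
      intro hk
      have hstep : σN n 0 * ((List.range k).map (fun j => σN n (j+1))).prod
          = ((List.range (k+1)).map (σN n)).prod := by
        rw [List.range_succ_eq_map]
        simp only [List.map_cons, List.prod_cons, List.map_map]
        congr 1
      calc (cc n * σN n 0) ^ (k+1)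
          = cc n * σN n 0 * (cc n * σN n 0) ^ k := by rw [pow_succ']
        _ = cc n * σN n 0 * (((List.range k).map (fun j => σN n (j+1))).prod * cc n ^ k) := by
              rw [ih (by omega)]
        _ = cc n * (σN n 0 * ((List.range k).map (fun j => σN n (j+1))).prod) * cc n ^ k := by
              group
        _ = cc n * ((List.range (k+1)).map (σN n)).prod * cc n ^ k := by rw [hstep]
        _ = (((List.range (k+1)).map (fun j => σN n (j+1))).prod * cc n) * cc n ^ k := by
              rw [shiftProd n (k+1) (by omega)]
        _ = ((List.range (k+1)).map (fun j => σN n (j+1))).prod * cc n ^ (k+1) := by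
              rw [pow_succ', mul_assoc]

lemma ccPow (hn : 3 ≤ n) : cc n ^ n = (cc n * σN n 0) ^ (n - 1) := by
  have h1 : n - 1 = (n - 2) + 1 := by omega
  have h2 : (cc n * σN n 0) ^ (n-1) = cc n * σN n 0 * (cc n * σN n 0) ^ (n-2) := by
    rw [h1, pow_succ']
  rw [h2, powLemma n (n-2) le_rfl]
  have hstep : σN n 0 * ((List.range (n-2)).map (fun j => σN n (j+1))).prod
      = ((List.range (n-1)).map (σN n)).prod := by
    rw [h1, List.range_succ_eq_map]
    simp only [List.map_cons, List.prod_cons, List.map_map]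
    congr 1
  calc cc n ^ n = cc n * (cc n * cc n ^ (n-2)) := by
        rw [← pow_succ', ← pow_succ']
        congr 1
        omega
    _ = cc n * (((List.range (n-1)).map (σN n)).prod * cc n ^ (n-2)) := rfl
    _ = cc n * ((σN n 0 * ((List.range (n-2)).map (fun j => σN n (j+1))).prod) * cc n ^ (n-2)) := by
          rw [hstep]
    _ = cc n * σN n 0 * (((List.range (n-2)).map (fun j => σN n (j+1))).prod * cc n ^ (n-2)) := by
          group

end BP7
namespace BP7
open ThreeGenBP BPGen PresentedGroup

variable (n : ℕ)

def fφ : ThreeGenBP → PresentedGroup (bpRels n)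
  | s1 => σN n 0
  | s => cc n
  | x1 => ξN n 0

lemma conj1σ (hn : 3 ≤ n) : cc n * σN n 0 * (cc n)⁻¹ = σN n 1 := by
  have := conjPowσ n 1 (by omega)
  simpa using this

lemma conj1ξ (hn : 3 ≤ n) : cc n * ξN n 0 * (cc n)⁻¹ = ξN n 1 := by
  have := conjPowξ n 1 (by omega)
  simpa using this

lemma hφ (hn : 3 ≤ n) : ∀ r ∈ threeGenBPRels n, FreeGroup.lift (fφ n) r = 1 := by
  intro r hr
  rcases hr with ⟨i, h2, hi, rfl⟩ | rfl | ⟨i, h2, hi, rfl⟩ | ⟨i, h2, hi, rfl⟩ | rfl | rfl | rfl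
  · -- σ₁ commutes with σⁱσ₁σ⁻ⁱ, 2 ≤ i ≤ n/2
    simp only [_root_.map_mul, _root_.map_pow, _root_.map_inv, FreeGroup.lift_apply_of, fφ]
    rw [mul_inv_eq_one]
    have hσ := conjPowσ n i (by omega)
    have hcom : Commute (σN n 0) (σN n i) := NSScomm n 0 i (by omega)
    calc σN n 0 * cc n ^ i * σN n 0 * (cc n ^ i)⁻¹
        = σN n 0 * (cc n ^ i * σN n 0 * (cc n ^ i)⁻¹) := by group
      _ = σN n 0 * σN n i := by rw [hσ]
      _ = σN n i * σN n 0 := hcom.eq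
      _ = cc n ^ i * σN n 0 * (cc n ^ i)⁻¹ * σN n 0 := by rw [hσ]
  · -- σⁿ = (σσ₁)ⁿ⁻¹
    simp only [_root_.map_mul, _root_.map_pow, _root_.map_inv, FreeGroup.lift_apply_of, fφ]
    rw [mul_inv_eq_one]
    exact ccPow n hn
  · -- ξ₁ commutes with σⁱσ₁σ⁻ⁱ
    simp only [_root_.map_mul, _root_.map_pow, _root_.map_inv, FreeGroup.lift_apply_of, fφ]
    rw [mul_inv_eq_one]
    have hσ := conjPowσ n i (by omega)
    have hcom : Commute (ξN n 0) (σN n i) := (NSXcomm n i 0 (Or.inr (by omega))).symm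
    calc ξN n 0 * cc n ^ i * σN n 0 * (cc n ^ i)⁻¹
        = ξN n 0 * (cc n ^ i * σN n 0 * (cc n ^ i)⁻¹) := by group
      _ = ξN n 0 * σN n i := by rw [hσ]
      _ = σN n i * ξN n 0 := hcom.eq
      _ = cc n ^ i * σN n 0 * (cc n ^ i)⁻¹ * ξN n 0 := by rw [hσ]
  · -- ξ₁ commutes with σⁱξ₁σ⁻ⁱ
    simp only [_root_.map_mul, _root_.map_pow, _root_.map_inv, FreeGroup.lift_apply_of, fφ]
    rw [mul_inv_eq_one]
    have hξ := conjPowξ n i (by omega)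
    have hcom : Commute (ξN n 0) (ξN n i) := NXXcomm n 0 i (by omega)
    calc ξN n 0 * cc n ^ i * ξN n 0 * (cc n ^ i)⁻¹
        = ξN n 0 * (cc n ^ i * ξN n 0 * (cc n ^ i)⁻¹) := by group
      _ = ξN n 0 * ξN n i := by rw [hξ]
      _ = ξN n i * ξN n 0 := hcom.eq
      _ = cc n ^ i * ξN n 0 * (cc n ^ i)⁻¹ * ξN n 0 := by rw [hξ]
  · -- ξ₁ σξ₁σ⁻¹ σ₁ = σσ₁σ⁻¹ ξ₁ σξ₁σ⁻¹
    simp only [_root_.map_mul, _root_.map_inv, FreeGroup.lift_apply_of, fφ]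
    rw [mul_inv_eq_one]
    have h1 := conj1σ n hn
    have h2 := conj1ξ n hn
    have h3 := NMix1 n 0 (by omega)
    calc ξN n 0 * cc n * ξN n 0 * (cc n)⁻¹ * σN n 0
        = ξN n 0 * (cc n * ξN n 0 * (cc n)⁻¹) * σN n 0 := by group
      _ = ξN n 0 * ξN n 1 * σN n 0 := by rw [h2]
      _ = σN n 1 * ξN n 0 * ξN n 1 := h3
      _ = (cc n * σN n 0 * (cc n)⁻¹) * ξN n 0 * (cc n * ξN n 0 * (cc n)⁻¹) := by
            rw [h1, h2]
      _ = cc n * σN n 0 * (cc n)⁻¹ * ξN n 0 * cc n * ξN n 0 * (cc n)⁻¹ := by group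
  · -- ξ₁ σξ₁σ⁻¹ ξ₁ = σξ₁σ⁻¹ ξ₁ σξ₁σ⁻¹
    simp only [_root_.map_mul, _root_.map_inv, FreeGroup.lift_apply_of, fφ]
    rw [mul_inv_eq_one]
    have h2 := conj1ξ n hn
    have h3 := NXXbraid n 0 (by omega)
    calc ξN n 0 * cc n * ξN n 0 * (cc n)⁻¹ * ξN n 0
        = ξN n 0 * (cc n * ξN n 0 * (cc n)⁻¹) * ξN n 0 := by group
      _ = ξN n 0 * ξN n 1 * ξN n 0 := by rw [h2]
      _ = ξN n 1 * ξN n 0 * ξN n 1 := h3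
      _ = (cc n * ξN n 0 * (cc n)⁻¹) * ξN n 0 * (cc n * ξN n 0 * (cc n)⁻¹) := by rw [h2]
      _ = cc n * ξN n 0 * (cc n)⁻¹ * ξN n 0 * cc n * ξN n 0 * (cc n)⁻¹ := by group
  · -- ξ₁² = 1
    simp only [_root_.map_pow, FreeGroup.lift_apply_of, fφ]
    rw [pow_two]
    exact NXsq n 0

def fψ : BPGen n → H n
  | sig i => S n i.val
  | xi i => X n i.val

lemma hψ (hn : 3 ≤ n) : ∀ r ∈ bpRels n, FreeGroup.lift (fψ n) r = 1 := by
  intro r hr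
  rcases hr with ⟨i, j, hij, rfl⟩ | ⟨i, j, hij, rfl⟩ | ⟨i, rfl⟩ | ⟨i, j, hij, rfl⟩ |
    ⟨i, j, hij, rfl⟩ | ⟨i, j, hij, rfl⟩ | ⟨i, j, hij, rfl⟩ | ⟨i, j, hij, rfl⟩
  · simp only [_root_.map_mul, _root_.map_inv, FreeGroup.lift_apply_of, fψ]
    rw [mul_inv_eq_one]
    have hi := i.isLt; have hj := j.isLt
    rcases hij with h | h
    · exact (commSS n hn i.val j.val (by omega) (by omega)).eq
    · exact ((commSS n hn j.val i.val (by omega) (by omega)).symm).eq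
  · simp only [_root_.map_mul, _root_.map_inv, FreeGroup.lift_apply_of, fψ]
    rw [mul_inv_eq_one]
    have hc : (j.val : ℤ) = (i.val : ℤ) + 1 := by omega
    rw [hc]
    exact braidS n hn i.val
  · simp only [_root_.map_pow, FreeGroup.lift_apply_of, fψ]
    rw [pow_two]
    exact Xsq n i.val
  · simp only [_root_.map_mul, _root_.map_inv, FreeGroup.lift_apply_of, fψ]
    rw [mul_inv_eq_one]
    have hi := i.isLt; have hj := j.isLt
    rcases hij with h | h
    · exact (commXgXg n hn i.val j.val (by omega) (by omega)).eq
    · exact ((commXgXg n hn j.val i.val (by omega) (by omega)).symm).eq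
  · simp only [_root_.map_mul, _root_.map_inv, FreeGroup.lift_apply_of, fψ]
    rw [mul_inv_eq_one]
    have hc : (j.val : ℤ) = (i.val : ℤ) + 1 := by omega
    rw [hc]
    exact braidX n hn i.val
  · simp only [_root_.map_mul, _root_.map_inv, FreeGroup.lift_apply_of, fψ]
    rw [mul_inv_eq_one]
    have hi := i.isLt; have hj := j.isLt
    rcases hij with h | h
    · exact (commSgXg n hn i.val j.val (by omega) (by omega)).eq
    · exact ((commXgSg n hn j.val i.val (by omega) (by omega)).symm).eq
  · simp only [_root_.map_mul, _root_.map_inv, FreeGroup.lift_apply_of, fψ]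
    rw [mul_inv_eq_one]
    have hc : (j.val : ℤ) = (i.val : ℤ) + 1 := by omega
    rw [hc]
    exact relM n hn i.val
  · simp only [_root_.map_mul, _root_.map_inv, FreeGroup.lift_apply_of, fψ]
    rw [mul_inv_eq_one]
    have hc : (j.val : ℤ) = (i.val : ℤ) + 1 := by omega
    rw [hc]
    exact TgenS n hn i.val

noncomputable def φh (hn : 3 ≤ n) : H n →* PresentedGroup (bpRels n) :=
  PresentedGroup.toGroup (hφ n hn)

noncomputable def ψh (hn : 3 ≤ n) : PresentedGroup (bpRels n) →* H n :=
  PresentedGroup.toGroup (hψ n hn)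

lemma φh_a (hn : 3 ≤ n) : φh n hn (aa n) = σN n 0 := PresentedGroup.toGroup.of _
lemma φh_x (hn : 3 ≤ n) : φh n hn (xx n) = ξN n 0 := PresentedGroup.toGroup.of _
lemma φh_t (hn : 3 ≤ n) : φh n hn (tt n) = cc n := PresentedGroup.toGroup.of _
lemma ψh_sig (hn : 3 ≤ n) (i : Fin (n-1)) :
    ψh n hn (PresentedGroup.of (sig i)) = S n i.val := PresentedGroup.toGroup.of _
lemma ψh_xi (hn : 3 ≤ n) (i : Fin (n-1)) :
    ψh n hn (PresentedGroup.of (xi i)) = X n i.val := PresentedGroup.toGroup.of _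

lemma φh_S (hn : 3 ≤ n) (k : ℕ) (hk : k ≤ n - 2) :
    φh n hn (S n (k : ℤ)) = σN n k := by
  rw [S, _root_.map_mul, _root_.map_mul, map_zpow, map_zpow, φh_t, φh_a]
  rw [zpow_neg, zpow_natCast]
  exact conjPowσ n k hk

lemma φh_X (hn : 3 ≤ n) (k : ℕ) (hk : k ≤ n - 2) :
    φh n hn (X n (k : ℤ)) = ξN n k := by
  rw [X, _root_.map_mul, _root_.map_mul, map_zpow, map_zpow, φh_t, φh_x]
  rw [zpow_neg, zpow_natCast]
  exact conjPowξ n k hk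

lemma ψh_cc (hn : 3 ≤ n) : ψh n hn (cc n) = tt n := by
  rw [cc, map_list_prod, List.map_map]
  have h1 : List.map ((ψh n hn) ∘ σN n) (List.range (n-1))
      = List.map (fun j : ℕ => S n ((0:ℤ) + (j:ℤ))) (List.range (n-1)) := by
    apply List.map_congr_left
    intro j hj
    have hjlt : j < n - 1 := List.mem_range.mp hj
    simp only [Function.comp_apply]
    rw [σN_lt n j hjlt, σ', ψh_sig n hn, zero_add]
  rw [h1, ← Sprod, ← tE n hn]

lemma comp_GG (hn : 3 ≤ n) : (φh n hn).comp (ψh n hn) = MonoidHom.id _ := by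
  apply PresentedGroup.ext
  intro g
  cases g with
  | sig i =>
      rw [MonoidHom.comp_apply, MonoidHom.id_apply, ψh_sig n hn,
        φh_S n hn i.val (by have := i.isLt; omega), σN_lt n i.val i.isLt]
      rfl
  | xi i =>
      rw [MonoidHom.comp_apply, MonoidHom.id_apply, ψh_xi n hn,
        φh_X n hn i.val (by have := i.isLt; omega), ξN_lt n i.val i.isLt]
      rfl

lemma comp_HH (hn : 3 ≤ n) : (ψh n hn).comp (φh n hn) = MonoidHom.id _ := by
  apply PresentedGroup.ext
  intro g
  cases g with
  | s1 =>
      rw [MonoidHom.comp_apply, MonoidHom.id_apply]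
      have h0 : (PresentedGroup.of s1 : H n) = aa n := rfl
      rw [h0, φh_a n hn, σN_lt n 0 (by omega), σ', ψh_sig n hn]
      simp [S]
  | x1 =>
      rw [MonoidHom.comp_apply, MonoidHom.id_apply]
      have h0 : (PresentedGroup.of x1 : H n) = xx n := rfl
      rw [h0, φh_x n hn, ξN_lt n 0 (by omega), ξ', ψh_xi n hn]
      simp [X]
  | s =>
      rw [MonoidHom.comp_apply, MonoidHom.id_apply]
      have h0 : (PresentedGroup.of s : H n) = tt n := rfl
      rw [h0, φh_t n hn, ψh_cc n hn]

end BP7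
namespace BP7
open ThreeGenBP BPGen PresentedGroup

lemma cc_ofFn (n : ℕ) : cc n =
    (List.ofFn (fun i : Fin (n - 1) =>
      PresentedGroup.of (rels := bpRels n) (BPGen.sig i))).prod := by
  rw [List.ofFn_eq_map, cc, ← (show (List.finRange (n-1)).map Fin.val = List.range (n-1) from
    List.ext_getElem (by simp) (by simp)), List.map_map]
  congr 1
  apply List.map_congr_left
  intro i _
  simp only [Function.comp_apply]
  rw [σN_lt n i.val i.isLt]
  rfl

end BP7


theorem braid_permutation_three_generator_presentation (n : ℕ) (hn : 3 ≤ n) :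
    ∃ e : PresentedGroup (threeGenBPRels n) ≃* BraidPermGroup n,
      e (PresentedGroup.of ThreeGenBP.s1) =
        PresentedGroup.of (BPGen.sig ⟨0, by omega⟩) ∧
      e (PresentedGroup.of ThreeGenBP.x1) =
        PresentedGroup.of (BPGen.xi ⟨0, by omega⟩) ∧
      e (PresentedGroup.of ThreeGenBP.s) =
        (List.ofFn (fun i : Fin (n - 1) =>
          PresentedGroup.of (rels := bpRels n) (BPGen.sig i))).prod := by
  refine ⟨MonoidHom.toMulEquiv (BP7.φh n hn) (BP7.ψh n hn)
    (BP7.comp_HH n hn) (BP7.comp_GG n hn), ?_, ?_, ?_⟩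
  · show BP7.φh n hn (PresentedGroup.of ThreeGenBP.s1) = _
    have h0 : (PresentedGroup.of ThreeGenBP.s1 : BP7.H n) = BP7.aa n := rfl
    rw [h0, BP7.φh_a n hn, BP7.σN_lt n 0 (by omega)]
    rfl
  · show BP7.φh n hn (PresentedGroup.of ThreeGenBP.x1) = _
    have h0 : (PresentedGroup.of ThreeGenBP.x1 : BP7.H n) = BP7.xx n := rfl
    rw [h0, BP7.φh_x n hn, BP7.ξN_lt n 0 (by omega)]
    rfl
  · show BP7.φh n hn (PresentedGroup.of ThreeGenBP.s) = _
    have h0 : (PresentedGroup.of ThreeGenBP.s : BP7.H n) = BP7.tt n := rfl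
    rw [h0, BP7.φh_t n hn, BP7.cc_ofFn n]
end

section
/- For every n ≥ 2, the singular braid monoid SBₙ is isomorphic to the monoid defined by the presentation with generators a_{ts}, a_{ts}⁻¹ for 1 ≤ s < t ≤ n and b_{qp} for 1 ≤ p < q ≤ n and relations: a_{ts}a_{rq} = a_{rq}a_{ts} for (t−r)(t−q)(s−r)(s−q) > 0; a_{ts}a_{sr} = a_{tr}a_{ts} = a_{sr}a_{tr} for 1 ≤ r < s < t ≤ n; a_{ts}a_{ts}⁻¹ = a_{ts}⁻¹a_{ts} = 1; a_{ts}b_{rq} = b_{rq}a_{ts} for (t−r)(t−q)(s−r)(s−q) > 0; a_{ts}b_{ts} = b_{ts}a_{ts}; a_{ts}b_{sr} = b_{tr}a_{ts} for r < s < t; a_{sr}b_{tr} = b_{ts}a_{sr} for r < s < t; a_{tr}b_{ts} = b_{sr}a_{tr} for r < s < t; and b_{ts}b_{rq} = b_{rq}b_{ts} for (t−r)(t−q)(s−r)(s−q) > 0; an isomorphism is given by sending a_{(i+1)i} ↦ σᵢ, a_{(i+1)i}⁻¹ ↦ σᵢ⁻¹, b_{(i+1)i} ↦ xᵢ, and in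 general a_{ts} ↦ (σ_{t−1}⋯σ_{s+1})σ_s(σ_{s+1}⁻¹⋯σ_{t−1}⁻¹) and b_{ts} ↦ (σ_{t−1}⋯σ_{s+1})x_s(σ_{s+1}⁻¹⋯σ_{t−1}⁻¹). -/
/-!
STATEMENT 9: For every n ≥ 2, the singular braid monoid SBₙ is isomorphic to
the monoid presented by the Birman–Ko–Lee generators a_{ts}, a_{ts}⁻¹
(1 ≤ s < t ≤ n) and b_{qp} (1 ≤ p < q ≤ n) with the relations listed below,
via a_{ts} ↦ (σ_{t−1}⋯σ_{s+1})σ_s(σ_{s+1}⁻¹⋯σ_{t−1}⁻¹),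
a_{ts}⁻¹ ↦ (σ_{t−1}⋯σ_{s+1})σ_s⁻¹(σ_{s+1}⁻¹⋯σ_{t−1}⁻¹) and
b_{ts} ↦ (σ_{t−1}⋯σ_{s+1})x_s(σ_{s+1}⁻¹⋯σ_{t−1}⁻¹).
-/

open FreeMonoid

/-- Generators of the singular braid monoid `SBₙ`: `σᵢ`, `σᵢ⁻¹`, `xᵢ` for
`i = 1, …, n-1` (index `i : Fin (n-1)` stands for subscript `i+1`). -/
inductive SBGen (n : ℕ) : Type
  | sig (i : Fin (n - 1)) : SBGen n
  | sinv (i : Fin (n - 1)) : SBGen n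
  | x (i : Fin (n - 1)) : SBGen n

open SBGen in
/-- The defining relations of the singular braid monoid `SBₙ`. -/
inductive sbRel (n : ℕ) : FreeMonoid (SBGen n) → FreeMonoid (SBGen n) → Prop
  | comm_ss (i j : Fin (n - 1)) (h : i.val + 1 < j.val ∨ j.val + 1 < i.val) :
      sbRel n (of (sig i) * of (sig j)) (of (sig j) * of (sig i))
  | comm_xx (i j : Fin (n - 1)) (h : i.val + 1 < j.val ∨ j.val + 1 < i.val) :
      sbRel n (of (x i) * of (x j)) (of (x j) * of (x i))
  | comm_xs (i j : Fin (n - 1)) (h : i.val + 1 ≠ j.val ∧ j.val + 1 ≠ i.val) :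
      sbRel n (of (x i) * of (sig j)) (of (sig j) * of (x i))
  | braid (i j : Fin (n - 1)) (h : j.val = i.val + 1) :
      sbRel n (of (sig i) * of (sig j) * of (sig i))
              (of (sig j) * of (sig i) * of (sig j))
  | braid_x₁ (i j : Fin (n - 1)) (h : j.val = i.val + 1) :
      sbRel n (of (sig i) * of (sig j) * of (x i))
              (of (x j) * of (sig i) * of (sig j))
  | braid_x₂ (i j : Fin (n - 1)) (h : j.val = i.val + 1) :
      sbRel n (of (sig j) * of (sig i) * of (x j))
              (of (x i) * of (sig j) * of (sig i))
  | inv_right (i : Fin (n - 1)) : sbRel n (of (sig i) * of (sinv i)) 1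
  | inv_left (i : Fin (n - 1)) : sbRel n (of (sinv i) * of (sig i)) 1

/-- The singular braid monoid `SBₙ`. -/
def SingBraidMonoid (n : ℕ) : Type := PresentedMonoid (sbRel n)

instance (n : ℕ) : Monoid (SingBraidMonoid n) :=
  inferInstanceAs (Monoid (PresentedMonoid (sbRel n)))

/-- `σ_k` (1-based index) as a word in the free monoid on the generators of
`SBₙ`. -/
def sg (n k : ℕ) : FreeMonoid (SBGen n) :=
  if h : 1 ≤ k ∧ k ≤ n - 1 then of (SBGen.sig ⟨k - 1, by omega⟩) else 1

/-- `σ_k⁻¹` (1-based index) as a word in the free monoid on the generators of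
`SBₙ`. -/
def sgi (n k : ℕ) : FreeMonoid (SBGen n) :=
  if h : 1 ≤ k ∧ k ≤ n - 1 then of (SBGen.sinv ⟨k - 1, by omega⟩) else 1

/-- `x_k` (1-based index) as a word in the free monoid on the generators of
`SBₙ`. -/
def xg (n k : ℕ) : FreeMonoid (SBGen n) :=
  if h : 1 ≤ k ∧ k ≤ n - 1 then of (SBGen.x ⟨k - 1, by omega⟩) else 1

/-- The word `(σ_{t−1}⋯σ_{s+1}) g (σ_{s+1}⁻¹⋯σ_{t−1}⁻¹)` used to express the
Birman–Ko–Lee generators through the classical ones. -/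
def bklWord (n t s : ℕ) (g : FreeMonoid (SBGen n)) : FreeMonoid (SBGen n) :=
  ((List.range (t - 1 - s)).map (fun j => sg n (t - 1 - j))).prod * g *
  ((List.range (t - 1 - s)).map (fun j => sgi n (s + 1 + j))).prod

/-- Index pairs `(t, s)` with `1 ≤ s < t ≤ n`. -/
def SPair (n : ℕ) : Type := {p : ℕ × ℕ // 1 ≤ p.2 ∧ p.2 < p.1 ∧ p.1 ≤ n}

/-- The Birman–Ko–Lee generators of `SBₙ`: `a_{ts}`, `a_{ts}⁻¹` and `b_{ts}`
for `1 ≤ s < t ≤ n`. -/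
inductive BKLGen (n : ℕ) : Type
  | a (p : SPair n) : BKLGen n
  | ainv (p : SPair n) : BKLGen n
  | b (p : SPair n) : BKLGen n

/-- `a_{ts}` as an element of the free monoid on the Birman–Ko–Lee
generators (the unit if the indices are invalid). -/
def ag (n t s : ℕ) : FreeMonoid (BKLGen n) :=
  if h : 1 ≤ s ∧ s < t ∧ t ≤ n then of (BKLGen.a ⟨(t, s), h⟩) else 1

/-- `a_{ts}⁻¹` as an element of the free monoid on the Birman–Ko–Lee
generators. -/
def agi (n t s : ℕ) : FreeMonoid (BKLGen n) :=
  if h : 1 ≤ s ∧ s < t ∧ t ≤ n then of (BKLGen.ainv ⟨(t, s), h⟩) else 1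

/-- `b_{ts}` as an element of the free monoid on the Birman–Ko–Lee
generators. -/
def bg (n t s : ℕ) : FreeMonoid (BKLGen n) :=
  if h : 1 ≤ s ∧ s < t ∧ t ≤ n then of (BKLGen.b ⟨(t, s), h⟩) else 1

/-- The Birman–Ko–Lee relations for the singular braid monoid. -/
inductive bklRel (n : ℕ) : FreeMonoid (BKLGen n) → FreeMonoid (BKLGen n) → Prop
  | comm_aa (t s r q : ℕ) (h₁ : 1 ≤ s ∧ s < t ∧ t ≤ n) (h₂ : 1 ≤ q ∧ q < r ∧ r ≤ n)
      (h : 0 < ((t : ℤ) - r) * ((t : ℤ) - q) * ((s : ℤ) - r) * ((s : ℤ) - q)) :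
      bklRel n (ag n t s * ag n r q) (ag n r q * ag n t s)
  | band₁ (t s r : ℕ) (h₁ : 1 ≤ r) (h₂ : r < s) (h₃ : s < t) (h₄ : t ≤ n) :
      bklRel n (ag n t s * ag n s r) (ag n t r * ag n t s)
  | band₂ (t s r : ℕ) (h₁ : 1 ≤ r) (h₂ : r < s) (h₃ : s < t) (h₄ : t ≤ n) :
      bklRel n (ag n t r * ag n t s) (ag n s r * ag n t r)
  | inv_right (t s : ℕ) (h : 1 ≤ s ∧ s < t ∧ t ≤ n) :
      bklRel n (ag n t s * agi n t s) 1
  | inv_left (t s : ℕ) (h : 1 ≤ s ∧ s < t ∧ t ≤ n) :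
      bklRel n (agi n t s * ag n t s) 1
  | comm_ab (t s r q : ℕ) (h₁ : 1 ≤ s ∧ s < t ∧ t ≤ n) (h₂ : 1 ≤ q ∧ q < r ∧ r ≤ n)
      (h : 0 < ((t : ℤ) - r) * ((t : ℤ) - q) * ((s : ℤ) - r) * ((s : ℤ) - q)) :
      bklRel n (ag n t s * bg n r q) (bg n r q * ag n t s)
  | comm_ab' (t s : ℕ) (h : 1 ≤ s ∧ s < t ∧ t ≤ n) :
      bklRel n (ag n t s * bg n t s) (bg n t s * ag n t s)
  | mixed₁ (t s r : ℕ) (h₁ : 1 ≤ r) (h₂ : r < s) (h₃ : s < t) (h₄ : t ≤ n) :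
      bklRel n (ag n t s * bg n s r) (bg n t r * ag n t s)
  | mixed₂ (t s r : ℕ) (h₁ : 1 ≤ r) (h₂ : r < s) (h₃ : s < t) (h₄ : t ≤ n) :
      bklRel n (ag n s r * bg n t r) (bg n t s * ag n s r)
  | mixed₃ (t s r : ℕ) (h₁ : 1 ≤ r) (h₂ : r < s) (h₃ : s < t) (h₄ : t ≤ n) :
      bklRel n (ag n t r * bg n t s) (bg n s r * ag n t r)
  | comm_bb (t s r q : ℕ) (h₁ : 1 ≤ s ∧ s < t ∧ t ≤ n) (h₂ : 1 ≤ q ∧ q < r ∧ r ≤ n)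
      (h : 0 < ((t : ℤ) - r) * ((t : ℤ) - q) * ((s : ℤ) - r) * ((s : ℤ) - q)) :
      bklRel n (bg n t s * bg n r q) (bg n r q * bg n t s)

/-- The singular braid monoid in the Birman–Ko–Lee presentation. -/
def SingBKLMonoid (n : ℕ) : Type := PresentedMonoid (bklRel n)

instance (n : ℕ) : Monoid (SingBKLMonoid n) :=
  inferInstanceAs (Monoid (PresentedMonoid (bklRel n)))

namespace SBAux

variable {n : ℕ}

/-- soundness for presented monoids -/
theorem psound {α : Type*} {rels : FreeMonoid α → FreeMonoid α → Prop}
    {a b : FreeMonoid α} (h : rels a b) :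
    PresentedMonoid.mk rels a = PresentedMonoid.mk rels b :=
  Quotient.sound (ConGen.Rel.of _ _ h)

/-- σ_i as an element of SBₙ -/
def sσ (n i : ℕ) : SingBraidMonoid n := PresentedMonoid.mk (sbRel n) (sg n i)
def sσi (n i : ℕ) : SingBraidMonoid n := PresentedMonoid.mk (sbRel n) (sgi n i)
def sx (n i : ℕ) : SingBraidMonoid n := PresentedMonoid.mk (sbRel n) (xg n i)

lemma sσ_mul_sσi (i : ℕ) : sσ n i * sσi n i = 1 := by
  unfold sσ sσi
  erw [← map_mul (PresentedMonoid.mk (sbRel n))]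
  unfold sg sgi
  by_cases h : 1 ≤ i ∧ i ≤ n - 1
  · rw [dif_pos h, dif_pos h]
    exact psound (sbRel.inv_right _)
  · rw [dif_neg h, dif_neg h, one_mul, map_one]; rfl

lemma sσi_mul_sσ (i : ℕ) : sσi n i * sσ n i = 1 := by
  unfold sσ sσi
  erw [← map_mul (PresentedMonoid.mk (sbRel n))]
  unfold sg sgi
  by_cases h : 1 ≤ i ∧ i ≤ n - 1
  · rw [dif_pos h, dif_pos h]
    exact psound (sbRel.inv_left _)
  · rw [dif_neg h, dif_neg h, one_mul, map_one]; rfl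

/-- σ_i as a unit of SBₙ -/
def u (n i : ℕ) : (SingBraidMonoid n)ˣ :=
  ⟨sσ n i, sσi n i, sσ_mul_sσi i, sσi_mul_sσ i⟩

@[simp] lemma u_val (i : ℕ) : ((u n i : (SingBraidMonoid n)ˣ) : SingBraidMonoid n) = sσ n i := rfl
@[simp] lemma u_inv_val (i : ℕ) :
    (((u n i)⁻¹ : (SingBraidMonoid n)ˣ) : SingBraidMonoid n) = sσi n i := rfl

/-- base relation: far commutation of σ's -/
lemma comm_ss' {i j : ℕ} (h : i + 1 < j ∨ j + 1 < i) : Commute (sσ n i) (sσ n j) := by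
  unfold sσ Commute SemiconjBy
  erw [← map_mul (PresentedMonoid.mk (sbRel n)), ← map_mul (PresentedMonoid.mk (sbRel n))]
  unfold sg
  by_cases hi : 1 ≤ i ∧ i ≤ n - 1
  · by_cases hj : 1 ≤ j ∧ j ≤ n - 1
    · rw [dif_pos hi, dif_pos hj]
      exact psound (sbRel.comm_ss ⟨i - 1, by omega⟩ ⟨j - 1, by omega⟩ (by simp; omega))
    · rw [dif_neg hj, one_mul, mul_one]
  · rw [dif_neg hi, one_mul, mul_one]

lemma comm_xx' {i j : ℕ} (h : i + 1 < j ∨ j + 1 < i) : Commute (sx n i) (sx n j) := by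
  unfold sx Commute SemiconjBy
  erw [← map_mul (PresentedMonoid.mk (sbRel n)), ← map_mul (PresentedMonoid.mk (sbRel n))]
  unfold xg
  by_cases hi : 1 ≤ i ∧ i ≤ n - 1
  · by_cases hj : 1 ≤ j ∧ j ≤ n - 1
    · rw [dif_pos hi, dif_pos hj]
      exact psound (sbRel.comm_xx ⟨i - 1, by omega⟩ ⟨j - 1, by omega⟩ (by simp; omega))
    · rw [dif_neg hj, one_mul, mul_one]
  · rw [dif_neg hi, one_mul, mul_one]

lemma comm_xs' {i j : ℕ} (h : i + 1 ≠ j ∧ j + 1 ≠ i) : Commute (sx n i) (sσ n j) := by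
  unfold sx sσ Commute SemiconjBy
  erw [← map_mul (PresentedMonoid.mk (sbRel n)), ← map_mul (PresentedMonoid.mk (sbRel n))]
  unfold xg sg
  by_cases hi : 1 ≤ i ∧ i ≤ n - 1
  · by_cases hj : 1 ≤ j ∧ j ≤ n - 1
    · rw [dif_pos hi, dif_pos hj]
      exact psound (sbRel.comm_xs ⟨i - 1, by omega⟩ ⟨j - 1, by omega⟩ (by simp; omega))
    · rw [dif_neg hj, one_mul, mul_one]
  · rw [dif_neg hi, one_mul, mul_one]

lemma braid' {i : ℕ} (h1 : 1 ≤ i) (h2 : i + 1 ≤ n - 1) :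
    sσ n i * sσ n (i+1) * sσ n i = sσ n (i+1) * (sσ n i * sσ n (i+1)) := by
  unfold sσ
  show PresentedMonoid.mk (sbRel n) (sg n i * sg n (i+1) * sg n i) = PresentedMonoid.mk (sbRel n) (sg n (i+1) * (sg n i * sg n (i+1)))
  unfold sg
  rw [dif_pos ⟨h1, by omega⟩, dif_pos ⟨by omega, h2⟩]
  rw [← mul_assoc]
  exact psound (sbRel.braid ⟨i - 1, by omega⟩ ⟨i + 1 - 1, by omega⟩ (by simp; omega))

lemma braid_x1' {i : ℕ} (h1 : 1 ≤ i) (h2 : i + 1 ≤ n - 1) :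
    sσ n i * sσ n (i+1) * sx n i = sx n (i+1) * (sσ n i * sσ n (i+1)) := by
  unfold sσ sx
  show PresentedMonoid.mk (sbRel n) (sg n i * sg n (i+1) * xg n i) = PresentedMonoid.mk (sbRel n) (xg n (i+1) * (sg n i * sg n (i+1)))
  unfold sg xg
  rw [dif_pos ⟨h1, by omega⟩, dif_pos ⟨by omega, h2⟩, dif_pos ⟨h1, by omega⟩,
    dif_pos (⟨by omega, h2⟩ : 1 ≤ i + 1 ∧ i + 1 ≤ n - 1)]
  rw [← mul_assoc]
  exact psound (sbRel.braid_x₁ ⟨i - 1, by omega⟩ ⟨i + 1 - 1, by omega⟩ (by simp; omega))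

lemma braid_x2' {i : ℕ} (h1 : 1 ≤ i) (h2 : i + 1 ≤ n - 1) :
    sσ n (i+1) * sσ n i * sx n (i+1) = sx n i * (sσ n (i+1) * sσ n i) := by
  unfold sσ sx
  show PresentedMonoid.mk (sbRel n) (sg n (i+1) * sg n i * xg n (i+1)) = PresentedMonoid.mk (sbRel n) (xg n i * (sg n (i+1) * sg n i))
  unfold sg xg
  rw [dif_pos (⟨by omega, h2⟩ : 1 ≤ i + 1 ∧ i + 1 ≤ n - 1), dif_pos (⟨h1, by omega⟩ : 1 ≤ i ∧ i ≤ n - 1),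
    dif_pos (⟨by omega, h2⟩ : 1 ≤ i + 1 ∧ i + 1 ≤ n - 1), dif_pos (⟨h1, by omega⟩ : 1 ≤ i ∧ i ≤ n - 1)]
  rw [← mul_assoc]
  exact psound (sbRel.braid_x₂ ⟨i - 1, by omega⟩ ⟨i + 1 - 1, by omega⟩ (by simp; omega))

end SBAux
namespace SBAux

variable {n : ℕ}

/-- abstract payload: a family satisfying the interchange relations with σ's -/
structure Payload (n : ℕ) where
  y : ℕ → SingBraidMonoid n
  hY1 : ∀ i j, i + 1 ≠ j → j + 1 ≠ i → Commute (y i) (sσ n j)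
  hY2 : ∀ i, 1 ≤ i → i + 1 ≤ n - 1 →
    sσ n i * sσ n (i+1) * y i = y (i+1) * (sσ n i * sσ n (i+1))
  hY3 : ∀ i, 1 ≤ i → i + 1 ≤ n - 1 →
    sσ n (i+1) * sσ n i * y (i+1) = y i * (sσ n (i+1) * sσ n i)

def σP (n : ℕ) : Payload n where
  y := sσ n
  hY1 := fun i j h1 h2 => by
    rcases Nat.lt_trichotomy i j with h | h | h
    · exact comm_ss' (Or.inl (by omega))
    · subst h; rfl
    · exact comm_ss' (Or.inr (by omega))
  hY2 := fun i H1 H2 => braid' H1 H2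
  hY3 := fun i H1 H2 => by rw [mul_assoc, ← braid' H1 H2, mul_assoc]

def xP (n : ℕ) : Payload n where
  y := sx n
  hY1 := fun i j h1 h2 => comm_xs' ⟨h1, h2⟩
  hY2 := fun i H1 H2 => braid_x1' H1 H2
  hY3 := fun i H1 H2 => braid_x2' H1 H2

/-- cross-commutation of payload families -/
def Cross (P Q : Payload n) : Prop :=
  ∀ i j, i + 1 < j ∨ j + 1 < i → Commute (P.y i) (Q.y j)

lemma cross_σσ : Cross (σP n) (σP n) := fun _ _ h => comm_ss' h
lemma cross_xx : Cross (xP n) (xP n) := fun _ _ h => comm_xx' h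
lemma cross_xσ : Cross (xP n) (σP n) := fun _ _ h => comm_xs' (by omega)
lemma cross_σx : Cross (σP n) (xP n) := fun i j h => (comm_xs' (by omega)).symm

/-- conjugation by a unit -/
def cnj (g : (SingBraidMonoid n)ˣ) (m : SingBraidMonoid n) : SingBraidMonoid n :=
  (g : SingBraidMonoid n) * m * ((g⁻¹ : (SingBraidMonoid n)ˣ) : SingBraidMonoid n)

lemma cnj_mul (g h : (SingBraidMonoid n)ˣ) (m : SingBraidMonoid n) :
    cnj (g * h) m = cnj g (cnj h m) := by
  simp [cnj, mul_assoc]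

lemma cnj_eq_iff {g : (SingBraidMonoid n)ˣ} {a b : SingBraidMonoid n} :
    cnj g a = b ↔ (g : SingBraidMonoid n) * a = b * g := by
  constructor
  · intro h; rw [← h]; simp [cnj, mul_assoc]
  · intro h; simp [cnj, h, mul_assoc]

lemma cnj_of_commute {g : (SingBraidMonoid n)ˣ} {a : SingBraidMonoid n}
    (h : Commute (g : SingBraidMonoid n) a) : cnj g a = a :=
  cnj_eq_iff.mpr h

lemma cnj_inv_of_commute {g : (SingBraidMonoid n)ˣ} {a : SingBraidMonoid n}
    (h : Commute (g : SingBraidMonoid n) a) : cnj g⁻¹ a = a := by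
  have := (h.symm.units_inv_right).symm
  exact cnj_eq_iff.mpr this

lemma cnj_cnj_inv (g : (SingBraidMonoid n)ˣ) (m : SingBraidMonoid n) :
    cnj g (cnj g⁻¹ m) = m := by
  rw [← cnj_mul, mul_inv_cancel]; simp [cnj]

lemma cnj_inv_cnj (g : (SingBraidMonoid n)ˣ) (m : SingBraidMonoid n) :
    cnj g⁻¹ (cnj g m) = m := by
  rw [← cnj_mul, inv_mul_cancel]; simp [cnj]

lemma cnj_mul' (g : (SingBraidMonoid n)ˣ) (a b : SingBraidMonoid n) :
    cnj g a * cnj g b = cnj g (a * b) := by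
  simp [cnj, mul_assoc]

lemma commute_cnj {g : (SingBraidMonoid n)ˣ} {a b : SingBraidMonoid n}
    (h : Commute a b) : Commute (cnj g a) (cnj g b) := by
  unfold Commute SemiconjBy
  rw [cnj_mul', cnj_mul', h]

lemma commute_of_cnj {a : SingBraidMonoid n} {g : (SingBraidMonoid n)ˣ}
    (h : cnj g a = a) : Commute (g : SingBraidMonoid n) a := cnj_eq_iff.mp h

/-- the conjugator word σ_{t-1} ⋯ σ_{s+1} as a unit -/
def C (n t s : ℕ) : (SingBraidMonoid n)ˣ :=
  ((List.range (t - 1 - s)).map (fun j => u n (t - 1 - j))).prod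

def band (P : Payload n) (t s : ℕ) : SingBraidMonoid n :=
  cnj (C n t s) (P.y s)

def Ab (n t s : ℕ) : (SingBraidMonoid n)ˣ :=
  C n t s * u n s * (C n t s)⁻¹

lemma Ab_val (t s : ℕ) : ((Ab n t s : (SingBraidMonoid n)ˣ) : SingBraidMonoid n)
    = band (σP n) t s := by
  simp [Ab, band, cnj, σP, Units.val_mul, mul_assoc]

lemma C_base (s : ℕ) : C n (s+1) s = 1 := by
  simp [C, Nat.sub_self]

lemma C_succ {t s : ℕ} (h : s < t) : C n (t+1) s = u n t * C n t s := by
  have hk : t + 1 - 1 - s = (t - 1 - s) + 1 := by omega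
  rw [C, hk, List.range_succ_eq_map, List.map_cons, List.prod_cons, List.map_map]
  congr 1
  rw [C]
  apply congrArg List.prod
  apply List.map_congr_left
  intro j hj
  simp only [Function.comp_apply]
  congr 1
  omega

lemma band_base (P : Payload n) (s : ℕ) : band P (s+1) s = P.y s := by
  rw [band, C_base]
  simp [cnj]

lemma band_succ (P : Payload n) {t s : ℕ} (h : s < t) :
    band P (t+1) s = cnj (u n t) (band P t s) := by
  rw [band, C_succ h, cnj_mul, band]

lemma Ab_base (s : ℕ) : Ab n (s+1) s = u n s := by
  rw [Ab, C_base]; simp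

lemma Ab_succ {t s : ℕ} (h : s < t) : Ab n (t+1) s = u n t * Ab n t s * (u n t)⁻¹ := by
  rw [Ab, C_succ h, Ab]
  rw [mul_inv_rev]
  group

end SBAux
namespace SBAux

variable {n : ℕ}

lemma u_comm {i j : ℕ} (h : i + 1 < j ∨ j + 1 < i) : Commute (u n i) (u n j) := by
  apply Units.ext
  rw [Units.val_mul, Units.val_mul]
  exact comm_ss' h

lemma cnj_inv_eq_iff {g : (SingBraidMonoid n)ˣ} {a b : SingBraidMonoid n} :
    cnj g⁻¹ a = b ↔ a = cnj g b :=
  ⟨fun h => by rw [← h, cnj_cnj_inv], fun h => by rw [h, cnj_inv_cnj]⟩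

lemma cross_σ (Q : Payload n) : Cross (σP n) Q := by
  intro i j h
  exact (Q.hY1 j i (by omega) (by omega)).symm

lemma commute_cnj_u {a m : SingBraidMonoid n} {g : (SingBraidMonoid n)ˣ}
    (h1 : Commute a (g : SingBraidMonoid n)) (h2 : Commute a m) :
    Commute a (cnj g m) :=
  (h1.mul_right h2).mul_right h1.units_inv_right

/-- Key lemma: a single generator commutes with a band when its index is
strictly outside or strictly inside the band. -/
lemma key (P Q : Payload n) (hc : Cross P Q) :
    ∀ t s i, 1 ≤ s → t ≤ n → s < t →
      (i + 1 < s ∨ (s < i ∧ i + 1 < t) ∨ t < i) → Commute (P.y i) (band Q t s) := by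
  intro t
  induction t using Nat.strong_induction_on with
  | _ t IH =>
    intro s i hs htn hst hcond
    rcases eq_or_lt_of_le (Nat.succ_le_of_lt hst) with hbase | hstep
    · rw [← hbase, band_base]
      exact hc i s (by omega)
    · obtain ⟨t', rfl⟩ : ∃ t', t = t' + 1 := ⟨t - 1, by omega⟩
      have hst' : s < t' := by omega
      rw [band_succ Q hst']
      by_cases hhard : i + 1 = t' ∧ s < i
      · obtain rfl : t' = i + 1 := by omega
        rw [band_succ Q (show s < i by omega), ← cnj_mul]
        set g := u n (i + 1) * u n i with hg
        set m := band Q i s with hm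
        have hy : (g : SingBraidMonoid n) * P.y (i + 1) = P.y i * g := by
          rw [hg, Units.val_mul]
          exact P.hY3 i (by omega) (by omega)
        have h2 : cnj g (P.y (i + 1)) = P.y i := cnj_eq_iff.mpr hy
        have hcomm : Commute (P.y (i + 1)) m :=
          IH i (by omega) s (i + 1) hs (by omega) (by omega)
            (Or.inr (Or.inr (by omega)))
        show P.y i * cnj g m = cnj g m * P.y i
        have e1 : P.y i * cnj g m = cnj g (P.y (i + 1) * m) := by
          rw [← h2, cnj_mul']
        have e2 : cnj g m * P.y i = cnj g (m * P.y (i + 1)) := by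
          rw [← h2, cnj_mul']
        rw [e1, e2, hcomm]
      · apply commute_cnj_u
        · exact P.hY1 i t' (by omega) (by omega)
        · exact IH t' (by omega) s i hs (by omega) hst' (by omega)

/-- shifting the bottom of a band down by conjugation -/
lemma S3 (P : Payload n) : ∀ t s, 1 ≤ s → t ≤ n → s + 1 < t →
    cnj (u n s)⁻¹ (band P t (s + 1)) = band P t s := by
  intro t
  induction t using Nat.strong_induction_on with
  | _ t IH =>
    intro s hs htn hst
    rcases eq_or_lt_of_le (Nat.succ_le_of_lt hst) with hbase | hstep
    · obtain rfl : t = s + 2 := by omega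
      rw [show s + 2 = (s + 1) + 1 from rfl, band_base,
        band_succ P (Nat.lt_succ_self s), band_base]
      rw [cnj_inv_eq_iff, ← cnj_mul]
      refine (cnj_eq_iff.mpr ?_).symm
      rw [Units.val_mul]
      exact P.hY2 s hs (by omega)
    · obtain ⟨t', rfl⟩ : ∃ t', t = t' + 1 := ⟨t - 1, by omega⟩
      rw [band_succ P (show s + 1 < t' by omega), band_succ P (show s < t' by omega),
        ← cnj_mul]
      have hcu : (u n s)⁻¹ * u n t' = u n t' * (u n s)⁻¹ :=
        ((u_comm (Or.inl (by omega))).inv_left).eq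
      rw [hcu, cnj_mul, IH t' (by omega) s hs (by omega) (by omega)]

lemma Ab_shift {s r : ℕ} (h1 : 1 ≤ r) (h2 : r + 1 < s) (h3 : s ≤ n) :
    Ab n s r = (u n r)⁻¹ * Ab n s (r + 1) * u n r := by
  apply Units.ext
  rw [Ab_val]
  have hS := S3 (σP n) s r h1 h3 h2
  rw [← hS, ← Ab_val]
  simp [cnj, Units.val_mul, mul_assoc]

/-- a band commutes with itself-payload band (same indices) -/
lemma M0 (P : Payload n) : ∀ t s, 1 ≤ s → t ≤ n → s < t →
    Commute ((Ab n t s : (SingBraidMonoid n)ˣ) : SingBraidMonoid n) (band P t s) := by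
  intro t
  induction t using Nat.strong_induction_on with
  | _ t IH =>
    intro s hs htn hst
    rcases eq_or_lt_of_le (Nat.succ_le_of_lt hst) with hbase | hstep
    · rw [← hbase, band_base, Ab_base]
      exact (P.hY1 s s (by omega) (by omega)).symm
    · obtain ⟨t', rfl⟩ : ∃ t', t = t' + 1 := ⟨t - 1, by omega⟩
      have hst' : s < t' := by omega
      have hAv : ((Ab n (t' + 1) s : (SingBraidMonoid n)ˣ) : SingBraidMonoid n)
          = cnj (u n t') ((Ab n t' s : (SingBraidMonoid n)ˣ) : SingBraidMonoid n) := by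
        rw [Ab_succ hst']
        simp [cnj, Units.val_mul, mul_assoc]
      rw [hAv, band_succ P hst']
      exact commute_cnj (IH t' (by omega) s hs (by omega) hst')

lemma M1 (P : Payload n) : ∀ t s r, 1 ≤ r → r < s → s < t → t ≤ n →
    cnj (Ab n t s) (band P s r) = band P t r := by
  intro t
  induction t using Nat.strong_induction_on with
  | _ t IH =>
    intro s r h1 h2 h3 h4
    rcases eq_or_lt_of_le (Nat.succ_le_of_lt h3) with hbase | hstep
    · rw [← hbase, Ab_base]
      exact (band_succ P h2).symm
    · obtain ⟨t', rfl⟩ : ∃ t', t = t' + 1 := ⟨t - 1, by omega⟩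
      have hst' : s < t' := by omega
      rw [Ab_succ hst', cnj_mul, cnj_mul,
        cnj_inv_of_commute (key (σP n) P (cross_σ P) s r t' (by omega) (by omega) h2
          (Or.inr (Or.inr hst'))),
        IH t' (by omega) s r h1 h2 hst' (by omega)]
      exact (band_succ P (show r < t' by omega)).symm

lemma M2base (P : Payload n) : ∀ d s r, r + d + 1 = s → 1 ≤ r → s + 1 ≤ n →
    cnj (Ab n s r) (band P (s + 1) r) = P.y s := by
  intro d
  induction d with
  | zero =>
    intro s r hsr h1 h2
    obtain rfl : s = r + 1 := by omega
    rw [Ab_base, band_succ P (Nat.lt_succ_self r), band_base, ← cnj_mul]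
    refine cnj_eq_iff.mpr ?_
    rw [Units.val_mul]
    exact P.hY2 r h1 (by omega)
  | succ d IH =>
    intro s r hsr h1 h2
    rw [Ab_shift h1 (by omega) (by omega), cnj_mul, cnj_mul]
    have hband : cnj (u n r) (band P (s + 1) r) = band P (s + 1) (r + 1) := by
      rw [← S3 P (s + 1) r h1 (by omega) (by omega), cnj_cnj_inv]
    rw [hband, IH s (r + 1) (by omega) (by omega) h2]
    exact cnj_inv_of_commute ((P.hY1 s r (by omega) (by omega)).symm)

lemma M2 (P : Payload n) : ∀ t s r, 1 ≤ r → r < s → s < t → t ≤ n →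
    cnj (Ab n s r) (band P t r) = band P t s := by
  intro t
  induction t using Nat.strong_induction_on with
  | _ t IH =>
    intro s r h1 h2 h3 h4
    rcases eq_or_lt_of_le (Nat.succ_le_of_lt h3) with hbase | hstep
    · rw [← hbase, band_base]
      exact M2base P (s - r - 1) s r (by omega) h1 (by omega)
    · obtain ⟨t', rfl⟩ : ∃ t', t = t' + 1 := ⟨t - 1, by omega⟩
      have hst' : s < t' := by omega
      rw [band_succ P (show r < t' by omega), band_succ P hst', ← cnj_mul]
      have hcu : Ab n s r * u n t' = u n t' * Ab n s r := by
        apply Units.ext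
        rw [Units.val_mul, Units.val_mul, Ab_val]
        exact (key (σP n) (σP n) (cross_σ (σP n)) s r t' h1 (by omega) h2
          (Or.inr (Or.inr hst'))).symm.eq
      rw [hcu, cnj_mul, IH t' (by omega) s r h1 h2 hst' (by omega)]

lemma M3base (P : Payload n) : ∀ d s r, r + d + 1 = s → 1 ≤ r → s + 1 ≤ n →
    cnj (Ab n (s + 1) r) (P.y s) = band P s r := by
  intro d
  induction d with
  | zero =>
    intro s r hsr h1 h2
    obtain rfl : s = r + 1 := by omega
    rw [Ab_succ (Nat.lt_succ_self r), Ab_base, band_base, cnj_mul, cnj_mul,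
      cnj_inv_of_commute ((P.hY1 (r + 1) (r + 1) (by omega) (by omega)).symm),
      ← cnj_mul]
    refine cnj_eq_iff.mpr ?_
    rw [Units.val_mul]
    exact P.hY3 r h1 (by omega)
  | succ d IH =>
    intro s r hsr h1 h2
    rw [Ab_shift h1 (by omega) (by omega), cnj_mul, cnj_mul,
      cnj_of_commute (g := u n r) (a := P.y s) ((P.hY1 s r (by omega) (by omega)).symm),
      IH s (r + 1) (by omega) (by omega) h2]
    exact S3 P s r h1 (by omega) (by omega)

lemma M3 (P : Payload n) : ∀ t s r, 1 ≤ r → r < s → s < t → t ≤ n →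
    cnj (Ab n t r) (band P t s) = band P s r := by
  intro t
  induction t using Nat.strong_induction_on with
  | _ t IH =>
    intro s r h1 h2 h3 h4
    rcases eq_or_lt_of_le (Nat.succ_le_of_lt h3) with hbase | hstep
    · rw [← hbase, band_base]
      exact M3base P (s - r - 1) s r (by omega) h1 (by omega)
    · obtain ⟨t', rfl⟩ : ∃ t', t = t' + 1 := ⟨t - 1, by omega⟩
      have hst' : s < t' := by omega
      rw [Ab_succ (show r < t' by omega), band_succ P hst', cnj_mul, cnj_mul,
        cnj_inv_cnj, IH t' (by omega) s r h1 h2 hst' (by omega)]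
      exact cnj_of_commute (key (σP n) P (cross_σ P) s r t' h1 (by omega) h2
        (Or.inr (Or.inr hst')))

lemma commute_list_units {m : SingBraidMonoid n} {l : List (SingBraidMonoid n)ˣ}
    (h : ∀ v ∈ l, Commute m (v : SingBraidMonoid n)) :
    Commute m ((l.prod : (SingBraidMonoid n)ˣ) : SingBraidMonoid n) := by
  induction l with
  | nil => simp
  | cons v l ih =>
    rw [List.prod_cons, Units.val_mul]
    exact (h v List.mem_cons_self).mul_right
      (ih fun w hw => h w (List.mem_cons_of_mem _ hw))

lemma commute_band_right (P : Payload n) {m : SingBraidMonoid n} {t s : ℕ}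
    (hy : Commute m (P.y s)) (hσ : ∀ i, s + 1 ≤ i → i ≤ t - 1 → Commute m (sσ n i)) :
    Commute m (band P t s) := by
  have hC : Commute m ((C n t s : (SingBraidMonoid n)ˣ) : SingBraidMonoid n) := by
    apply commute_list_units
    intro v hv
    simp only [C, List.mem_map, List.mem_range] at hv
    obtain ⟨j, hj, rfl⟩ := hv
    exact hσ (t - 1 - j) (by omega) (by omega)
  exact (hC.mul_right hy).mul_right hC.units_inv_right

/-- bands with non-interleaved, endpoint-disjoint index pairs commute -/
lemma bandsCommute (P Q : Payload n) (hPQ : Cross P Q) (hQP : Cross Q P)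
    {t s r q : ℕ} (hs : 1 ≤ s) (hq : 1 ≤ q) (hst : s < t) (hqr : q < r)
    (htn : t ≤ n) (hrn : r ≤ n)
    (hD : r < s ∨ t < q ∨ (q < s ∧ t < r) ∨ (s < q ∧ r < t)) :
    Commute (band P t s) (band Q r q) := by
  rcases hD with h | h | ⟨ha, hb⟩ | ⟨ha, hb⟩
  · apply commute_band_right Q
    · exact (key Q P hQP t s q hs htn hst (Or.inl (by omega))).symm
    · intro i hi1 hi2
      exact (key (σP n) P (cross_σ P) t s i hs htn hst (Or.inl (by omega))).symm
  · refine (commute_band_right P ?_ ?_).symm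
    · exact (key P Q hPQ r q s hq hrn hqr (Or.inl (by omega))).symm
    · intro i hi1 hi2
      exact (key (σP n) Q (cross_σ Q) r q i hq hrn hqr (Or.inl (by omega))).symm
  · refine (commute_band_right P ?_ ?_).symm
    · exact (key P Q hPQ r q s hq hrn hqr (Or.inr (Or.inl ⟨ha, by omega⟩))).symm
    · intro i hi1 hi2
      exact (key (σP n) Q (cross_σ Q) r q i hq hrn hqr
        (Or.inr (Or.inl ⟨by omega, by omega⟩))).symm
  · apply commute_band_right Q
    · exact (key Q P hQP t s q hs htn hst (Or.inr (Or.inl ⟨ha, by omega⟩))).symm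
    · intro i hi1 hi2
      exact (key (σP n) P (cross_σ P) t s i hs htn hst
        (Or.inr (Or.inl ⟨by omega, by omega⟩))).symm

end SBAux
namespace SBAux

variable {n : ℕ}

lemma pos_cases {t s r q : ℕ} (hqr : q < r) (hst : s < t)
    (h : 0 < ((t : ℤ) - r) * ((t : ℤ) - q) * ((s : ℤ) - r) * ((s : ℤ) - q)) :
    r < s ∨ t < q ∨ (q < s ∧ t < r) ∨ (s < q ∧ r < t) := by
  by_contra hc
  push_neg at hc
  obtain ⟨c1, c2, c3, c4⟩ := hc
  rcases Nat.lt_trichotomy q s with h1 | h1 | h1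
  · rcases Nat.lt_trichotomy t r with h2 | h2 | h2
    · omega
    · rw [show ((t : ℤ) - r) = 0 by omega, zero_mul, zero_mul, zero_mul] at h
      exact lt_irrefl 0 h
    · rcases Nat.lt_trichotomy s r with h3 | h3 | h3
      · nlinarith [mul_pos (mul_pos (show (0:ℤ) < t - r by omega)
          (show (0:ℤ) < t - q by omega)) (show (0:ℤ) < s - q by omega),
          show ((s:ℤ) - r) < 0 by omega]
      · rw [show ((s : ℤ) - r) = 0 by omega] at h
        simp at h
      · omega
  · rw [show ((s : ℤ) - q) = 0 by omega, mul_zero] at h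
    exact lt_irrefl 0 h
  · rcases Nat.lt_trichotomy t r with h2 | h2 | h2
    · rcases Nat.lt_trichotomy q t with h3 | h3 | h3
      · nlinarith [mul_pos (mul_pos (mul_pos (show (0:ℤ) < r - t by omega)
          (show (0:ℤ) < t - q by omega)) (show (0:ℤ) < r - s by omega))
          (show (0:ℤ) < q - s by omega)]
      · rw [show ((t : ℤ) - q) = 0 by omega] at h
        simp at h
      · omega
    · rw [show ((t : ℤ) - r) = 0 by omega, zero_mul, zero_mul, zero_mul] at h
      exact lt_irrefl 0 h
    · omega

lemma pos_of_cases {t s r q : ℕ} (hqr : q < r) (hst : s < t) (hD : r < s ∨ t < q) :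
    0 < ((t : ℤ) - r) * ((t : ℤ) - q) * ((s : ℤ) - r) * ((s : ℤ) - q) := by
  rcases hD with h | h
  · exact mul_pos (mul_pos (mul_pos (show (0:ℤ) < t - r by omega)
      (show (0:ℤ) < t - q by omega)) (show (0:ℤ) < s - r by omega))
      (show (0:ℤ) < s - q by omega)
  · nlinarith [mul_pos (mul_pos (mul_pos (show (0:ℤ) < r - t by omega)
      (show (0:ℤ) < q - t by omega)) (show (0:ℤ) < r - s by omega))
      (show (0:ℤ) < q - s by omega)]

/-! BKL-monoid side elements -/

def mA (n t s : ℕ) : SingBKLMonoid n := PresentedMonoid.mk (bklRel n) (ag n t s)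
def mAi (n t s : ℕ) : SingBKLMonoid n := PresentedMonoid.mk (bklRel n) (agi n t s)
def mB (n t s : ℕ) : SingBKLMonoid n := PresentedMonoid.mk (bklRel n) (bg n t s)

lemma mA_mul_mAi (t s : ℕ) : mA n t s * mAi n t s = 1 := by
  unfold mA mAi
  erw [← map_mul (PresentedMonoid.mk (bklRel n))]
  by_cases h : 1 ≤ s ∧ s < t ∧ t ≤ n
  · have := psound (bklRel.inv_right t s h)
    exact this.trans (map_one _)
  · rw [ag, agi, dif_neg h, dif_neg h, one_mul, map_one]; rfl

lemma mAi_mul_mA (t s : ℕ) : mAi n t s * mA n t s = 1 := by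
  unfold mA mAi
  erw [← map_mul (PresentedMonoid.mk (bklRel n))]
  by_cases h : 1 ≤ s ∧ s < t ∧ t ≤ n
  · have := psound (bklRel.inv_left t s h)
    exact this.trans (map_one _)
  · rw [ag, agi, dif_neg h, dif_neg h, one_mul, map_one]; rfl

def V (n t s : ℕ) : (SingBKLMonoid n)ˣ :=
  ⟨mA n t s, mAi n t s, mA_mul_mAi t s, mAi_mul_mA t s⟩

/-! the homomorphism φ from the BKL presentation to the singular braid monoid -/

def fφ : BKLGen n → SingBraidMonoid n
  | .a p => ((Ab n p.1.1 p.1.2 : (SingBraidMonoid n)ˣ) : SingBraidMonoid n)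
  | .ainv p => (((Ab n p.1.1 p.1.2)⁻¹ : (SingBraidMonoid n)ˣ) : SingBraidMonoid n)
  | .b p => band (xP n) p.1.1 p.1.2

lemma liftf_ag {t s : ℕ} (h : 1 ≤ s ∧ s < t ∧ t ≤ n) :
    FreeMonoid.lift (fφ (n := n)) (ag n t s)
      = ((Ab n t s : (SingBraidMonoid n)ˣ) : SingBraidMonoid n) := by
  rw [ag, dif_pos h]
  simp [fφ]

lemma liftf_agi {t s : ℕ} (h : 1 ≤ s ∧ s < t ∧ t ≤ n) :
    FreeMonoid.lift (fφ (n := n)) (agi n t s)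
      = (((Ab n t s)⁻¹ : (SingBraidMonoid n)ˣ) : SingBraidMonoid n) := by
  rw [agi, dif_pos h]
  simp [fφ]

lemma liftf_bg {t s : ℕ} (h : 1 ≤ s ∧ s < t ∧ t ≤ n) :
    FreeMonoid.lift (fφ (n := n)) (bg n t s) = band (xP n) t s := by
  rw [bg, dif_pos h]
  simp [fφ]

lemma hφ : ∀ a b, bklRel n a b →
    FreeMonoid.lift (fφ (n := n)) a = FreeMonoid.lift (fφ (n := n)) b := by
  intro a b hr
  cases hr with
  | comm_aa t s r q h₁ h₂ h =>
    rw [map_mul, map_mul, liftf_ag h₁, liftf_ag h₂, Ab_val, Ab_val]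
    exact (bandsCommute (σP n) (σP n) (cross_σ _) (cross_σ _) h₁.1 h₂.1 h₁.2.1 h₂.2.1
      h₁.2.2 h₂.2.2 (pos_cases h₂.2.1 h₁.2.1 h)).eq
  | band₁ t s r h₁ h₂ h₃ h₄ =>
    rw [map_mul, map_mul, liftf_ag ⟨by omega, h₃, h₄⟩, liftf_ag ⟨h₁, h₂, by omega⟩,
      liftf_ag ⟨h₁, by omega, h₄⟩, Ab_val (t := s) (s := r), Ab_val (t := t) (s := r)]
    exact cnj_eq_iff.mp (M1 (σP n) t s r h₁ h₂ h₃ h₄)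
  | band₂ t s r h₁ h₂ h₃ h₄ =>
    rw [map_mul, map_mul, liftf_ag ⟨by omega, h₃, h₄⟩, liftf_ag ⟨h₁, h₂, by omega⟩,
      liftf_ag ⟨h₁, by omega, h₄⟩, Ab_val (t := t) (s := s), Ab_val (t := s) (s := r)]
    exact cnj_eq_iff.mp (M3 (σP n) t s r h₁ h₂ h₃ h₄)
  | inv_right t s h =>
    rw [map_mul, map_one, liftf_ag h, liftf_agi h, Units.mul_inv]
  | inv_left t s h =>
    rw [map_mul, map_one, liftf_ag h, liftf_agi h, Units.inv_mul]
  | comm_ab t s r q h₁ h₂ h =>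
    rw [map_mul, map_mul, liftf_ag h₁, liftf_bg h₂, Ab_val]
    exact (bandsCommute (σP n) (xP n) (cross_σ _) cross_xσ h₁.1 h₂.1 h₁.2.1 h₂.2.1
      h₁.2.2 h₂.2.2 (pos_cases h₂.2.1 h₁.2.1 h)).eq
  | comm_ab' t s h =>
    rw [map_mul, map_mul, liftf_ag h, liftf_bg h]
    exact (M0 (xP n) t s h.1 h.2.2 h.2.1).eq
  | mixed₁ t s r h₁ h₂ h₃ h₄ =>
    rw [map_mul, map_mul, liftf_ag ⟨by omega, h₃, h₄⟩, liftf_bg ⟨h₁, h₂, by omega⟩,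
      liftf_bg ⟨h₁, by omega, h₄⟩]
    exact cnj_eq_iff.mp (M1 (xP n) t s r h₁ h₂ h₃ h₄)
  | mixed₂ t s r h₁ h₂ h₃ h₄ =>
    rw [map_mul, map_mul, liftf_ag ⟨h₁, h₂, by omega⟩, liftf_bg ⟨h₁, by omega, h₄⟩,
      liftf_bg ⟨by omega, h₃, h₄⟩]
    exact cnj_eq_iff.mp (M2 (xP n) t s r h₁ h₂ h₃ h₄)
  | mixed₃ t s r h₁ h₂ h₃ h₄ =>
    rw [map_mul, map_mul, liftf_ag ⟨h₁, by omega, h₄⟩, liftf_bg ⟨by omega, h₃, h₄⟩,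
      liftf_bg ⟨h₁, h₂, by omega⟩]
    exact cnj_eq_iff.mp (M3 (xP n) t s r h₁ h₂ h₃ h₄)
  | comm_bb t s r q h₁ h₂ h =>
    rw [map_mul, map_mul, liftf_bg h₁, liftf_bg h₂]
    exact (bandsCommute (xP n) (xP n) cross_xx cross_xx h₁.1 h₂.1 h₁.2.1 h₂.2.1
      h₁.2.2 h₂.2.2 (pos_cases h₂.2.1 h₁.2.1 h)).eq

def φ (n : ℕ) : SingBKLMonoid n →* SingBraidMonoid n :=
  PresentedMonoid.lift fφ hφ

end SBAux
namespace SBAux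

variable {n : ℕ}

/-! derived relations in the BKL monoid -/

lemma eA_comm {t s r q : ℕ} (h₁ : 1 ≤ s ∧ s < t ∧ t ≤ n) (h₂ : 1 ≤ q ∧ q < r ∧ r ≤ n)
    (hD : r < s ∨ t < q) : mA n t s * mA n r q = mA n r q * mA n t s := by
  unfold mA
  erw [← map_mul (PresentedMonoid.mk (bklRel n)), ← map_mul (PresentedMonoid.mk (bklRel n))]
  exact psound (bklRel.comm_aa t s r q h₁ h₂ (pos_of_cases h₂.2.1 h₁.2.1 hD))

lemma eB_comm {t s r q : ℕ} (h₁ : 1 ≤ s ∧ s < t ∧ t ≤ n) (h₂ : 1 ≤ q ∧ q < r ∧ r ≤ n)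
    (hD : r < s ∨ t < q) : mB n t s * mB n r q = mB n r q * mB n t s := by
  unfold mB
  erw [← map_mul (PresentedMonoid.mk (bklRel n)), ← map_mul (PresentedMonoid.mk (bklRel n))]
  exact psound (bklRel.comm_bb t s r q h₁ h₂ (pos_of_cases h₂.2.1 h₁.2.1 hD))

lemma eAB_comm {t s r q : ℕ} (h₁ : 1 ≤ s ∧ s < t ∧ t ≤ n) (h₂ : 1 ≤ q ∧ q < r ∧ r ≤ n)
    (hD : r < s ∨ t < q) : mA n t s * mB n r q = mB n r q * mA n t s := by
  unfold mA mB
  erw [← map_mul (PresentedMonoid.mk (bklRel n)), ← map_mul (PresentedMonoid.mk (bklRel n))]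
  exact psound (bklRel.comm_ab t s r q h₁ h₂ (pos_of_cases h₂.2.1 h₁.2.1 hD))

lemma eAB' {t s : ℕ} (h : 1 ≤ s ∧ s < t ∧ t ≤ n) :
    mA n t s * mB n t s = mB n t s * mA n t s := by
  unfold mA mB
  erw [← map_mul (PresentedMonoid.mk (bklRel n)), ← map_mul (PresentedMonoid.mk (bklRel n))]
  exact psound (bklRel.comm_ab' t s h)

lemma eBand₁ {t s r : ℕ} (h₁ : 1 ≤ r) (h₂ : r < s) (h₃ : s < t) (h₄ : t ≤ n) :
    mA n t s * mA n s r = mA n t r * mA n t s := by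
  unfold mA
  erw [← map_mul (PresentedMonoid.mk (bklRel n)), ← map_mul (PresentedMonoid.mk (bklRel n))]
  exact psound (bklRel.band₁ t s r h₁ h₂ h₃ h₄)

lemma eBand₂ {t s r : ℕ} (h₁ : 1 ≤ r) (h₂ : r < s) (h₃ : s < t) (h₄ : t ≤ n) :
    mA n t r * mA n t s = mA n s r * mA n t r := by
  unfold mA
  erw [← map_mul (PresentedMonoid.mk (bklRel n)), ← map_mul (PresentedMonoid.mk (bklRel n))]
  exact psound (bklRel.band₂ t s r h₁ h₂ h₃ h₄)

lemma eMixed₁ {t s r : ℕ} (h₁ : 1 ≤ r) (h₂ : r < s) (h₃ : s < t) (h₄ : t ≤ n) :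
    mA n t s * mB n s r = mB n t r * mA n t s := by
  unfold mA mB
  erw [← map_mul (PresentedMonoid.mk (bklRel n)), ← map_mul (PresentedMonoid.mk (bklRel n))]
  exact psound (bklRel.mixed₁ t s r h₁ h₂ h₃ h₄)

lemma eMixed₂ {t s r : ℕ} (h₁ : 1 ≤ r) (h₂ : r < s) (h₃ : s < t) (h₄ : t ≤ n) :
    mA n s r * mB n t r = mB n t s * mA n s r := by
  unfold mA mB
  erw [← map_mul (PresentedMonoid.mk (bklRel n)), ← map_mul (PresentedMonoid.mk (bklRel n))]
  exact psound (bklRel.mixed₂ t s r h₁ h₂ h₃ h₄)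

lemma eMixed₃ {t s r : ℕ} (h₁ : 1 ≤ r) (h₂ : r < s) (h₃ : s < t) (h₄ : t ≤ n) :
    mA n t r * mB n t s = mB n s r * mA n t r := by
  unfold mA mB
  erw [← map_mul (PresentedMonoid.mk (bklRel n)), ← map_mul (PresentedMonoid.mk (bklRel n))]
  exact psound (bklRel.mixed₃ t s r h₁ h₂ h₃ h₄)

/-! the homomorphism ψ -/

def gψ : SBGen n → SingBKLMonoid n
  | .sig i => mA n (i.val + 2) (i.val + 1)
  | .sinv i => mAi n (i.val + 2) (i.val + 1)
  | .x i => mB n (i.val + 2) (i.val + 1)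

lemma hψ : ∀ a b, sbRel n a b →
    FreeMonoid.lift (gψ (n := n)) a = FreeMonoid.lift (gψ (n := n)) b := by
  intro a b hr
  cases hr with
  | comm_ss i j h =>
    simp only [map_mul, FreeMonoid.lift_eval_of, gψ]
    have hi := i.isLt
    have hj := j.isLt
    refine eA_comm ⟨by omega, by omega, by omega⟩ ⟨by omega, by omega, by omega⟩ ?_
    rcases h with h | h
    · exact Or.inr (by omega)
    · exact Or.inl (by omega)
  | comm_xx i j h =>
    simp only [map_mul, FreeMonoid.lift_eval_of, gψ]
    have hi := i.isLt
    have hj := j.isLt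
    refine eB_comm ⟨by omega, by omega, by omega⟩ ⟨by omega, by omega, by omega⟩ ?_
    rcases h with h | h
    · exact Or.inr (by omega)
    · exact Or.inl (by omega)
  | comm_xs i j h =>
    simp only [map_mul, FreeMonoid.lift_eval_of, gψ]
    have hi := i.isLt
    have hj := j.isLt
    by_cases hij : i.val = j.val
    · rw [hij]
      exact (eAB' ⟨by omega, by omega, by omega⟩).symm
    · refine (eAB_comm ⟨by omega, by omega, by omega⟩ ⟨by omega, by omega, by omega⟩ ?_).symm
      rcases Nat.lt_trichotomy i.val j.val with hlt | hlt | hlt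
      · exact Or.inl (by omega)
      · omega
      · exact Or.inr (by omega)
  | braid i j hj =>
    simp only [map_mul, FreeMonoid.lift_eval_of, gψ, hj]
    have hi := i.isLt
    have hjl := j.isLt
    rw [hj] at hjl
    set a := i.val
    have e₁ : mA n (a+3) (a+2) * mA n (a+2) (a+1) = mA n (a+3) (a+1) * mA n (a+3) (a+2) :=
      eBand₁ (by omega) (by omega) (by omega) (by omega)
    have e₂ : mA n (a+3) (a+1) * mA n (a+3) (a+2) = mA n (a+2) (a+1) * mA n (a+3) (a+1) :=
      eBand₂ (by omega) (by omega) (by omega) (by omega)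
    calc mA n (a+2) (a+1) * mA n (a+1+2) (a+1+1) * mA n (a+2) (a+1)
        = mA n (a+2) (a+1) * (mA n (a+3) (a+2) * mA n (a+2) (a+1)) := by
          rw [mul_assoc]
      _ = mA n (a+2) (a+1) * (mA n (a+3) (a+1) * mA n (a+3) (a+2)) := by rw [e₁]
      _ = (mA n (a+2) (a+1) * mA n (a+3) (a+1)) * mA n (a+3) (a+2) := by rw [mul_assoc]
      _ = (mA n (a+3) (a+1) * mA n (a+3) (a+2)) * mA n (a+3) (a+2) := by rw [← e₂]
      _ = (mA n (a+3) (a+2) * mA n (a+2) (a+1)) * mA n (a+3) (a+2) := by rw [e₁]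
      _ = mA n (a+1+2) (a+1+1) * mA n (a+2) (a+1) * mA n (a+1+2) (a+1+1) := by
          norm_num
  | braid_x₁ i j hj =>
    simp only [map_mul, FreeMonoid.lift_eval_of, gψ, hj]
    have hi := i.isLt
    have hjl := j.isLt
    rw [hj] at hjl
    set a := i.val
    have m₁ : mA n (a+3) (a+2) * mB n (a+2) (a+1) = mB n (a+3) (a+1) * mA n (a+3) (a+2) :=
      eMixed₁ (by omega) (by omega) (by omega) (by omega)
    have m₂ : mA n (a+2) (a+1) * mB n (a+3) (a+1) = mB n (a+3) (a+2) * mA n (a+2) (a+1) :=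
      eMixed₂ (by omega) (by omega) (by omega) (by omega)
    calc mA n (a+2) (a+1) * mA n (a+1+2) (a+1+1) * mB n (a+2) (a+1)
        = mA n (a+2) (a+1) * (mA n (a+3) (a+2) * mB n (a+2) (a+1)) := by rw [mul_assoc]
      _ = mA n (a+2) (a+1) * (mB n (a+3) (a+1) * mA n (a+3) (a+2)) := by rw [m₁]
      _ = (mA n (a+2) (a+1) * mB n (a+3) (a+1)) * mA n (a+3) (a+2) := by rw [mul_assoc]
      _ = (mB n (a+3) (a+2) * mA n (a+2) (a+1)) * mA n (a+3) (a+2) := by rw [m₂]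
      _ = mB n (a+1+2) (a+1+1) * mA n (a+2) (a+1) * mA n (a+1+2) (a+1+1) := by
          norm_num
  | braid_x₂ i j hj =>
    simp only [map_mul, FreeMonoid.lift_eval_of, gψ, hj]
    have hi := i.isLt
    have hjl := j.isLt
    rw [hj] at hjl
    set a := i.val
    have e₁ : mA n (a+3) (a+2) * mA n (a+2) (a+1) = mA n (a+3) (a+1) * mA n (a+3) (a+2) :=
      eBand₁ (by omega) (by omega) (by omega) (by omega)
    have m₃ : mA n (a+3) (a+1) * mB n (a+3) (a+2) = mB n (a+2) (a+1) * mA n (a+3) (a+1) :=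
      eMixed₃ (by omega) (by omega) (by omega) (by omega)
    have cY : mA n (a+3) (a+2) * mB n (a+3) (a+2) = mB n (a+3) (a+2) * mA n (a+3) (a+2) :=
      eAB' ⟨by omega, by omega, by omega⟩
    calc mA n (a+1+2) (a+1+1) * mA n (a+2) (a+1) * mB n (a+1+2) (a+1+1)
        = (mA n (a+3) (a+2) * mA n (a+2) (a+1)) * mB n (a+3) (a+2) := by norm_num
      _ = (mA n (a+3) (a+1) * mA n (a+3) (a+2)) * mB n (a+3) (a+2) := by rw [e₁]
      _ = mA n (a+3) (a+1) * (mA n (a+3) (a+2) * mB n (a+3) (a+2)) := by rw [mul_assoc]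
      _ = mA n (a+3) (a+1) * (mB n (a+3) (a+2) * mA n (a+3) (a+2)) := by rw [cY]
      _ = (mA n (a+3) (a+1) * mB n (a+3) (a+2)) * mA n (a+3) (a+2) := by rw [mul_assoc]
      _ = (mB n (a+2) (a+1) * mA n (a+3) (a+1)) * mA n (a+3) (a+2) := by rw [m₃]
      _ = mB n (a+2) (a+1) * (mA n (a+3) (a+1) * mA n (a+3) (a+2)) := by rw [mul_assoc]
      _ = mB n (a+2) (a+1) * (mA n (a+3) (a+2) * mA n (a+2) (a+1)) := by rw [e₁]
      _ = mB n (a+2) (a+1) * mA n (a+1+2) (a+1+1) * mA n (a+2) (a+1) := by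
          rw [mul_assoc]
  | inv_right i =>
    simp only [map_mul, map_one, FreeMonoid.lift_eval_of, gψ]
    exact mA_mul_mAi _ _
  | inv_left i =>
    simp only [map_mul, map_one, FreeMonoid.lift_eval_of, gψ]
    exact mAi_mul_mA _ _

def ψ (n : ℕ) : SingBraidMonoid n →* SingBKLMonoid n :=
  PresentedMonoid.lift gψ hψ

end SBAux
namespace SBAux

variable {n : ℕ}

lemma V_succ {t s : ℕ} (h1 : 1 ≤ s) (h2 : s < t) (h3 : t + 1 ≤ n) :
    V n (t+1) s = V n (t+1) t * V n t s * (V n (t+1) t)⁻¹ := by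
  apply Units.ext
  show mA n (t+1) s = mA n (t+1) t * mA n t s * mAi n (t+1) t
  rw [eBand₁ h1 h2 (Nat.lt_succ_self t) h3, mul_assoc, mA_mul_mAi, mul_one]

lemma sσ_eq_of {i : ℕ} (h1 : 1 ≤ i) (h2 : i ≤ n - 1) :
    sσ n i = PresentedMonoid.of (sbRel n) (SBGen.sig ⟨i - 1, by omega⟩) := by
  rw [sσ, sg, dif_pos ⟨h1, h2⟩]; rfl

lemma sσi_eq_of {i : ℕ} (h1 : 1 ≤ i) (h2 : i ≤ n - 1) :
    sσi n i = PresentedMonoid.of (sbRel n) (SBGen.sinv ⟨i - 1, by omega⟩) := by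
  rw [sσi, sgi, dif_pos ⟨h1, h2⟩]; rfl

lemma sx_eq_of {i : ℕ} (h1 : 1 ≤ i) (h2 : i ≤ n - 1) :
    sx n i = PresentedMonoid.of (sbRel n) (SBGen.x ⟨i - 1, by omega⟩) := by
  rw [sx, xg, dif_pos ⟨h1, h2⟩]; rfl

lemma ψ_sσ {i : ℕ} (h1 : 1 ≤ i) (h2 : i + 1 ≤ n) : ψ n (sσ n i) = mA n (i+1) i := by
  rw [sσ_eq_of h1 (by omega)]
  show mA n (i - 1 + 2) (i - 1 + 1) = mA n (i+1) i
  rw [show i - 1 + 2 = i + 1 by omega, show i - 1 + 1 = i by omega]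

lemma ψ_sσi {i : ℕ} (h1 : 1 ≤ i) (h2 : i + 1 ≤ n) : ψ n (sσi n i) = mAi n (i+1) i := by
  rw [sσi_eq_of h1 (by omega)]
  show mAi n (i - 1 + 2) (i - 1 + 1) = mAi n (i+1) i
  rw [show i - 1 + 2 = i + 1 by omega, show i - 1 + 1 = i by omega]

lemma ψ_sx {i : ℕ} (h1 : 1 ≤ i) (h2 : i + 1 ≤ n) : ψ n (sx n i) = mB n (i+1) i := by
  rw [sx_eq_of h1 (by omega)]
  show mB n (i - 1 + 2) (i - 1 + 1) = mB n (i+1) i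
  rw [show i - 1 + 2 = i + 1 by omega, show i - 1 + 1 = i by omega]

lemma ψ_Ab : ∀ t s, 1 ≤ s → s < t → t ≤ n →
    ψ n ((Ab n t s : (SingBraidMonoid n)ˣ) : SingBraidMonoid n) = mA n t s ∧
    ψ n (((Ab n t s)⁻¹ : (SingBraidMonoid n)ˣ) : SingBraidMonoid n) = mAi n t s ∧
    ψ n (band (xP n) t s) = mB n t s := by
  intro t
  induction t using Nat.strong_induction_on with
  | _ t IH =>
    intro s h1 h2 h3
    rcases eq_or_lt_of_le (Nat.succ_le_of_lt h2) with hbase | hstep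
    · refine ⟨?_, ?_, ?_⟩
      · rw [← hbase, Ab_base, u_val, ψ_sσ h1 (by omega)]
      · rw [← hbase, Ab_base, u_inv_val, ψ_sσi h1 (by omega)]
      · rw [← hbase, band_base]
        exact ψ_sx h1 (by omega)
    · obtain ⟨t', rfl⟩ : ∃ t', t = t' + 1 := ⟨t - 1, by omega⟩
      have hst' : s < t' := by omega
      obtain ⟨ihA, ihAi, ihB⟩ := IH t' (by omega) s h1 hst' (by omega)
      refine ⟨?_, ?_, ?_⟩
      · have hv : ((Ab n (t'+1) s : (SingBraidMonoid n)ˣ) : SingBraidMonoid n)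
            = sσ n t' * ((Ab n t' s : (SingBraidMonoid n)ˣ) : SingBraidMonoid n) * sσi n t' := by
          rw [Ab_succ hst']
          simp [Units.val_mul, mul_assoc]
        rw [hv, map_mul, map_mul, ψ_sσ (by omega) h3, ψ_sσi (by omega) h3, ihA,
          eBand₁ h1 hst' (Nat.lt_succ_self t') h3, mul_assoc, mA_mul_mAi, mul_one]
      · have hv : (((Ab n (t'+1) s)⁻¹ : (SingBraidMonoid n)ˣ) : SingBraidMonoid n)
            = sσ n t' * (((Ab n t' s)⁻¹ : (SingBraidMonoid n)ˣ) : SingBraidMonoid n)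
              * sσi n t' := by
          rw [Ab_succ hst']
          have : (u n t' * Ab n t' s * (u n t')⁻¹)⁻¹
              = u n t' * (Ab n t' s)⁻¹ * (u n t')⁻¹ := by group
          rw [this]
          simp [Units.val_mul, mul_assoc]
        rw [hv, map_mul, map_mul, ψ_sσ (by omega) h3, ψ_sσi (by omega) h3, ihAi]
        have hVi : (V n (t'+1) s)⁻¹ = V n (t'+1) t' * (V n t' s)⁻¹ * (V n (t'+1) t')⁻¹ := by
          rw [V_succ h1 hst' h3]; group
        have := congrArg (Units.val) hVi
        simp only [Units.val_mul] at this
        exact this.symm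
      · rw [band_succ (xP n) hst']
        show ψ n (sσ n t' * band (xP n) t' s * sσi n t') = mB n (t'+1) s
        rw [map_mul, map_mul, ψ_sσ (by omega) h3, ψ_sσi (by omega) h3, ihB,
          eMixed₁ h1 hst' (Nat.lt_succ_self t') h3, mul_assoc, mA_mul_mAi, mul_one]

lemma mA_eq_of {t s : ℕ} (h : 1 ≤ s ∧ s < t ∧ t ≤ n) :
    mA n t s = PresentedMonoid.of (bklRel n) (BKLGen.a ⟨(t, s), h⟩) := by
  rw [mA, ag, dif_pos h]; rfl

lemma mAi_eq_of {t s : ℕ} (h : 1 ≤ s ∧ s < t ∧ t ≤ n) :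
    mAi n t s = PresentedMonoid.of (bklRel n) (BKLGen.ainv ⟨(t, s), h⟩) := by
  rw [mAi, agi, dif_pos h]; rfl

lemma mB_eq_of {t s : ℕ} (h : 1 ≤ s ∧ s < t ∧ t ≤ n) :
    mB n t s = PresentedMonoid.of (bklRel n) (BKLGen.b ⟨(t, s), h⟩) := by
  rw [mB, bg, dif_pos h]; rfl

lemma comp1 : (ψ n).comp (φ n) = MonoidHom.id (SingBKLMonoid n) := by
  apply PresentedMonoid.ext
  intro x
  show ψ n (φ n (PresentedMonoid.of (bklRel n) x)) = PresentedMonoid.of (bklRel n) x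
  cases x with
  | a p =>
    obtain ⟨⟨t, s⟩, hp⟩ := p
    show ψ n ((Ab n t s : (SingBraidMonoid n)ˣ) : SingBraidMonoid n) = _
    rw [(ψ_Ab t s hp.1 hp.2.1 hp.2.2).1, mA_eq_of hp]
  | ainv p =>
    obtain ⟨⟨t, s⟩, hp⟩ := p
    show ψ n (((Ab n t s)⁻¹ : (SingBraidMonoid n)ˣ) : SingBraidMonoid n) = _
    rw [(ψ_Ab t s hp.1 hp.2.1 hp.2.2).2.1, mAi_eq_of hp]
  | b p =>
    obtain ⟨⟨t, s⟩, hp⟩ := p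
    show ψ n (band (xP n) t s) = _
    rw [(ψ_Ab t s hp.1 hp.2.1 hp.2.2).2.2, mB_eq_of hp]

lemma comp2 : (φ n).comp (ψ n) = MonoidHom.id (SingBraidMonoid n) := by
  apply PresentedMonoid.ext
  intro x
  show φ n (ψ n (PresentedMonoid.of (sbRel n) x)) = PresentedMonoid.of (sbRel n) x
  cases x with
  | sig i =>
    have hi := i.isLt
    show φ n (mA n (i.val + 2) (i.val + 1)) = _
    rw [mA_eq_of ⟨by omega, by omega, by omega⟩]
    show ((Ab n (i.val + 1 + 1) (i.val + 1) : (SingBraidMonoid n)ˣ) : SingBraidMonoid n) = _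
    rw [Ab_base, u_val, sσ_eq_of (by omega) (by omega)]
    rfl
  | sinv i =>
    have hi := i.isLt
    show φ n (mAi n (i.val + 2) (i.val + 1)) = _
    rw [mAi_eq_of ⟨by omega, by omega, by omega⟩]
    show (((Ab n (i.val + 1 + 1) (i.val + 1))⁻¹ : (SingBraidMonoid n)ˣ) : SingBraidMonoid n) = _
    rw [Ab_base, u_inv_val, sσi_eq_of (by omega) (by omega)]
    rfl
  | x i =>
    have hi := i.isLt
    show φ n (mB n (i.val + 2) (i.val + 1)) = _
    rw [mB_eq_of ⟨by omega, by omega, by omega⟩]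
    show band (xP n) (i.val + 1 + 1) (i.val + 1) = _
    rw [band_base]
    show sx n (i.val + 1) = _
    rw [sx_eq_of (by omega) (by omega)]
    rfl

def eIso (n : ℕ) : SingBKLMonoid n ≃* SingBraidMonoid n where
  toFun := φ n
  invFun := ψ n
  left_inv := fun x => by
    have := DFunLike.congr_fun (comp1 (n := n)) x
    simpa using this
  right_inv := fun x => by
    have := DFunLike.congr_fun (comp2 (n := n)) x
    simpa using this
  map_mul' := map_mul (φ n)

/-! relating `bklWord` to the units used above -/

lemma mkL : ∀ t s : ℕ, s < t →
    PresentedMonoid.mk (sbRel n) (((List.range (t - 1 - s)).map (fun j => sg n (t - 1 - j))).prod)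
      = ((C n t s : (SingBraidMonoid n)ˣ) : SingBraidMonoid n) := by
  intro t
  induction t using Nat.strong_induction_on with
  | _ t IH =>
    intro s hst
    rcases eq_or_lt_of_le (Nat.succ_le_of_lt hst) with hbase | hstep
    · rw [← hbase]
      simp [C_base, Nat.sub_self]; rfl
    · obtain ⟨t', rfl⟩ : ∃ t', t = t' + 1 := ⟨t - 1, by omega⟩
      have hst' : s < t' := by omega
      have hlist : (List.range ((t' - 1 - s) + 1)).map (fun j => sg n (t' + 1 - 1 - j))
          = sg n t' :: (List.range (t' - 1 - s)).map (fun j => sg n (t' - 1 - j)) := by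
        rw [List.range_succ_eq_map, List.map_cons, List.map_map]
        congr 1
        apply List.map_congr_left
        intro j hj
        simp only [Function.comp_apply]
        congr 1
        omega
      rw [show t' + 1 - 1 - s = (t' - 1 - s) + 1 by omega, hlist, List.prod_cons,
        map_mul (PresentedMonoid.mk (sbRel n)), IH t' (by omega) s hst', C_succ hst',
        Units.val_mul]
      rfl

lemma mkR : ∀ t s : ℕ, s < t →
    PresentedMonoid.mk (sbRel n) (((List.range (t - 1 - s)).map (fun j => sgi n (s + 1 + j))).prod)
      = (((C n t s)⁻¹ : (SingBraidMonoid n)ˣ) : SingBraidMonoid n) := by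
  intro t
  induction t using Nat.strong_induction_on with
  | _ t IH =>
    intro s hst
    rcases eq_or_lt_of_le (Nat.succ_le_of_lt hst) with hbase | hstep
    · rw [← hbase]
      simp [C_base, Nat.sub_self]; rfl
    · obtain ⟨t', rfl⟩ : ∃ t', t = t' + 1 := ⟨t - 1, by omega⟩
      have hst' : s < t' := by omega
      have hlist : (List.range ((t' - 1 - s) + 1)).map (fun j => sgi n (s + 1 + j))
          = (List.range (t' - 1 - s)).map (fun j => sgi n (s + 1 + j)) ++ [sgi n t'] := by
        rw [List.range_succ, List.map_append, List.map_singleton,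
          show s + 1 + (t' - 1 - s) = t' by omega]
      rw [show t' + 1 - 1 - s = (t' - 1 - s) + 1 by omega, hlist, List.prod_append,
        List.prod_singleton, map_mul (PresentedMonoid.mk (sbRel n)), IH t' (by omega) s hst',
        C_succ hst', mul_inv_rev, Units.val_mul]
      rfl

lemma mk_bklWord {t s : ℕ} (hst : s < t) (g : FreeMonoid (SBGen n)) :
    PresentedMonoid.mk (sbRel n) (bklWord n t s g)
      = cnj (C n t s) (PresentedMonoid.mk (sbRel n) g) := by
  unfold bklWord
  rw [map_mul (PresentedMonoid.mk (sbRel n)), map_mul (PresentedMonoid.mk (sbRel n)),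
    mkL t s hst, mkR t s hst]
  rfl

lemma mk_bkl_sg {t s : ℕ} (hst : s < t) :
    PresentedMonoid.mk (sbRel n) (bklWord n t s (sg n s))
      = ((Ab n t s : (SingBraidMonoid n)ˣ) : SingBraidMonoid n) := by
  rw [mk_bklWord hst, Ab_val]
  rfl

lemma mk_bkl_sgi {t s : ℕ} (hst : s < t) :
    PresentedMonoid.mk (sbRel n) (bklWord n t s (sgi n s))
      = (((Ab n t s)⁻¹ : (SingBraidMonoid n)ˣ) : SingBraidMonoid n) := by
  rw [mk_bklWord hst]
  have h : (Ab n t s)⁻¹ = C n t s * (u n s)⁻¹ * (C n t s)⁻¹ := by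
    rw [Ab]; group
  rw [h]
  show cnj (C n t s) (sσi n s) = _
  simp [cnj, Units.val_mul, mul_assoc]

lemma mk_bkl_xg {t s : ℕ} (hst : s < t) :
    PresentedMonoid.mk (sbRel n) (bklWord n t s (xg n s)) = band (xP n) t s := by
  rw [mk_bklWord hst]
  rfl

end SBAux
theorem singular_braid_BKL_presentation (n : ℕ) (hn : 2 ≤ n) :
    ∃ e : SingBKLMonoid n ≃* SingBraidMonoid n,
      ∀ (t s : ℕ) (h : 1 ≤ s ∧ s < t ∧ t ≤ n),
        e (PresentedMonoid.mk (bklRel n) (ag n t s)) =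
          PresentedMonoid.mk (sbRel n) (bklWord n t s (sg n s)) ∧
        e (PresentedMonoid.mk (bklRel n) (agi n t s)) =
          PresentedMonoid.mk (sbRel n) (bklWord n t s (sgi n s)) ∧
        e (PresentedMonoid.mk (bklRel n) (bg n t s)) =
          PresentedMonoid.mk (sbRel n) (bklWord n t s (xg n s)) := by
  refine ⟨SBAux.eIso n, ?_⟩
  intro t s h
  refine ⟨?_, ?_, ?_⟩
  · show SBAux.φ n (SBAux.mA n t s) = _
    rw [SBAux.mA_eq_of h, SBAux.mk_bkl_sg h.2.1]
    rfl
  · show SBAux.φ n (SBAux.mAi n t s) = _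
    rw [SBAux.mAi_eq_of h, SBAux.mk_bkl_sgi h.2.1]
    rfl
  · show SBAux.φ n (SBAux.mB n t s) = _
    rw [SBAux.mB_eq_of h, SBAux.mk_bkl_xg h.2.1]
    rfl
end
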